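/- arXiv:2505.00535 — 4 statements merged into one kernel-verified Lean document; each statement's English description precedes it below -/
import Mathlib

section
/- For every integer k ≥ 2, the mobile general position number of the Cartesian product of two stars K_{1,k} satisfies mob(K_{1,k} □ K_{1,k}) = k + 1. -/
open SimpleGraph

/-- `S` is a general position set of `G`: for all `u, v ∈ S`, every shortest `u,v`-path
contains no vertex of `S` other than `u` and `v`. -/
def IsGPSet {V : Type*} (G : SimpleGraph V) (S : Set V) : Prop :=
  ∀ u ∈ S, ∀ v ∈ S, ∀ p : G.Walk u v, p.IsPath → p.length = G.dist u v →
    ∀ w ∈ p.support, w ∈ S → w = u ∨ w = v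

/-- A legal move from the configuration `S` to the configuration `T`: a robot at `u ∈ S`
moves to an adjacent unoccupied vertex `v ∉ S` so that the resulting configuration
`(S \ {u}) ∪ {v}` is again a general position set. -/
def LegalMove {V : Type*} (G : SimpleGraph V) (S T : Set V) : Prop :=
  IsGPSet G S ∧ ∃ u ∈ S, ∃ v, v ∉ S ∧ G.Adj u v ∧
    T = insert v (S \ {u}) ∧ IsGPSet G T

/-- `S` is a mobile general position set: there is a finite sequence of configurations
`S = S_0, S_1, …, S_k`, each obtained from the previous one by a legal move, whose union
is the whole vertex set. -/
def IsMobileGPSet {V : Type*} (G : SimpleGraph V) (S : Set V) : Prop :=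
  IsGPSet G S ∧ ∃ (k : ℕ) (f : ℕ → Set V), f 0 = S ∧
    (∀ i < k, LegalMove G (f i) (f (i + 1))) ∧
    (⋃ i ∈ Set.Iic k, f i) = Set.univ

/-- The mobile general position number of `G`: the maximum cardinality of a mobile
general position set. -/
noncomputable def mob {V : Type*} (G : SimpleGraph V) : ℕ :=
  sSup {n | ∃ S : Set V, IsMobileGPSet G S ∧ S.ncard = n}

/-- The star `K_{1,k}`: centre `0` adjacent to the `k` leaves, and no other edges. -/
def starGraph (k : ℕ) : SimpleGraph (Fin (k + 1)) :=
  SimpleGraph.fromRel (fun x _ => x = 0)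


namespace MobAux


variable {k : ℕ}

lemma star_adj {x y : Fin (k+1)} : (_root_.starGraph k).Adj x y ↔ x ≠ y ∧ (x = 0 ∨ y = 0) := by
  simp [_root_.starGraph, SimpleGraph.fromRel_adj]

/-- star distance -/
def ds (x y : Fin (k+1)) : ℕ := if x = y then 0 else if x = 0 ∨ y = 0 then 1 else 2

lemma ds_self (x : Fin (k+1)) : ds x x = 0 := by simp [ds]

lemma ds_le_two (x y : Fin (k+1)) : ds x y ≤ 2 := by unfold ds; split_ifs <;> omega

lemma one_le_ds {x y : Fin (k+1)} (h : x ≠ y) : 1 ≤ ds x y := by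
  unfold ds; split_ifs <;> omega

lemma ds_eq_zero {x y : Fin (k+1)} (h : ds x y = 0) : x = y := by
  by_contra hne; have := one_le_ds hne; omega

lemma ds_triangle (x y z : Fin (k+1)) : ds x z ≤ ds x y + ds y z := by
  rcases eq_or_ne x z with rfl | hxz
  · simp [ds_self]
  rcases eq_or_ne y x with rfl | hyx
  · simp [ds_self]
  rcases eq_or_ne y z with rfl | hyz
  · simp [ds_self]
  have := ds_le_two x z
  have := one_le_ds (Ne.symm hyx)
  have := one_le_ds hyz
  omega

lemma ds_adj {x y : Fin (k+1)} (h : (_root_.starGraph k).Adj x y) : ds x y = 1 := by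
  rw [star_adj] at h
  unfold ds
  rw [if_neg h.1, if_pos h.2]

/-- existence of a star walk of length `ds` -/
lemma star_walk (x y : Fin (k+1)) : ∃ w : (_root_.starGraph k).Walk x y, w.length = ds x y := by
  rcases eq_or_ne x y with rfl | hxy
  · exact ⟨.nil, by simp [ds_self]⟩
  rcases eq_or_ne x 0 with rfl | hx
  · exact ⟨.cons (star_adj.2 ⟨hxy, Or.inl rfl⟩) .nil, by simp [ds, hxy]⟩
  rcases eq_or_ne y 0 with rfl | hy
  · exact ⟨.cons (star_adj.2 ⟨hxy, Or.inr rfl⟩) .nil, by simp [ds, hxy]⟩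
  · refine ⟨.cons (star_adj.2 ⟨hx, Or.inr rfl⟩) (.cons (star_adj.2 ⟨Ne.symm hy, Or.inl rfl⟩) .nil), ?_⟩
    simp [ds, hxy, hx, hy]

/-- product distance formula -/
def dd (u v : Fin (k+1) × Fin (k+1)) : ℕ := ds u.1 v.1 + ds u.2 v.2

lemma boxWalk (u v : Fin (k+1) × Fin (k+1)) :
    ∃ w : (_root_.starGraph k □ _root_.starGraph k).Walk u v, w.length = dd u v := by
  obtain ⟨w1, h1⟩ := star_walk u.1 v.1
  obtain ⟨w2, h2⟩ := star_walk u.2 v.2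
  refine ⟨((w1.boxProdLeft _ u.2).copy (by simp) rfl).append
    ((w2.boxProdRight _ v.1).copy rfl (by simp)), ?_⟩
  rw [SimpleGraph.Walk.length_append, SimpleGraph.Walk.length_copy, SimpleGraph.Walk.length_copy,
    dd, ← h1, ← h2]
  exact congrArg₂ (· + ·) (SimpleGraph.Walk.length_map _ _) (SimpleGraph.Walk.length_map _ _)

lemma dd_le_walk {u v : Fin (k+1) × Fin (k+1)}
    (p : (_root_.starGraph k □ _root_.starGraph k).Walk u v) : dd u v ≤ p.length := by
  induction p with
  | nil => simp [dd, ds_self]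
  | cons h q ih =>
    rename_i a b c
    have hab : dd a b = 1 := by
      rcases boxProd_adj.1 h with ⟨h1, h2⟩ | ⟨h1, h2⟩
      · simp [dd, ds_adj h1, h2, ds_self]
      · simp [dd, ds_adj h1, h2, ds_self]
    have tri : dd a c ≤ dd a b + dd b c := by
      unfold dd
      have := ds_triangle a.1 b.1 c.1
      have := ds_triangle a.2 b.2 c.2
      omega
    simp only [SimpleGraph.Walk.length_cons]
    omega

lemma dist_eq_dd (u v : Fin (k+1) × Fin (k+1)) :
    (_root_.starGraph k □ _root_.starGraph k).dist u v = dd u v := by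
  obtain ⟨w, hw⟩ := boxWalk u v
  refine le_antisymm (hw ▸ SimpleGraph.dist_le w) ?_
  obtain ⟨p, hp⟩ := (SimpleGraph.Reachable.exists_walk_length_eq_dist ⟨w⟩)
  calc dd u v ≤ p.length := dd_le_walk p
    _ = _ := hp


variable {V : Type*} {G : SimpleGraph V}

/-- generic criterion, one direction -/
lemma isGPSet_of_metric {S : Set V}
    (h : ∀ u ∈ S, ∀ v ∈ S, ∀ w ∈ S, G.dist u w + G.dist w v = G.dist u v → w = u ∨ w = v) :
    IsGPSet G S := by
  classical
  intro u hu v hv p hp hlen w hw hwS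
  refine h u hu v hv w hwS ?_
  have h1 : G.dist u w ≤ (p.takeUntil w hw).length := SimpleGraph.dist_le _
  have h2 : G.dist w v ≤ (p.dropUntil w hw).length := SimpleGraph.dist_le _
  have h3 : (p.takeUntil w hw).length + (p.dropUntil w hw).length = p.length := by
    rw [← SimpleGraph.Walk.length_append, p.take_spec hw]
  have h4 : G.dist u v ≤ G.dist u w + G.dist w v := by
    obtain ⟨p1, hp1⟩ := SimpleGraph.Reachable.exists_walk_length_eq_dist ⟨p.takeUntil w hw⟩
    obtain ⟨p2, hp2⟩ := SimpleGraph.Reachable.exists_walk_length_eq_dist ⟨p.dropUntil w hw⟩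
    calc G.dist u v ≤ (p1.append p2).length := SimpleGraph.dist_le _
      _ = _ := by rw [SimpleGraph.Walk.length_append, hp1, hp2]
  omega

/-- generic converse: in a GP set, metric betweenness forces equality -/
lemma metric_of_isGPSet {S : Set V} (hS : IsGPSet G S) {u v w : V}
    (hu : u ∈ S) (hv : v ∈ S) (hw : w ∈ S)
    (hru : G.Reachable u w) (hrv : G.Reachable w v)
    (hd : G.dist u w + G.dist w v = G.dist u v) : w = u ∨ w = v := by
  obtain ⟨p1, hp1⟩ := hru.exists_walk_length_eq_dist
  obtain ⟨p2, hp2⟩ := hrv.exists_walk_length_eq_dist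
  have hlen : (p1.append p2).length = G.dist u v := by
    rw [SimpleGraph.Walk.length_append, hp1, hp2, hd]
  have hpath : (p1.append p2).IsPath := SimpleGraph.Walk.isPath_of_length_eq_dist _ hlen
  exact hS u hu v hv (p1.append p2) hpath hlen w
    (by rw [SimpleGraph.Walk.mem_support_append_iff]; exact Or.inl p1.end_mem_support) hw


variable {k : ℕ}

def Btw (x y z : Fin (k+1)) : Prop := y = x ∨ y = z ∨ (y = 0 ∧ x ≠ 0 ∧ z ≠ 0 ∧ x ≠ z)

lemma btw_iff (x y z : Fin (k+1)) : ds x y + ds y z = ds x z ↔ Btw x y z := by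
  constructor
  · intro h
    by_cases hyx : y = x
    · exact Or.inl hyx
    by_cases hyz : y = z
    · exact Or.inr (Or.inl hyz)
    have h1 : 1 ≤ ds x y := one_le_ds fun e => hyx e.symm
    have h2 : 1 ≤ ds y z := one_le_ds hyz
    have h3 : ds x z ≤ 2 := ds_le_two x z
    have h4 : ds x z = 2 := by omega
    have h5 : x ≠ z ∧ ¬(x = 0 ∨ z = 0) := by
      by_contra hc
      unfold ds at h4
      split_ifs at h4 <;> tauto
    have hx0 : x ≠ 0 := fun e => h5.2 (Or.inl e)
    have hz0 : z ≠ 0 := fun e => h5.2 (Or.inr e)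
    have hxy1 : ds x y = 1 := by omega
    have hy0 : y = 0 := by
      rcases eq_or_ne y 0 with h | h
      · exact h
      exfalso
      unfold ds at hxy1
      rw [if_neg (fun e => hyx e.symm), if_neg (by tauto)] at hxy1
      omega
    exact Or.inr (Or.inr ⟨hy0, hx0, hz0, h5.1⟩)
  · rintro (rfl | rfl | ⟨rfl, hx, hz, hxz⟩)
    · simp [ds_self]
    · simp [ds_self]
    · have e1 : ds x 0 = 1 := by unfold ds; rw [if_neg hx, if_pos (Or.inr rfl)]
      have e2 : ds 0 z = 1 := by unfold ds; rw [if_neg (Ne.symm hz), if_pos (Or.inl rfl)]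
      have e3 : ds x z = 2 := by
        unfold ds; rw [if_neg hxz, if_neg (by tauto)]
      omega

lemma dd_btw {u w v : Fin (k+1) × Fin (k+1)} :
    (ds u.1 w.1 + ds u.2 w.2) + (ds w.1 v.1 + ds w.2 v.2) = ds u.1 v.1 + ds u.2 v.2 ↔
      Btw u.1 w.1 v.1 ∧ Btw u.2 w.2 v.2 := by
  have t1 := ds_triangle u.1 w.1 v.1
  have t2 := ds_triangle u.2 w.2 v.2
  rw [← btw_iff, ← btw_iff]
  omega


lemma dd_btw' {u w v : Fin (k+1) × Fin (k+1)} :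
    dd u w + dd w v = dd u v ↔ Btw u.1 w.1 v.1 ∧ Btw u.2 w.2 v.2 := by
  unfold dd; exact dd_btw

lemma gp_iff {S : Set (Fin (k+1) × Fin (k+1))} :
    IsGPSet (_root_.starGraph k □ _root_.starGraph k) S ↔
      ∀ u ∈ S, ∀ v ∈ S, ∀ w ∈ S, Btw u.1 w.1 v.1 → Btw u.2 w.2 v.2 → w = u ∨ w = v := by
  constructor
  · intro hS u hu v hv w hw hb1 hb2
    refine metric_of_isGPSet hS hu hv hw ⟨(boxWalk u w).choose⟩ ⟨(boxWalk w v).choose⟩ ?_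
    rw [dist_eq_dd, dist_eq_dd, dist_eq_dd]
    exact dd_btw'.2 ⟨hb1, hb2⟩
  · intro h
    apply isGPSet_of_metric
    intro u hu v hv w hw hd
    rw [dist_eq_dd, dist_eq_dd, dist_eq_dd] at hd
    obtain ⟨hb1, hb2⟩ := dd_btw'.1 hd
    exact h u hu v hv w hw hb1 hb2

def rowA (A : Set (Fin (k+1))) : Set (Fin (k+1) × Fin (k+1)) := {p | p.1 = 0 ∧ p.2 ∈ A}
def colI (I : Set (Fin (k+1))) : Set (Fin (k+1) × Fin (k+1)) := {p | p.2 = 0 ∧ p.1 ∈ I}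

lemma gp_H (A I : Set (Fin (k+1))) (R : Set (Fin (k+1) × Fin (k+1))) (i₀ m₀ : Fin (k+1))
    (hA : (0:Fin (k+1)) ∉ A) (hI : (0:Fin (k+1)) ∉ I) (hR : R ⊆ {(i₀, m₀)})
    (hi0 : i₀ ≠ 0) (hm0 : m₀ ≠ 0) (hiI : i₀ ∉ I) (hmA : m₀ ∉ A) :
    IsGPSet (_root_.starGraph k □ _root_.starGraph k) (rowA A ∪ colI I ∪ R) := by
  rw [gp_iff]
  intro u hu v hv w hw hb1 hb2
  rcases hw with (⟨hw1, hw2⟩ | ⟨hw1, hw2⟩) | hwR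
  · -- w ∈ rowA A
    have hw20 : w.2 ≠ 0 := fun e => hA (e ▸ hw2)
    rcases hb2 with he | he | ⟨he, _⟩
    · left
      rcases hu with (⟨hu1, hu2⟩ | ⟨hu1, hu2⟩) | huR
      · exact Prod.ext (hw1.trans hu1.symm) he
      · exact absurd (he.trans hu1) hw20
      · exfalso; apply hmA
        have h' : u.2 = m₀ := by rw [Set.eq_of_mem_singleton (hR huR)]
        rw [← h', ← he]; exact hw2
    · right
      rcases hv with (⟨hv1, hv2⟩ | ⟨hv1, hv2⟩) | hvR
      · exact Prod.ext (hw1.trans hv1.symm) he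
      · exact absurd (he.trans hv1) hw20
      · exfalso; apply hmA
        have h' : v.2 = m₀ := by rw [Set.eq_of_mem_singleton (hR hvR)]
        rw [← h', ← he]; exact hw2
    · exact absurd he hw20
  · -- w ∈ colI I
    have hw10 : w.1 ≠ 0 := fun e => hI (e ▸ hw2)
    rcases hb1 with he | he | ⟨he, _⟩
    · left
      rcases hu with (⟨hu1, hu2⟩ | ⟨hu1, hu2⟩) | huR
      · exact absurd (he.trans hu1) hw10
      · exact Prod.ext he (hw1.trans hu1.symm)
      · exfalso; apply hiI
        have h' : u.1 = i₀ := by rw [Set.eq_of_mem_singleton (hR huR)]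
        rw [← h', ← he]; exact hw2
    · right
      rcases hv with (⟨hv1, hv2⟩ | ⟨hv1, hv2⟩) | hvR
      · exact absurd (he.trans hv1) hw10
      · exact Prod.ext he (hw1.trans hv1.symm)
      · exfalso; apply hiI
        have h' : v.1 = i₀ := by rw [Set.eq_of_mem_singleton (hR hvR)]
        rw [← h', ← he]; exact hw2
    · exact absurd he hw10
  · -- w is the robot
    have hww : w = (i₀, m₀) := Set.eq_of_mem_singleton (hR hwR)
    have hwa : w.1 = i₀ := by rw [hww]
    rcases hb1 with he | he | ⟨he, _⟩
    · left
      rcases hu with (⟨hu1, hu2⟩ | ⟨hu1, hu2⟩) | huR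
      · exact absurd ((hwa.symm.trans he).trans hu1) hi0
      · exfalso; apply hiI; rw [hwa.symm.trans he]; exact hu2
      · exact hww.trans (Set.eq_of_mem_singleton (hR huR)).symm
    · right
      rcases hv with (⟨hv1, hv2⟩ | ⟨hv1, hv2⟩) | hvR
      · exact absurd ((hwa.symm.trans he).trans hv1) hi0
      · exfalso; apply hiI; rw [hwa.symm.trans he]; exact hv2
      · exact hww.trans (Set.eq_of_mem_singleton (hR hvR)).symm
    · exact absurd (hwa.symm.trans he) hi0

lemma gp_K (b : Fin (k+1)) (M I : Set (Fin (k+1)))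
    (hb0 : b ≠ 0) (hb1 : b ≠ 1) (hM : (0:Fin (k+1)) ∉ M) (hI : (0:Fin (k+1)) ∉ I)
    (hMI : ∀ i, i ∈ M → i ∉ I) :
    IsGPSet (_root_.starGraph k □ _root_.starGraph k)
      ({((0 : Fin (k+1)), b)} ∪ {p : Fin (k+1) × Fin (k+1) | p.2 = 1 ∧ p.1 ∈ M} ∪ colI I) := by
  rw [gp_iff]
  intro u hu v hv w hw hbt1 hbt2
  rcases hw with (hw | ⟨hw1, hw2⟩) | ⟨hw1, hw2⟩
  · -- w = (0, b)
    rw [Set.mem_singleton_iff] at hw; subst hw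
    rcases hbt2 with he | he | ⟨he, _⟩
    · left
      rcases hu with (hu | ⟨hu1, hu2⟩) | ⟨hu1, hu2⟩
      · rw [Set.mem_singleton_iff] at hu; exact hu.symm
      · exact absurd (he.trans hu1) hb1
      · exact absurd (he.trans hu1) hb0
    · right
      rcases hv with (hv | ⟨hv1, hv2⟩) | ⟨hv1, hv2⟩
      · rw [Set.mem_singleton_iff] at hv; exact hv.symm
      · exact absurd (he.trans hv1) hb1
      · exact absurd (he.trans hv1) hb0
    · exact absurd he hb0
  · -- w = (i, 1), i ∈ M
    have hw10 : w.1 ≠ 0 := fun e => hM (e ▸ hw2)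
    rcases hbt1 with he | he | ⟨he, _⟩
    · left
      rcases hu with (hu | ⟨hu1, hu2⟩) | ⟨hu1, hu2⟩
      · rw [Set.mem_singleton_iff] at hu; rw [hu] at he; exact absurd he.symm (fun e => hw10 (by simpa using e.symm))
      · exact Prod.ext he (hw1.trans hu1.symm)
      · exact absurd (he ▸ hu2) (hMI _ hw2)
    · right
      rcases hv with (hv | ⟨hv1, hv2⟩) | ⟨hv1, hv2⟩
      · rw [Set.mem_singleton_iff] at hv; rw [hv] at he; exact absurd he.symm (fun e => hw10 (by simpa using e.symm))
      · exact Prod.ext he (hw1.trans hv1.symm)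
      · exact absurd (he ▸ hv2) (hMI _ hw2)
    · exact absurd he hw10
  · -- w = (i, 0), i ∈ I
    have hw10 : w.1 ≠ 0 := fun e => hI (e ▸ hw2)
    rcases hbt1 with he | he | ⟨he, _⟩
    · left
      rcases hu with (hu | ⟨hu1, hu2⟩) | ⟨hu1, hu2⟩
      · rw [Set.mem_singleton_iff] at hu; rw [hu] at he; exact absurd he.symm (fun e => hw10 (by simpa using e.symm))
      · exact absurd hw2 (hMI _ (he ▸ hu2))
      · exact Prod.ext he (hw1.trans hu1.symm)
    · right
      rcases hv with (hv | ⟨hv1, hv2⟩) | ⟨hv1, hv2⟩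
      · rw [Set.mem_singleton_iff] at hv; rw [hv] at he; exact absurd he.symm (fun e => hw10 (by simpa using e.symm))
      · exact absurd hw2 (hMI _ (he ▸ hv2))
      · exact Prod.ext he (hw1.trans hv1.symm)
    · exact absurd he hw10

lemma gp_C1 (h10 : (1 : Fin (k+1)) ≠ 0) :
    IsGPSet (_root_.starGraph k □ _root_.starGraph k)
      ({((0 : Fin (k+1)), (0 : Fin (k+1)))} ∪
        {p : Fin (k+1) × Fin (k+1) | p.2 = 1 ∧ p.1 ≠ 0}) := by
  rw [gp_iff]
  intro u hu v hv w hw hbt1 hbt2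
  rcases hw with hw | ⟨hw1, hw2⟩
  · rw [Set.mem_singleton_iff] at hw; subst hw
    rcases hbt2 with he | he | ⟨_, hu2, hv2, huv⟩
    · left
      rcases hu with hu | ⟨hu1, hu2⟩
      · rw [Set.mem_singleton_iff] at hu; exact hu.symm
      · exact absurd (he.trans hu1) h10.symm
    · right
      rcases hv with hv | ⟨hv1, hv2⟩
      · rw [Set.mem_singleton_iff] at hv; exact hv.symm
      · exact absurd (he.trans hv1) h10.symm
    · exfalso
      rcases hu with hu | ⟨hu1, _⟩
      · rw [Set.mem_singleton_iff] at hu; rw [hu] at hu2; exact hu2 rfl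
      rcases hv with hv | ⟨hv1, _⟩
      · rw [Set.mem_singleton_iff] at hv; rw [hv] at hv2; exact hv2 rfl
      · exact huv (hu1.trans hv1.symm)
  · -- w = (i,1)
    rcases hbt1 with he | he | ⟨he, _⟩
    · left
      rcases hu with hu | ⟨hu1, hu2⟩
      · rw [Set.mem_singleton_iff] at hu; rw [hu] at he; exact absurd he.symm (fun e => hw2 (by simpa using e.symm))
      · exact Prod.ext he (hw1.trans hu1.symm)
    · right
      rcases hv with hv | ⟨hv1, hv2⟩
      · rw [Set.mem_singleton_iff] at hv; rw [hv] at he; exact absurd he.symm (fun e => hw2 (by simpa using e.symm))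
      · exact Prod.ext he (hw1.trans hv1.symm)
    · exact absurd he hw2

lemma ncard_ne_zero_set : ({x : Fin (k+1) | x ≠ 0}).ncard = k := by
  classical
  have h1 : ({x : Fin (k+1) | x ≠ 0}) = ({0}ᶜ : Set (Fin (k+1))) := by
    ext x; simp
  rw [h1]
  have h2 := Set.ncard_add_ncard_compl ({0} : Set (Fin (k+1)))
  rw [Set.ncard_singleton, Nat.card_eq_fintype_card] at h2
  simp at h2
  omega

lemma ncard_row_set (i : Fin (k+1)) :
    ({p : Fin (k+1) × Fin (k+1) | p.1 = i ∧ p.2 ≠ 0}).ncard = k := by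
  have h1 : {p : Fin (k+1) × Fin (k+1) | p.1 = i ∧ p.2 ≠ 0} =
      (fun j => (i, j)) '' {x : Fin (k+1) | x ≠ 0} := by
    ext ⟨a, b⟩
    simp only [Set.mem_setOf_eq, Set.mem_image]
    constructor
    · rintro ⟨rfl, hb⟩; exact ⟨b, hb, rfl⟩
    · rintro ⟨x, hx, he⟩; cases he; exact ⟨rfl, hx⟩
  rw [h1, Set.ncard_image_of_injective _ (fun a b h => by simpa using h), ncard_ne_zero_set]

lemma ncard_col_set (j : Fin (k+1)) :
    ({p : Fin (k+1) × Fin (k+1) | p.2 = j ∧ p.1 ≠ 0}).ncard = k := by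
  have h1 : {p : Fin (k+1) × Fin (k+1) | p.2 = j ∧ p.1 ≠ 0} =
      (fun i => (i, j)) '' {x : Fin (k+1) | x ≠ 0} := by
    ext ⟨a, b⟩
    simp only [Set.mem_setOf_eq, Set.mem_image]
    constructor
    · rintro ⟨h, hb⟩; exact ⟨a, hb, by rw [h]⟩
    · rintro ⟨x, hx, he⟩; cases he; exact ⟨rfl, hx⟩
  rw [h1, Set.ncard_image_of_injective _ (fun a b h => by simpa using h), ncard_ne_zero_set]

lemma card_le_of_gp_zero (hk : 2 ≤ k) {T : Set (Fin (k+1) × Fin (k+1))}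
    (hT : IsGPSet (_root_.starGraph k □ _root_.starGraph k) T)
    (hz : ((0 : Fin (k+1)), (0 : Fin (k+1))) ∈ T) : T.ncard ≤ k + 1 := by
  classical
  set z : Fin (k+1) × Fin (k+1) := ((0 : Fin (k+1)), (0 : Fin (k+1))) with hzdef
  have crit := gp_iff.1 hT
  -- no two non-centre robots may have the centre metrically between them
  have key : ∀ u ∈ T, ∀ v ∈ T, u ≠ z → v ≠ z →
      (u.1 = v.1 ∧ u.1 ≠ 0) ∨ (u.2 = v.2 ∧ u.2 ≠ 0) := by
    intro u hu v hv huz hvz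
    by_contra hc
    push_neg at hc
    have hb1 : Btw u.1 z.1 v.1 := by
      show Btw u.1 0 v.1
      rcases eq_or_ne u.1 0 with h | h
      · exact Or.inl h.symm
      rcases eq_or_ne v.1 0 with h' | h'
      · exact Or.inr (Or.inl h'.symm)
      refine Or.inr (Or.inr ⟨rfl, h, h', ?_⟩)
      intro e; exact h (hc.1 e)
    have hb2 : Btw u.2 z.2 v.2 := by
      show Btw u.2 0 v.2
      rcases eq_or_ne u.2 0 with h | h
      · exact Or.inl h.symm
      rcases eq_or_ne v.2 0 with h' | h'
      · exact Or.inr (Or.inl h'.symm)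
      refine Or.inr (Or.inr ⟨rfl, h, h', ?_⟩)
      intro e; exact h (hc.2 e)
    rcases crit u hu v hv z hz hb1 hb2 with h | h
    · exact huz h.symm
    · exact hvz h.symm
  have hfin : (Set.univ : Set (Fin (k+1) × Fin (k+1))).Finite := Set.finite_univ
  by_cases hA : ∃ a ∈ T, a ≠ z ∧ a.1 = 0
  · -- some robot (0, j), j ≠ 0
    obtain ⟨a, haT, haz, ha1⟩ := hA
    have ha2 : a.2 ≠ 0 := by
      intro e; exact haz (Prod.ext ha1 e)
    -- every other robot lies in column a.2 with nonzero row
    have hcol : ∀ b ∈ T, b ≠ z → b ≠ a → b.2 = a.2 ∧ b.1 ≠ 0 := by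
      intro b hbT hbz hba
      rcases key a haT b hbT haz hbz with ⟨h1, h2⟩ | ⟨h1, h2⟩
      · exact absurd ha1 (h1 ▸ h2 : a.1 ≠ 0).elim
      · constructor
        · exact h1.symm
        · intro e; exact hba (Prod.ext (e.trans ha1.symm) h1.symm)
    -- at most one such b
    have huniq : ∀ b ∈ T, ∀ c ∈ T, b ≠ z → b ≠ a → c ≠ z → c ≠ a → b = c := by
      intro b hbT c hcT hbz hba hcz hca
      by_contra hbc
      obtain ⟨hb2, hb1⟩ := hcol b hbT hbz hba
      obtain ⟨hc2, hc1⟩ := hcol c hcT hcz hca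
      have hb1c1 : b.1 ≠ c.1 := by
        intro e; exact hbc (Prod.ext e (hb2.trans hc2.symm))
      have hbt1 : Btw b.1 a.1 c.1 := Or.inr (Or.inr ⟨ha1, hb1, hc1, hb1c1⟩)
      have hbt2 : Btw b.2 a.2 c.2 := Or.inl hb2.symm
      rcases crit b hbT c hcT a haT hbt1 hbt2 with h | h
      · exact hb1 (h ▸ ha1)
      · exact hc1 (h ▸ ha1)
    by_cases hB : ∃ b ∈ T, b ≠ z ∧ b ≠ a
    · obtain ⟨b, hbT, hbz, hba⟩ := hB
      have hsub : T ⊆ {z, a, b} := by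
        intro x hx
        rcases eq_or_ne x z with rfl | hxz
        · exact Set.mem_insert _ _
        rcases eq_or_ne x a with rfl | hxa
        · exact Set.mem_insert_of_mem _ (Set.mem_insert _ _)
        · right; right
          exact huniq x hx b hbT hxz hxa hbz hba
      calc T.ncard ≤ ({z, a, b} : Set _).ncard :=
            Set.ncard_le_ncard hsub (Set.toFinite _)
        _ ≤ 3 := by
            calc ({z, a, b} : Set _).ncard ≤ ({a, b} : Set _).ncard + 1 :=
                Set.ncard_insert_le _ _
              _ ≤ (({b} : Set _).ncard + 1) + 1 := by
                  have := Set.ncard_insert_le a ({b} : Set _)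
                  omega
              _ ≤ 3 := by rw [Set.ncard_singleton]
        _ ≤ k + 1 := by omega
    · push_neg at hB
      have hsub : T ⊆ {z, a} := by
        intro x hx
        rcases eq_or_ne x z with rfl | hxz
        · exact Set.mem_insert _ _
        · right; exact hB x hx hxz
      calc T.ncard ≤ ({z, a} : Set _).ncard := Set.ncard_le_ncard hsub (Set.toFinite _)
        _ ≤ 2 := by
            have := Set.ncard_insert_le z ({a} : Set _)
            rw [Set.ncard_singleton] at this; omega
        _ ≤ k + 1 := by omega
  · by_cases hB : ∃ a ∈ T, a ≠ z ∧ a.2 = 0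
    · -- some robot (i, 0), i ≠ 0 : symmetric case
      obtain ⟨a, haT, haz, ha2⟩ := hB
      have ha1 : a.1 ≠ 0 := by
        intro e; exact haz (Prod.ext e ha2)
      have hrow : ∀ b ∈ T, b ≠ z → b ≠ a → b.1 = a.1 ∧ b.2 ≠ 0 := by
        intro b hbT hbz hba
        rcases key a haT b hbT haz hbz with ⟨h1, h2⟩ | ⟨h1, h2⟩
        · constructor
          · exact h1.symm
          · intro e; exact hba (Prod.ext h1.symm (e.trans ha2.symm))
        · exact absurd ha2 (h1 ▸ h2 : a.2 ≠ 0).elim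
      have huniq : ∀ b ∈ T, ∀ c ∈ T, b ≠ z → b ≠ a → c ≠ z → c ≠ a → b = c := by
        intro b hbT c hcT hbz hba hcz hca
        by_contra hbc
        obtain ⟨hb1, hb2⟩ := hrow b hbT hbz hba
        obtain ⟨hc1, hc2⟩ := hrow c hcT hcz hca
        have hb2c2 : b.2 ≠ c.2 := by
          intro e; exact hbc (Prod.ext (hb1.trans hc1.symm) e)
        have hbt1 : Btw b.1 a.1 c.1 := Or.inl hb1.symm
        have hbt2 : Btw b.2 a.2 c.2 := Or.inr (Or.inr ⟨ha2, hb2, hc2, hb2c2⟩)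
        rcases crit b hbT c hcT a haT hbt1 hbt2 with h | h
        · exact hb2 (h ▸ ha2)
        · exact hc2 (h ▸ ha2)
      by_cases hC : ∃ b ∈ T, b ≠ z ∧ b ≠ a
      · obtain ⟨b, hbT, hbz, hba⟩ := hC
        have hsub : T ⊆ {z, a, b} := by
          intro x hx
          rcases eq_or_ne x z with rfl | hxz
          · exact Set.mem_insert _ _
          rcases eq_or_ne x a with rfl | hxa
          · exact Set.mem_insert_of_mem _ (Set.mem_insert _ _)
          · right; right
            exact huniq x hx b hbT hxz hxa hbz hba
        calc T.ncard ≤ ({z, a, b} : Set _).ncard :=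
              Set.ncard_le_ncard hsub (Set.toFinite _)
          _ ≤ 3 := by
              calc ({z, a, b} : Set _).ncard ≤ ({a, b} : Set _).ncard + 1 :=
                  Set.ncard_insert_le _ _
                _ ≤ (({b} : Set _).ncard + 1) + 1 := by
                    have := Set.ncard_insert_le a ({b} : Set _)
                    omega
                _ ≤ 3 := by rw [Set.ncard_singleton]
          _ ≤ k + 1 := by omega
      · push_neg at hC
        have hsub : T ⊆ {z, a} := by
          intro x hx
          rcases eq_or_ne x z with rfl | hxz
          · exact Set.mem_insert _ _
          · right; exact hC x hx hxz
        calc T.ncard ≤ ({z, a} : Set _).ncard := Set.ncard_le_ncard hsub (Set.toFinite _)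
          _ ≤ 2 := by
              have := Set.ncard_insert_le z ({a} : Set _)
              rw [Set.ncard_singleton] at this; omega
          _ ≤ k + 1 := by omega
    · -- all non-centre robots are inner
      push_neg at hA
      push_neg at hB
      have hinner : ∀ b ∈ T, b ≠ z → b.1 ≠ 0 ∧ b.2 ≠ 0 :=
        fun b hb hbz => ⟨hA b hb hbz, hB b hb hbz⟩
      by_cases hrow : ∃ u ∈ T, ∃ v ∈ T, u ≠ z ∧ v ≠ z ∧ u ≠ v ∧ u.1 = v.1
      · obtain ⟨u, huT, v, hvT, huz, hvz, huv, he⟩ := hrow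
        have hall : ∀ b ∈ T, b ≠ z → b.1 = u.1 := by
          intro b hbT hbz
          by_contra hb1
          have h1 := key b hbT u huT hbz huz
          have h2 := key b hbT v hvT hbz hvz
          rcases h1 with ⟨e1, _⟩ | ⟨e1, _⟩
          · exact hb1 e1
          rcases h2 with ⟨e2, _⟩ | ⟨e2, _⟩
          · exact hb1 (e2.trans he.symm)
          · exact huv (Prod.ext he (e1.symm.trans e2))
        have hsub : T ⊆ insert z {p : Fin (k+1) × Fin (k+1) | p.1 = u.1 ∧ p.2 ≠ 0} := by
          intro x hx
          rcases eq_or_ne x z with rfl | hxz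
          · exact Set.mem_insert _ _
          · exact Set.mem_insert_of_mem _ ⟨hall x hx hxz, (hinner x hx hxz).2⟩
        calc T.ncard ≤ _ := Set.ncard_le_ncard hsub (Set.toFinite _)
          _ ≤ {p : Fin (k+1) × Fin (k+1) | p.1 = u.1 ∧ p.2 ≠ 0}.ncard + 1 :=
              Set.ncard_insert_le _ _
          _ = k + 1 := by rw [ncard_row_set]
      · push_neg at hrow
        by_cases hcol : ∃ u ∈ T, ∃ v ∈ T, u ≠ z ∧ v ≠ z ∧ u ≠ v
        · obtain ⟨u, huT, v, hvT, huz, hvz, huv⟩ := hcol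
          have he : u.2 = v.2 := by
            rcases key u huT v hvT huz hvz with ⟨e, _⟩ | ⟨e, _⟩
            · exact absurd e (hrow u huT v hvT huz hvz huv)
            · exact e
          have hall : ∀ b ∈ T, b ≠ z → b.2 = u.2 := by
            intro b hbT hbz
            rcases eq_or_ne b u with rfl | hbu
            · rfl
            rcases key b hbT u huT hbz huz with ⟨e1, _⟩ | ⟨e1, _⟩
            · exact absurd e1 (hrow b hbT u huT hbz huz hbu)
            · exact e1
          have hsub : T ⊆ insert z {p : Fin (k+1) × Fin (k+1) | p.2 = u.2 ∧ p.1 ≠ 0} := by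
            intro x hx
            rcases eq_or_ne x z with rfl | hxz
            · exact Set.mem_insert _ _
            · exact Set.mem_insert_of_mem _ ⟨hall x hx hxz, (hinner x hx hxz).1⟩
          calc T.ncard ≤ _ := Set.ncard_le_ncard hsub (Set.toFinite _)
            _ ≤ {p : Fin (k+1) × Fin (k+1) | p.2 = u.2 ∧ p.1 ≠ 0}.ncard + 1 :=
                Set.ncard_insert_le _ _
            _ = k + 1 := by rw [ncard_col_set]
        · push_neg at hcol
          by_cases hE : ∃ a ∈ T, a ≠ z
          · obtain ⟨a, haT, haz⟩ := hE
            have hsub : T ⊆ {z, a} := by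
              intro x hx
              rcases eq_or_ne x z with rfl | hxz
              · exact Set.mem_insert _ _
              · right; exact hcol x hx a haT hxz haz
            calc T.ncard ≤ ({z, a} : Set _).ncard := Set.ncard_le_ncard hsub (Set.toFinite _)
              _ ≤ 2 := by
                  have := Set.ncard_insert_le z ({a} : Set _)
                  rw [Set.ncard_singleton] at this; omega
              _ ≤ k + 1 := by omega
          · push_neg at hE
            have hsub : T ⊆ {z} := fun x hx => hE x hx
            calc T.ncard ≤ ({z} : Set _).ncard := Set.ncard_le_ncard hsub (Set.toFinite _)
              _ ≤ k + 1 := by rw [Set.ncard_singleton]; omega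

lemma gp_subset {W : Type*} {G : SimpleGraph W} {S' S : Set W} (h : S' ⊆ S)
    (hS : IsGPSet G S) : IsGPSet G S' :=
  fun u hu v hv p hp hl w hw hwS => hS u (h hu) v (h hv) p hp hl w hw (h hwS)

lemma legalMove_ncard {W : Type*} [Finite W] {G : SimpleGraph W} {S T : Set W}
    (h : LegalMove G S T) : T.ncard = S.ncard := by
  obtain ⟨_, u, huS, v, hvS, _, rfl, _⟩ := h
  have h1 : v ∉ S \ {u} := fun hv => hvS hv.1
  rw [Set.ncard_insert_of_notMem h1 (Set.toFinite _),
    Set.ncard_diff_singleton_of_mem huS]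
  have h2 : 0 < S.ncard := (Set.ncard_pos (Set.toFinite _)).2 ⟨u, huS⟩
  omega

lemma mobile_card_le (hk : 2 ≤ k) {S : Set (Fin (k+1) × Fin (k+1))}
    (hS : IsMobileGPSet (_root_.starGraph k □ _root_.starGraph k) S) : S.ncard ≤ k + 1 := by
  obtain ⟨hgp, n, f, h0, hmv, hcov⟩ := hS
  have hgpi : ∀ i ≤ n, IsGPSet (_root_.starGraph k □ _root_.starGraph k) (f i) := by
    intro i hi
    cases i with
    | zero => rw [h0]; exact hgp
    | succ j =>
      obtain ⟨_, u, _, v, _, _, _, hgpT⟩ := hmv j (by omega)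
      exact hgpT
  have hcard : ∀ i ≤ n, (f i).ncard = S.ncard := by
    intro i hi
    induction i with
    | zero => rw [h0]
    | succ j ih =>
      have := legalMove_ncard (hmv j (by omega))
      rw [this, ih (by omega)]
  have hzmem : ((0 : Fin (k+1)), (0 : Fin (k+1))) ∈
      ⋃ i ∈ Set.Iic n, f i := by rw [hcov]; trivial
  rw [Set.mem_iUnion₂] at hzmem
  obtain ⟨i, hi, hz⟩ := hzmem
  have := card_le_of_gp_zero hk (hgpi i hi) hz
  rw [hcard i hi] at this
  exact this

/-! ### chain machinery -/

def ChainEnd {α : Type*} (R : α → α → Prop) (a : α) (l : List α) (b : α) : Prop :=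
  List.Chain R a l ∧ (a :: l).getLast (List.cons_ne_nil _ _) = b

lemma chainEnd_nil {α : Type*} {R : α → α → Prop} (a : α) : ChainEnd R a [] a :=
  ⟨List.Chain.nil, rfl⟩

lemma ChainEnd.cons {α : Type*} {R : α → α → Prop} {a c : α} {l : List α} {b : α}
    (h : R a c) (h2 : ChainEnd R c l b) : ChainEnd R a (c :: l) b :=
  ⟨List.Chain.cons h h2.1, by rw [List.getLast_cons_cons]; exact h2.2⟩

lemma ChainEnd.trans {α : Type*} {R : α → α → Prop} {l1 l2 : List α} :
    ∀ {a b c : α}, ChainEnd R a l1 b → ChainEnd R b l2 c → ChainEnd R a (l1 ++ l2) c := by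
  induction l1 with
  | nil =>
    intro a b c h1 h2
    have : a = b := h1.2
    subst this
    simpa using h2
  | cons d t ih =>
    intro a b c h1 h2
    rcases List.chain_cons.1 h1.1 with ⟨had, hch⟩
    have h1' : ChainEnd R d t b := ⟨hch, by rw [← h1.2, List.getLast_cons_cons]⟩
    exact .cons had (ih h1' h2)

lemma mobile_of_chain {W : Type*} {G : SimpleGraph W} {S : Set W} {L : List (Set W)}
    (hS : IsGPSet G S) (hch : List.Chain (LegalMove G) S L)
    (hcov : ∀ x, x ∈ S ∨ ∃ T ∈ L, x ∈ T) : IsMobileGPSet G S := by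
  refine ⟨hS, L.length, fun i => (S :: L).getD i ∅, by simp, ?_, ?_⟩
  · have main : ∀ (L' : List (Set W)) (S' : Set W), List.Chain (LegalMove G) S' L' →
        ∀ i < L'.length, LegalMove G ((S' :: L').getD i ∅) ((S' :: L').getD (i+1) ∅) := by
      intro L'
      induction L' with
      | nil => intro S' _ i hi; simp at hi
      | cons T t ih =>
        intro S' hch i hi
        rcases List.chain_cons.1 hch with ⟨h1, h2⟩
        cases i with
        | zero =>
          simpa using h1
        | succ j =>
          have := ih T h2 j (by simpa using hi)
          simpa using this
    exact main L S hch
  · apply Set.eq_univ_of_forall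
    intro x
    rcases hcov x with hx | ⟨T, hT, hx⟩
    · exact Set.mem_biUnion (Set.mem_Iic.2 (Nat.zero_le _)) (by simpa using hx)
    · obtain ⟨j, hj, rfl⟩ := List.mem_iff_getElem.1 hT
      refine Set.mem_biUnion (Set.mem_Iic.2 (by omega : j + 1 ≤ L.length)) ?_
      show x ∈ (S :: L).getD (j+1) ∅
      rw [List.getD_cons_succ, List.getD_eq_getElem _ _ hj]
      exact hx

lemma chainEnd_excursions {W : Type*} {G : SimpleGraph W} (S : Set W) (ts : List (Set W))
    (h : ∀ T ∈ ts, LegalMove G S T ∧ LegalMove G T S) :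
    ChainEnd (LegalMove G) S (ts.flatMap fun T => [T, S]) S := by
  induction ts with
  | nil => exact chainEnd_nil S
  | cons T t ih =>
    have hT := h T List.mem_cons_self
    exact .cons hT.1 (.cons hT.2 (ih fun T' hT' => h T' (List.mem_cons_of_mem _ hT')))

lemma chainEnd_range' {α : Type*} {R : α → α → Prop} (g : ℕ → α) :
    ∀ (n s : ℕ), (∀ i, s ≤ i → i < s + n → R (g i) (g (i+1))) →
      ChainEnd R (g s) ((List.range' (s+1) n).map g) (g (s+n)) := by
  intro n
  induction n with
  | zero => intro s _; simpa using chainEnd_nil (g s)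
  | succ m ih =>
    intro s h
    rw [List.range'_succ, List.map_cons]
    have e : s + 1 + m = s + (m + 1) := by omega
    refine ChainEnd.cons (h s le_rfl (by omega)) ?_
    have := ih (s+1) (fun i hi1 hi2 => h i (by omega) (by omega))
    rwa [e] at this

/-! ### concrete configurations -/

lemma gp_H0 (A I : Set (Fin (k+1)))
    (hA : (0:Fin (k+1)) ∉ A) (hI : (0:Fin (k+1)) ∉ I) :
    IsGPSet (_root_.starGraph k □ _root_.starGraph k) (rowA A ∪ colI I) := by
  rw [gp_iff]
  intro u hu v hv w hw hb1 hb2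
  rcases hw with ⟨hw1, hw2⟩ | ⟨hw1, hw2⟩
  · have hw20 : w.2 ≠ 0 := fun e => hA (e ▸ hw2)
    rcases hb2 with he | he | ⟨he, _⟩
    · left
      rcases hu with ⟨hu1, hu2⟩ | ⟨hu1, hu2⟩
      · exact Prod.ext (hw1.trans hu1.symm) he
      · exact absurd (he.trans hu1) hw20
    · right
      rcases hv with ⟨hv1, hv2⟩ | ⟨hv1, hv2⟩
      · exact Prod.ext (hw1.trans hv1.symm) he
      · exact absurd (he.trans hv1) hw20
    · exact absurd he hw20
  · have hw10 : w.1 ≠ 0 := fun e => hI (e ▸ hw2)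
    rcases hb1 with he | he | ⟨he, _⟩
    · left
      rcases hu with ⟨hu1, hu2⟩ | ⟨hu1, hu2⟩
      · exact absurd (he.trans hu1) hw10
      · exact Prod.ext he (hw1.trans hu1.symm)
    · right
      rcases hv with ⟨hv1, hv2⟩ | ⟨hv1, hv2⟩
      · exact absurd (he.trans hv1) hw10
      · exact Prod.ext he (hw1.trans hv1.symm)
    · exact absurd he hw10

lemma val_one' (hk : 1 ≤ k) : ((1 : Fin (k+1)) : ℕ) = 1 := by
  rw [Fin.val_one']; exact Nat.mod_eq_of_lt (by omega)

lemma one_ne_zero' (hk : 1 ≤ k) : (1 : Fin (k+1)) ≠ 0 :=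
  Fin.ne_of_val_ne (by rw [val_one' hk, Fin.val_zero]; omega)

lemma last_ne_zero (hk : 1 ≤ k) : (Fin.last k : Fin (k+1)) ≠ 0 :=
  Fin.ne_of_val_ne (by rw [Fin.val_last, Fin.val_zero]; omega)

lemma last_ne_one (hk : 2 ≤ k) : (Fin.last k : Fin (k+1)) ≠ 1 :=
  Fin.ne_of_val_ne (by rw [Fin.val_last, val_one' (by omega)]; omega)

def Qc (j : Fin (k+1)) : Set (Fin (k+1) × Fin (k+1)) :=
  rowA {j} ∪ colI {x | x ≠ 0}

def Pc (j i m : Fin (k+1)) : Set (Fin (k+1) × Fin (k+1)) :=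
  rowA {j} ∪ colI {x | x ≠ 0 ∧ x ≠ i} ∪ ({(i, m)} : Set (Fin (k+1) × Fin (k+1)))

def F2c (j j' i : Fin (k+1)) : Set (Fin (k+1) × Fin (k+1)) :=
  rowA {j, j'} ∪ colI {x | x ≠ 0 ∧ x ≠ i}

def Vc (n : ℕ) : Set (Fin (k+1) × Fin (k+1)) :=
  {((0 : Fin (k+1)), Fin.last k)} ∪
    {p : Fin (k+1) × Fin (k+1) | p.2 = 1 ∧ p.1 ∈ {x : Fin (k+1) | x ≠ 0 ∧ (x : ℕ) ≤ n}} ∪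
    colI {x : Fin (k+1) | x ≠ 0 ∧ n < (x : ℕ)}

def C1c : Set (Fin (k+1) × Fin (k+1)) :=
  {((0 : Fin (k+1)), (0 : Fin (k+1)))} ∪
    {p : Fin (k+1) × Fin (k+1) | p.2 = 1 ∧ p.1 ≠ 0}

lemma gp_Qc {j : Fin (k+1)} (hj : j ≠ 0) :
    IsGPSet (_root_.starGraph k □ _root_.starGraph k) (Qc j) :=
  gp_H0 {j} {x | x ≠ 0} (fun e => hj (Set.eq_of_mem_singleton e).symm) (fun e => e rfl)

lemma gp_Pc {j i m : Fin (k+1)} (hj : j ≠ 0) (hi : i ≠ 0) (hm : m ≠ 0) (hmj : m ≠ j) :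
    IsGPSet (_root_.starGraph k □ _root_.starGraph k) (Pc j i m) :=
  gp_H {j} {x | x ≠ 0 ∧ x ≠ i} _ i m
    (fun e => hj (Set.eq_of_mem_singleton e).symm)
    (fun e => e.1 rfl) le_rfl hi hm (fun e => e.2 rfl)
    (fun e => hmj (Set.eq_of_mem_singleton e))

lemma gp_F2c {j j' i : Fin (k+1)} (hj : j ≠ 0) (hj' : j' ≠ 0) :
    IsGPSet (_root_.starGraph k □ _root_.starGraph k) (F2c j j' i) := by
  refine gp_H0 {j, j'} {x | x ≠ 0 ∧ x ≠ i} ?_ (fun e => e.1 rfl)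
  intro e
  rcases e with e | e
  · exact hj e.symm
  · exact hj' (Set.eq_of_mem_singleton e).symm

lemma gp_Vc (hk : 2 ≤ k) (n : ℕ) :
    IsGPSet (_root_.starGraph k □ _root_.starGraph k) (Vc n) := by
  refine gp_K (Fin.last k) _ _ (last_ne_zero (by omega)) (last_ne_one hk)
    (fun e => e.1 rfl) (fun e => e.1 rfl) ?_
  rintro i ⟨hi0, hile⟩ ⟨_, hgt⟩
  omega

lemma gp_C1c (hk : 2 ≤ k) :
    IsGPSet (_root_.starGraph k □ _root_.starGraph k) C1c :=
  gp_C1 (one_ne_zero' (by omega))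

/-! ### the moves -/

lemma adj_col {i m : Fin (k+1)} (hm : m ≠ 0) :
    (_root_.starGraph k □ _root_.starGraph k).Adj (i, 0) (i, m) :=
  boxProd_adj.2 (Or.inr ⟨star_adj.2 ⟨fun e => hm e.symm, Or.inl rfl⟩, rfl⟩)

lemma adj_row {i m : Fin (k+1)} (hi : i ≠ 0) :
    (_root_.starGraph k □ _root_.starGraph k).Adj (i, m) (0, m) :=
  boxProd_adj.2 (Or.inl ⟨star_adj.2 ⟨hi, Or.inr rfl⟩, rfl⟩)

lemma mv_QP {j i m : Fin (k+1)} (hj : j ≠ 0) (hi : i ≠ 0) (hm : m ≠ 0) (hmj : m ≠ j) :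
    LegalMove (_root_.starGraph k □ _root_.starGraph k) (Qc j) (Pc j i m) := by
  refine ⟨gp_Qc hj, (i, 0), Or.inr ⟨rfl, hi⟩, (i, m), ?_, adj_col hm, ?_, gp_Pc hj hi hm hmj⟩
  · rintro (⟨h1, h2⟩ | ⟨h1, h2⟩)
    · exact hi h1
    · exact hm h1
  · ext ⟨a, b⟩
    simp only [Pc, Qc, rowA, colI, Set.mem_union, Set.mem_setOf_eq, Set.mem_insert_iff,
      Set.mem_diff, Set.mem_singleton_iff, Prod.mk.injEq]
    constructor
    · rintro ((⟨h1, h2⟩ | ⟨h1, h2, h3⟩) | ⟨h1, h2⟩)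
      · exact Or.inr ⟨Or.inl ⟨h1, h2⟩, fun e => hi (e.1.symm.trans h1)⟩
      · exact Or.inr ⟨Or.inr ⟨h1, h2⟩, fun e => h3 e.1⟩
      · exact Or.inl ⟨h1, h2⟩
    · rintro (⟨h1, h2⟩ | ⟨(⟨h1, h2⟩ | ⟨h1, h2⟩), h3⟩)
      · exact Or.inr ⟨h1, h2⟩
      · exact Or.inl (Or.inl ⟨h1, h2⟩)
      · exact Or.inl (Or.inr ⟨h1, h2, fun e => h3 ⟨e, h1⟩⟩)

lemma mv_PQ {j i m : Fin (k+1)} (hj : j ≠ 0) (hi : i ≠ 0) (hm : m ≠ 0) (hmj : m ≠ j) :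
    LegalMove (_root_.starGraph k □ _root_.starGraph k) (Pc j i m) (Qc j) := by
  refine ⟨gp_Pc hj hi hm hmj, (i, m), Or.inr rfl, (i, 0), ?_, (adj_col hm).symm, ?_,
    gp_Qc hj⟩
  · rintro ((⟨h1, h2⟩ | ⟨h1, h2⟩) | h)
    · exact hi h1
    · exact h2.2 rfl
    · exact hm (congrArg Prod.snd h).symm
  · ext ⟨a, b⟩
    simp only [Pc, Qc, rowA, colI, Set.mem_union, Set.mem_setOf_eq, Set.mem_insert_iff,
      Set.mem_diff, Set.mem_singleton_iff, Prod.mk.injEq]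
    constructor
    · rintro (⟨h1, h2⟩ | ⟨h1, h2⟩)
      · exact Or.inr ⟨Or.inl (Or.inl ⟨h1, h2⟩), fun e => hi (e.1.symm.trans h1)⟩
      · rcases eq_or_ne a i with rfl | hne
        · exact Or.inl ⟨rfl, h1⟩
        · exact Or.inr ⟨Or.inl (Or.inr ⟨h1, h2, hne⟩), fun e => hne e.1⟩
    · rintro (⟨h1, h2⟩ | ⟨(⟨h1, h2⟩ | ⟨h1, h2, h3⟩) | ⟨h1, h2⟩, h4⟩)
      · exact Or.inr ⟨h2, fun e => hi (h1.symm.trans e)⟩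
      · exact Or.inl ⟨h1, h2⟩
      · exact Or.inr ⟨h1, h2⟩
      · exact absurd ⟨h1, h2⟩ h4

lemma mv_PF {j i m : Fin (k+1)} (hj : j ≠ 0) (hi : i ≠ 0) (hm : m ≠ 0) (hmj : m ≠ j) :
    LegalMove (_root_.starGraph k □ _root_.starGraph k) (Pc j i m) (F2c j m i) := by
  refine ⟨gp_Pc hj hi hm hmj, (i, m), Or.inr rfl, (0, m), ?_, adj_row hi, ?_,
    gp_F2c hj hm⟩
  · rintro ((⟨h1, h2⟩ | ⟨h1, h2⟩) | h)
    · exact hmj (Set.eq_of_mem_singleton h2)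
    · exact hm h1
    · exact hi (congrArg Prod.fst h).symm
  · ext ⟨a, b⟩
    simp only [Pc, F2c, rowA, colI, Set.mem_union, Set.mem_setOf_eq, Set.mem_insert_iff,
      Set.mem_diff, Set.mem_singleton_iff, Prod.mk.injEq]
    constructor
    · rintro (⟨h1, h2 | h2⟩ | ⟨h1, h2, h3⟩)
      · exact Or.inr ⟨Or.inl (Or.inl ⟨h1, h2⟩), fun e => hi (e.1.symm.trans h1)⟩
      · exact Or.inl ⟨h1, h2⟩
      · exact Or.inr ⟨Or.inl (Or.inr ⟨h1, h2, h3⟩), fun e => h3 e.1⟩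
    · rintro (⟨h1, h2⟩ | ⟨(⟨h1, h2⟩ | ⟨h1, h2, h3⟩) | ⟨h1, h2⟩, h4⟩)
      · exact Or.inl ⟨h1, Or.inr h2⟩
      · exact Or.inl ⟨h1, Or.inl h2⟩
      · exact Or.inr ⟨h1, h2, h3⟩
      · exact absurd ⟨h1, h2⟩ h4

lemma mv_FP {j i m : Fin (k+1)} (hj : j ≠ 0) (hi : i ≠ 0) (hm : m ≠ 0) (hjm : j ≠ m) :
    LegalMove (_root_.starGraph k □ _root_.starGraph k) (F2c j m i) (Pc m i j) := by
  refine ⟨gp_F2c hj hm, (0, j), Or.inl ⟨rfl, Or.inl rfl⟩, (i, j), ?_, (adj_row hi).symm, ?_,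
    gp_Pc hm hi hj hjm⟩
  · rintro (⟨h1, h2⟩ | ⟨h1, h2⟩)
    · exact hi h1
    · exact hj h1
  · ext ⟨a, b⟩
    simp only [Pc, F2c, rowA, colI, Set.mem_union, Set.mem_setOf_eq, Set.mem_insert_iff,
      Set.mem_diff, Set.mem_singleton_iff, Prod.mk.injEq]
    constructor
    · rintro ((⟨h1, h2⟩ | ⟨h1, h2, h3⟩) | ⟨h1, h2⟩)
      · exact Or.inr ⟨Or.inl ⟨h1, Or.inr h2⟩, fun e => hjm (e.2.symm.trans h2)⟩
      · exact Or.inr ⟨Or.inr ⟨h1, h2, h3⟩, fun e => hj (e.2.symm.trans h1)⟩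
      · exact Or.inl ⟨h1, h2⟩
    · rintro (⟨h1, h2⟩ | ⟨(⟨h1, h2 | h2⟩ | ⟨h1, h2, h3⟩), h4⟩)
      · exact Or.inr ⟨h1, h2⟩
      · exact absurd ⟨h1, h2⟩ h4
      · exact Or.inl (Or.inl ⟨h1, h2⟩)
      · exact Or.inl (Or.inr ⟨h1, h2, h3⟩)

lemma mv_VV (hk : 2 ≤ k) {n : ℕ} (hn : n < k) :
    LegalMove (_root_.starGraph k □ _root_.starGraph k) (Vc n) (Vc (n + 1)) := by
  set en : Fin (k+1) := ⟨n+1, by omega⟩ with hen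
  have hen0 : en ≠ 0 := Fin.ne_of_val_ne (by simp [hen])
  have h10 : (1 : Fin (k+1)) ≠ 0 := one_ne_zero' (by omega)
  have hval : ∀ a : Fin (k+1), a = en ↔ (a : ℕ) = n + 1 :=
    fun a => ⟨fun e => by rw [e], fun e => Fin.ext e⟩
  refine ⟨gp_Vc hk n, (en, 0), Or.inr ⟨rfl, hen0, by simp [hen]⟩, (en, 1), ?_,
    adj_col h10, ?_, gp_Vc hk (n+1)⟩
  · rintro ((h | ⟨h1, _, h3⟩) | ⟨h1, h2⟩)
    · exact hen0 (congrArg Prod.fst h)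
    · simp [hen] at h3
    · exact h10 h1
  · ext ⟨a, b⟩
    simp only [Vc, colI, Set.mem_union, Set.mem_setOf_eq, Set.mem_insert_iff,
      Set.mem_diff, Set.mem_singleton_iff, Prod.mk.injEq]
    constructor
    · rintro ((⟨h1, h2⟩ | ⟨h1, h2, h3⟩) | ⟨h1, h2, h3⟩)
      · exact Or.inr ⟨Or.inl (Or.inl ⟨h1, h2⟩), fun e => hen0 (e.1.symm.trans h1)⟩
      · rcases Nat.lt_or_ge (a : ℕ) (n+1) with hlt | hge
        · exact Or.inr ⟨Or.inl (Or.inr ⟨h1, h2, by omega⟩), fun e => h10 (h1.symm.trans e.2)⟩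
        · exact Or.inl ⟨(hval a).2 (by omega), h1⟩
      · exact Or.inr ⟨Or.inr ⟨h1, h2, by omega⟩, fun e => by
          rw [(hval a).1 e.1] at h3; omega⟩
    · rintro (⟨h1, h2⟩ | ⟨(⟨h1, h2⟩ | ⟨h1, h2, h3⟩) | ⟨h1, h2, h3⟩, h4⟩)
      · exact Or.inl (Or.inr ⟨h2, fun e => hen0 (h1.symm.trans e), by
          rw [(hval a).1 h1]⟩)
      · exact Or.inl (Or.inl ⟨h1, h2⟩)
      · exact Or.inl (Or.inr ⟨h1, h2, by omega⟩)
      · refine Or.inr ⟨h1, h2, ?_⟩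
        rcases Nat.lt_or_ge (n+1) (a : ℕ) with hlt | hge
        · exact hlt
        · exact absurd ⟨(hval a).2 (by omega), h1⟩ h4

lemma mv_VC (hk : 2 ≤ k) :
    LegalMove (_root_.starGraph k □ _root_.starGraph k) (Vc k) C1c := by
  have hl0 : (Fin.last k : Fin (k+1)) ≠ 0 := last_ne_zero (by omega)
  refine ⟨gp_Vc hk k, ((0 : Fin (k+1)), Fin.last k), Or.inl (Or.inl rfl),
    ((0 : Fin (k+1)), (0 : Fin (k+1))), ?_, (adj_col hl0).symm, ?_, gp_C1c hk⟩
  · rintro ((h | ⟨h1, _⟩) | ⟨_, h2, _⟩)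
    · exact hl0 (congrArg Prod.snd h).symm
    · exact (one_ne_zero' (by omega)) h1.symm
    · exact h2 rfl
  · ext ⟨a, b⟩
    simp only [Vc, C1c, colI, Set.mem_union, Set.mem_setOf_eq, Set.mem_insert_iff,
      Set.mem_diff, Set.mem_singleton_iff, Prod.mk.injEq]
    constructor
    · rintro (⟨h1, h2⟩ | ⟨h1, h2⟩)
      · exact Or.inl ⟨h1, h2⟩
      · exact Or.inr ⟨Or.inl (Or.inr ⟨h1, h2, by omega⟩),
          fun e => h2 e.1⟩
    · rintro (⟨h1, h2⟩ | ⟨(⟨h1, h2⟩ | ⟨h1, h2, _⟩) | ⟨_, h2, h3⟩, h4⟩)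
      · exact Or.inl ⟨h1, h2⟩
      · exact absurd ⟨h1, h2⟩ h4
      · exact Or.inr ⟨h1, h2⟩
      · exact absurd (a.isLt) (by omega)

/-! ### assembling the tour -/

def fm (hk : 2 ≤ k) (m : ℕ) : Fin (k+1) := ⟨m % (k+1), Nat.mod_lt _ (by omega)⟩

lemma fm_val (hk : 2 ≤ k) {m : ℕ} (h : m ≤ k) : ((fm hk m : Fin (k+1)) : ℕ) = m := by
  simp only [fm]
  exact Nat.mod_eq_of_lt (by omega)

lemma fm_ne_zero (hk : 2 ≤ k) {m : ℕ} (h1 : 1 ≤ m) (h2 : m ≤ k) : fm hk m ≠ 0 :=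
  Fin.ne_of_val_ne (by rw [fm_val hk h2, Fin.val_zero]; omega)

lemma fm_ne (hk : 2 ≤ k) {m m' : ℕ} (h1 : m ≤ k) (h2 : m' ≤ k) (h : m ≠ m') :
    fm hk m ≠ fm hk m' :=
  Fin.ne_of_val_ne (by rw [fm_val hk h1, fm_val hk h2]; exact h)

def seg (hk : 2 ≤ k) (m : ℕ) : List (Set (Fin (k+1) × Fin (k+1))) :=
  [Pc (fm hk m) 1 (fm hk (m+1)), F2c (fm hk m) (fm hk (m+1)) 1,
   Pc (fm hk (m+1)) 1 (fm hk m), Qc (fm hk (m+1))]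

lemma chain_seg (hk : 2 ≤ k) {m : ℕ} (h1 : 1 ≤ m) (h2 : m < k) :
    ChainEnd (LegalMove (_root_.starGraph k □ _root_.starGraph k)) (Qc (fm hk m)) (seg hk m)
      (Qc (fm hk (m+1))) := by
  have hm0 : fm hk m ≠ 0 := fm_ne_zero hk h1 (by omega)
  have hm10 : fm hk (m+1) ≠ 0 := fm_ne_zero hk (by omega) (by omega)
  have hne : fm hk (m+1) ≠ fm hk m := fm_ne hk (by omega) (by omega) (by omega)
  have h10 : (1 : Fin (k+1)) ≠ 0 := one_ne_zero' (by omega)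
  exact .cons (mv_QP hm0 h10 hm10 hne)
    (.cons (mv_PF hm0 h10 hm10 hne)
      (.cons (mv_FP hm0 h10 hm10 hne.symm)
        (.cons (mv_PQ hm10 h10 hm0 hne.symm) (chainEnd_nil _))))

lemma chain_phase2 (hk : 2 ≤ k) :
    ∀ (n s : ℕ), 1 ≤ s → s + n ≤ k →
      ChainEnd (LegalMove (_root_.starGraph k □ _root_.starGraph k)) (Qc (fm hk s))
        ((List.range' s n).flatMap (seg hk)) (Qc (fm hk (s+n))) := by
  intro n
  induction n with
  | zero => intro s _ _; simpa using chainEnd_nil _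
  | succ m ih =>
    intro s hs hsm
    rw [List.range'_succ, List.flatMap_cons]
    refine ChainEnd.trans (chain_seg hk hs (by omega)) ?_
    have := ih (s+1) (by omega) (by omega)
    have e : s + 1 + m = s + (m + 1) := by omega
    rwa [e] at this

def ts1 (hk : 2 ≤ k) : List (Set (Fin (k+1) × Fin (k+1))) :=
  ((List.finRange (k+1)).product (List.finRange (k+1))).filterMap
    (fun im => if im.1 ≠ 0 ∧ im.2 ≠ 0 ∧ im.2 ≠ 1 then some (Pc 1 im.1 im.2) else none)

lemma mem_ts1 (hk : 2 ≤ k) {T : Set (Fin (k+1) × Fin (k+1))} (hT : T ∈ ts1 hk) :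
    ∃ i m : Fin (k+1), i ≠ 0 ∧ m ≠ 0 ∧ m ≠ 1 ∧ T = Pc 1 i m := by
  obtain ⟨⟨i, m⟩, _, heq⟩ := List.mem_filterMap.1 hT
  by_cases hc : i ≠ 0 ∧ m ≠ 0 ∧ m ≠ 1
  · rw [if_pos hc] at heq
    exact ⟨i, m, hc.1, hc.2.1, hc.2.2, (Option.some_injective _ heq).symm⟩
  · rw [if_neg hc] at heq
    exact absurd heq (by simp)

lemma ts1_mem (hk : 2 ≤ k) {i m : Fin (k+1)} (hi : i ≠ 0) (hm : m ≠ 0) (hm1 : m ≠ 1) :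
    Pc 1 i m ∈ ts1 hk := by
  apply List.mem_filterMap.2
  refine ⟨(i, m), ?_, by rw [if_pos ⟨hi, hm, hm1⟩]⟩
  apply List.pair_mem_product.2
  exact ⟨List.mem_finRange i, List.mem_finRange m⟩

lemma chain_phase1 (hk : 2 ≤ k) :
    ChainEnd (LegalMove (_root_.starGraph k □ _root_.starGraph k)) (Qc 1)
      ((ts1 hk).flatMap fun T => [T, Qc 1]) (Qc 1) := by
  apply chainEnd_excursions
  intro T hT
  obtain ⟨i, m, hi, hm, hm1, rfl⟩ := mem_ts1 hk hT
  have h10 : (1 : Fin (k+1)) ≠ 0 := one_ne_zero' (by omega)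
  exact ⟨mv_QP h10 hi hm hm1, mv_PQ h10 hi hm hm1⟩

lemma Qc_fm_one (hk : 2 ≤ k) : Qc (k := k) 1 = Qc (fm hk 1) := by
  have : fm hk 1 = (1 : Fin (k+1)) := Fin.ext (by rw [fm_val hk (by omega), val_one' (by omega)])
  rw [this]

lemma Qc_fm_k (hk : 2 ≤ k) : Qc (fm hk k) = Vc 0 := by
  have hlast : fm hk k = Fin.last k := Fin.ext (by rw [fm_val hk le_rfl, Fin.val_last])
  ext ⟨a, b⟩
  simp only [Qc, Vc, rowA, colI, hlast, Set.mem_union, Set.mem_setOf_eq,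
    Set.mem_insert_iff, Set.mem_singleton_iff, Prod.mk.injEq]
  constructor
  · rintro (⟨h1, h2⟩ | ⟨h1, h2⟩)
    · exact Or.inl (Or.inl ⟨h1, h2⟩)
    · exact Or.inr ⟨h1, h2, Nat.pos_of_ne_zero (fun h => h2 (Fin.ext h))⟩
  · rintro ((⟨h1, h2⟩ | ⟨_, h2', h3⟩) | ⟨h1, h2, _⟩)
    · exact Or.inl ⟨h1, h2⟩
    · have hz : (a : ℕ) = 0 := by omega
      exact absurd (Fin.ext (by rw [hz, Fin.val_zero])) h2'
    · exact Or.inr ⟨h1, h2⟩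

def tourList (hk : 2 ≤ k) : List (Set (Fin (k+1) × Fin (k+1))) :=
  ((ts1 hk).flatMap fun T => [T, Qc 1]) ++
    ((List.range' 1 (k-1)).flatMap (seg hk) ++
      (((List.range' 1 k).map Vc) ++ [C1c]))

lemma chain_tour (hk : 2 ≤ k) :
    ChainEnd (LegalMove (_root_.starGraph k □ _root_.starGraph k)) (Qc 1) (tourList hk) C1c := by
  refine ChainEnd.trans (chain_phase1 hk) ?_
  rw [Qc_fm_one hk]
  refine ChainEnd.trans (chain_phase2 hk (k-1) 1 le_rfl (by omega)) ?_
  have e : 1 + (k - 1) = k := by omega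
  rw [e, Qc_fm_k hk]
  refine ChainEnd.trans ?_ (ChainEnd.cons (mv_VC hk) (chainEnd_nil _))
  have := chainEnd_range' Vc k 0 (fun i _ hi => mv_VV hk (by omega))
  simpa using this

lemma coverage (hk : 2 ≤ k) :
    ∀ x : Fin (k+1) × Fin (k+1), x ∈ Qc (k := k) 1 ∨ ∃ T ∈ tourList hk, x ∈ T := by
  have h10 : (1 : Fin (k+1)) ≠ 0 := one_ne_zero' (by omega)
  rintro ⟨a, b⟩
  by_cases hb0 : b = 0
  · by_cases ha0 : a = 0
    · -- centre: covered by C1c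
      right
      refine ⟨C1c, ?_, Or.inl (by rw [ha0, hb0]; exact rfl)⟩
      unfold tourList
      simp
    · exact Or.inl (Or.inr ⟨hb0, ha0⟩)
  · by_cases ha0 : a = 0
    · by_cases hb1 : b = 1
      · exact Or.inl (Or.inl ⟨ha0, hb1⟩)
      · -- (0, b), b ∉ {0,1} : covered by Qc b in phase 2
        right
        have hb2 : 2 ≤ (b : ℕ) := by
          rcases Nat.lt_or_ge (b : ℕ) 2 with h | h
          · interval_cases hb : (b : ℕ)
            · exact absurd (Fin.ext hb) hb0
            · exact absurd (Fin.ext (by rw [hb, val_one' (by omega)])) hb1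
          · exact h
        have hbk : (b : ℕ) ≤ k := by omega
        refine ⟨Qc (fm hk ((b : ℕ) - 1 + 1)), ?_, ?_⟩
        · unfold tourList
          apply List.mem_append_right
          apply List.mem_append_left
          apply List.mem_flatMap.2
          refine ⟨(b : ℕ) - 1, ?_, ?_⟩
          · apply List.mem_range'_1.2
            omega
          · unfold seg
            simp
        · left
          refine ⟨ha0, ?_⟩
          show b ∈ ({fm hk ((b : ℕ) - 1 + 1)} : Set (Fin (k+1)))
          have : (b : ℕ) - 1 + 1 = (b : ℕ) := by omega
          rw [this]
          exact Set.mem_singleton_iff.2 (Fin.ext (by rw [fm_val hk hbk]))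
    · by_cases hb1 : b = 1
      · -- (a, 1) : covered by Vc k
        right
        refine ⟨Vc k, ?_, Or.inl (Or.inr ⟨hb1, ha0, by omega⟩)⟩
        unfold tourList
        apply List.mem_append_right
        apply List.mem_append_right
        apply List.mem_append_left
        apply List.mem_map.2
        exact ⟨k, List.mem_range'_1.2 (by omega), rfl⟩
      · -- inner (a, b), b ∉ {0,1} : covered by Pc 1 a b in phase 1
        right
        refine ⟨Pc 1 a b, ?_, Or.inr rfl⟩
        unfold tourList
        apply List.mem_append_left
        apply List.mem_flatMap.2
        exact ⟨Pc 1 a b, ts1_mem hk ha0 hb0 hb1, by simp⟩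

lemma ncard_Qc {j : Fin (k+1)} : (Qc j).ncard = k + 1 := by
  have he : Qc j = insert ((0 : Fin (k+1)), j)
      {p : Fin (k+1) × Fin (k+1) | p.2 = 0 ∧ p.1 ≠ 0} := by
    ext ⟨a, b⟩
    simp only [Qc, rowA, colI, Set.mem_union, Set.mem_setOf_eq, Set.mem_insert_iff,
      Set.mem_singleton_iff, Prod.mk.injEq]
  rw [he, Set.ncard_insert_of_notMem (by simp) (Set.toFinite _), ncard_col_set]

lemma mobile_Qc_one (hk : 2 ≤ k) :
    IsMobileGPSet (_root_.starGraph k □ _root_.starGraph k) (Qc (k := k) 1) := by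
  apply mobile_of_chain (gp_Qc (one_ne_zero' (by omega))) (chain_tour hk).1
  exact fun x => coverage hk x

end MobAux

theorem mob_star_boxProd_star (k : ℕ) (hk : 2 ≤ k) :
    mob (_root_.starGraph k □ _root_.starGraph k) = k + 1 := by
  have hmem : (k + 1) ∈ {n | ∃ S : Set (Fin (k+1) × Fin (k+1)),
      IsMobileGPSet (_root_.starGraph k □ _root_.starGraph k) S ∧ S.ncard = n} :=
    ⟨MobAux.Qc 1, MobAux.mobile_Qc_one hk, MobAux.ncard_Qc⟩
  have hub : ∀ n ∈ {n | ∃ S : Set (Fin (k+1) × Fin (k+1)),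
      IsMobileGPSet (_root_.starGraph k □ _root_.starGraph k) S ∧ S.ncard = n}, n ≤ k + 1 := by
    rintro n ⟨S, hS, rfl⟩
    exact MobAux.mobile_card_le hk hS
  unfold mob
  exact le_antisymm (csSup_le ⟨k+1, hmem⟩ hub) (le_csSup ⟨k+1, hub⟩ hmem)
end

section
/- Let P_∞ be the two-way infinite path, i.e., the graph on vertex set ℤ in which i and j are adjacent iff |i − j| = 1. Then the mobile general position number of the infinite grid satisfies mob(P_∞ □ P_∞) = 4. -/
open SimpleGraph

/-- The two-way infinite path on `ℤ`: `i` and `j` are adjacent iff `|i - j| = 1`. -/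
def pathZ : SimpleGraph ℤ := SimpleGraph.fromRel (fun i j => j = i + 1)

/-- `S` is a mobile general position set of a (possibly infinite) graph: `S` is a finite
general position set and there is an infinite sequence of configurations
`S = S_0, S_1, S_2, …`, each obtained from the previous one by a legal move, whose union
is the whole vertex set. -/
def IsMobileGPSetInf {V : Type*} (G : SimpleGraph V) (S : Set V) : Prop :=
  S.Finite ∧ IsGPSet G S ∧ ∃ f : ℕ → Set V, f 0 = S ∧
    (∀ i : ℕ, LegalMove G (f i) (f (i + 1))) ∧
    (⋃ i : ℕ, f i) = Set.univ

/-- The mobile general position number of a (possibly infinite) graph. -/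
noncomputable def mobInf {V : Type*} (G : SimpleGraph V) : ℕ :=
  sSup {n | ∃ S : Set V, IsMobileGPSetInf G S ∧ S.ncard = n}


lemma pathZ_adj {a b : ℤ} : pathZ.Adj a b ↔ b = a + 1 ∨ a = b + 1 := by
  simp only [pathZ, fromRel_adj]
  constructor
  · rintro ⟨-, h⟩; omega
  · intro h; exact ⟨by omega, h⟩

abbrev Grid := pathZ □ pathZ

lemma grid_adj {u v : ℤ × ℤ} : Grid.Adj u v ↔
    (pathZ.Adj u.1 v.1 ∧ u.2 = v.2) ∨ (pathZ.Adj u.2 v.2 ∧ u.1 = v.1) := Iff.rfl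

def L1 (u v : ℤ × ℤ) : ℕ := (v.1 - u.1).natAbs + (v.2 - u.2).natAbs

lemma pathZ_walk : ∀ (n : ℕ) (a b : ℤ), (b - a).natAbs = n →
    ∃ p : pathZ.Walk a b, p.length = n := by
  intro n
  induction n with
  | zero => intro a b h; have : a = b := by omega
            subst this; exact ⟨.nil, rfl⟩
  | succ n ih =>
    intro a b h
    rcases le_or_gt a b with hab | hab
    · have h1 : pathZ.Adj a (a+1) := pathZ_adj.mpr (Or.inl rfl)
      obtain ⟨p, hp⟩ := ih (a+1) b (by omega)
      exact ⟨.cons h1 p, by simp [hp]⟩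
    · have h1 : pathZ.Adj a (a-1) := pathZ_adj.mpr (Or.inr (by ring))
      obtain ⟨p, hp⟩ := ih (a-1) b (by omega)
      exact ⟨.cons h1 p, by simp [hp]⟩

lemma grid_walk (u v : ℤ × ℤ) : ∃ q : Grid.Walk u v, q.length = L1 u v := by
  obtain ⟨p1, hp1⟩ := pathZ_walk (v.1 - u.1).natAbs u.1 v.1 rfl
  obtain ⟨p2, hp2⟩ := pathZ_walk (v.2 - u.2).natAbs u.2 v.2 rfl
  refine ⟨((p1.boxProdLeft pathZ u.2).append (p2.boxProdRight pathZ v.1)), ?_⟩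
  simp only [Walk.length_append]
  have e1 : (p1.boxProdLeft pathZ u.2).length = p1.length := Walk.length_map _ _
  have e2 : (p2.boxProdRight pathZ v.1).length = p2.length := Walk.length_map _ _
  simp [e1, e2, L1, hp1, hp2]

lemma grid_walk_le {u v : ℤ × ℤ} (p : Grid.Walk u v) : L1 u v ≤ p.length := by
  induction p with
  | nil => simp [L1]
  | cons h p ih =>
    rename_i a b c
    rw [grid_adj] at h
    rcases h with ⟨h1, h2⟩ | ⟨h1, h2⟩ <;> rw [pathZ_adj] at h1 <;>
      simp only [Walk.length_cons] <;> unfold L1 at * <;> omega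

lemma grid_dist (u v : ℤ × ℤ) : Grid.dist u v = L1 u v := by
  obtain ⟨q, hq⟩ := grid_walk u v
  refine le_antisymm (hq ▸ SimpleGraph.dist_le q) ?_
  obtain ⟨p, hp⟩ := (Reachable.exists_walk_length_eq_dist ⟨q⟩)
  rw [← hp]; exact grid_walk_le p

lemma grid_adj_L1 {u v : ℤ × ℤ} : Grid.Adj u v ↔ L1 u v = 1 := by
  rw [grid_adj, pathZ_adj, pathZ_adj]
  unfold L1
  omega

/-- `w` lies on some geodesic between `u` and `v`. -/
def BtwG (u w v : ℤ × ℤ) : Prop := L1 u w + L1 w v = L1 u v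

instance : DecidablePred (fun t : (ℤ×ℤ) × (ℤ×ℤ) × (ℤ×ℤ) => BtwG t.1 t.2.1 t.2.2) := by
  intro t; unfold BtwG; infer_instance

def NoBtw (S : Set (ℤ × ℤ)) : Prop :=
  ∀ u ∈ S, ∀ v ∈ S, ∀ w ∈ S, BtwG u w v → w = u ∨ w = v

lemma gp_iff_noBtw (S : Set (ℤ × ℤ)) : IsGPSet Grid S ↔ NoBtw S := by
  constructor
  · intro hgp u hu v hv w hw hbtw
    obtain ⟨q1, hq1⟩ := grid_walk u w
    obtain ⟨q2, hq2⟩ := grid_walk w v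
    have hlen : (q1.append q2).length = Grid.dist u v := by
      rw [Walk.length_append, grid_dist, hq1, hq2]; exact hbtw
    have hpath := (q1.append q2).isPath_of_length_eq_dist hlen
    exact hgp u hu v hv _ hpath hlen w
      (by rw [Walk.mem_support_append_iff]; exact Or.inl q1.end_mem_support) hw
  · intro hnb u hu v hv p hp hlen w hwsup hw
    refine hnb u hu v hv w hw ?_
    have hspec := p.take_spec hwsup
    have h1 : L1 u w ≤ (p.takeUntil w hwsup).length := grid_walk_le _
    have h2 : L1 w v ≤ (p.dropUntil w hwsup).length := grid_walk_le _
    have h3 : (p.takeUntil w hwsup).length + (p.dropUntil w hwsup).length = p.length := by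
      rw [← Walk.length_append, hspec]
    have h4 : p.length = L1 u v := by rw [hlen, grid_dist]
    have h5 : L1 u v ≤ L1 u w + L1 w v := by unfold L1; omega
    unfold BtwG; omega

def P1 (u v : ℤ × ℤ) : Prop := u.1 ≤ v.1 ∧ u.2 ≤ v.2

lemma triple_btw {a b c : ℤ×ℤ} (h1 : ¬ P1 a b) (h2 : ¬ P1 b a) (h3 : ¬ P1 b c)
    (h4 : ¬ P1 c b) (h5 : ¬ P1 a c) (h6 : ¬ P1 c a) :
    BtwG a b c ∨ BtwG b a c ∨ BtwG a c b := by
  unfold P1 at *; unfold BtwG L1; omega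

lemma antichain_card {S A : Set (ℤ×ℤ)} (hAS : A ⊆ S) (hnb : NoBtw S)
    (hA : ∀ a ∈ A, ∀ b ∈ A, a ≠ b → ¬ P1 a b) : A.ncard ≤ 2 := by
  by_contra hc
  obtain ⟨t, htA, ht3⟩ := Set.exists_subset_card_eq (show 3 ≤ A.ncard by omega)
  obtain ⟨a, b, c, hab, hac, hbc, rfl⟩ := Set.ncard_eq_three.mp ht3
  have ha : a ∈ A := htA (by simp)
  have hb : b ∈ A := htA (by simp)
  have hc' : c ∈ A := htA (by simp)
  rcases triple_btw (hA a ha b hb hab) (hA b hb a ha hab.symm) (hA b hb c hc' hbc)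
      (hA c hc' b hb hbc.symm) (hA a ha c hc' hac) (hA c hc' a ha hac.symm) with h | h | h
  · rcases hnb a (hAS ha) c (hAS hc') b (hAS hb) h with h' | h' <;> simp_all
  · rcases hnb b (hAS hb) c (hAS hc') a (hAS ha) h with h' | h' <;> simp_all
  · rcases hnb a (hAS ha) b (hAS hb) c (hAS hc') h with h' | h' <;> simp_all

lemma noBtw_ncard_le {S : Set (ℤ×ℤ)} (hnb : NoBtw S) (hf : S.Finite) : S.ncard ≤ 4 := by
  set M : Set (ℤ×ℤ) := {p ∈ S | ∀ q ∈ S, P1 q p → q = p} with hM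
  have hMS : M ⊆ S := Set.sep_subset _ _
  have hNS : S \ M ⊆ S := Set.diff_subset
  have hMA : ∀ a ∈ M, ∀ b ∈ M, a ≠ b → ¬ P1 a b := by
    rintro a ⟨haS, -⟩ b ⟨-, hbmin⟩ hab hPab
    exact hab (hbmin a haS hPab)
  have hNA : ∀ a ∈ S \ M, ∀ b ∈ S \ M, a ≠ b → ¬ P1 a b := by
    rintro a ⟨haS, haM⟩ b ⟨hbS, -⟩ hab hPab
    simp only [hM, Set.mem_setOf_eq, Set.mem_sep_iff, not_and, not_forall] at haM
    obtain ⟨m, hmS, hPma, hma⟩ := haM haS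
    by_cases hmb : m = b
    · subst hmb
      have : a = m := by
        have h1 := hPma; have h2 := hPab; unfold P1 at h1 h2
        exact Prod.ext (by omega) (by omega)
      exact hma this.symm
    · have hbtw : BtwG m a b := by unfold P1 at hPma hPab; unfold BtwG L1; omega
      rcases hnb m hmS b hbS a haS hbtw with h | h
      · exact hma h.symm
      · exact hab h
  have h1 : M.ncard ≤ 2 := antichain_card hMS hnb hMA
  have h2 : (S \ M).ncard ≤ 2 := antichain_card hNS hnb hNA
  have : S = M ∪ (S \ M) := by rw [Set.union_diff_cancel' (le_refl _) hMS]
  calc S.ncard = (M ∪ (S \ M)).ncard := by rw [← this]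
    _ ≤ M.ncard + (S \ M).ncard := Set.ncard_union_le _ _
    _ ≤ 4 := by omega

instance (u w v : ℤ×ℤ) : Decidable (BtwG u w v) :=
  decidable_of_iff (L1 u w + L1 w v = L1 u v) Iff.rfl

/-! ### Legal move infrastructure -/

lemma legal_symm {V : Type*} {G : SimpleGraph V} {S T : Set V} (h : LegalMove G S T) :
    LegalMove G T S := by
  obtain ⟨h1, u, hu, v, hv, hadj, rfl, h2⟩ := h
  refine ⟨h2, v, by simp, u, ?_, hadj.symm, ?_, h1⟩
  · simp [Set.mem_insert_iff, hadj.ne]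
  · ext p
    simp only [Set.mem_insert_iff, Set.mem_diff, Set.mem_singleton_iff]
    constructor
    · intro hp
      by_cases hpu : p = u
      · exact Or.inl hpu
      · exact Or.inr ⟨Or.inr ⟨hp, hpu⟩, fun hpv => hv (hpv ▸ hp)⟩
    · rintro (rfl | ⟨(rfl | ⟨hp, -⟩), hpv⟩)
      · exact hu
      · exact absurd rfl hpv
      · exact hp

def tr (t : ℤ × ℤ) (S : Set (ℤ × ℤ)) : Set (ℤ × ℤ) := (fun p => p + t) '' S

lemma tr_inj (t : ℤ × ℤ) : Function.Injective (fun p : ℤ × ℤ => p + t) :=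
  fun a b h => by simpa using h

lemma tr_zero (S : Set (ℤ × ℤ)) : tr 0 S = S := by simp [tr]

lemma tr_comp (t s : ℤ × ℤ) (S : Set (ℤ × ℤ)) : tr t (tr s S) = tr (s + t) S := by
  unfold tr
  rw [Set.image_image]
  have : (fun x : ℤ × ℤ => x + s + t) = (fun p : ℤ × ℤ => p + (s + t)) := by
    funext p; exact add_assoc p s t
  rw [this]

lemma mem_tr {t p : ℤ × ℤ} {S : Set (ℤ × ℤ)} : p + t ∈ tr t S ↔ p ∈ S := by
  constructor
  · rintro ⟨q, hq, hqe⟩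
    have : q = p := by
      have := congrArg (fun r : ℤ × ℤ => r - t) hqe
      simpa using this
    exact this ▸ hq
  · intro h
    exact ⟨p, h, rfl⟩

lemma L1_tr (t u v : ℤ × ℤ) : L1 (u + t) (v + t) = L1 u v := by
  simp only [L1, Prod.fst_add, Prod.snd_add]
  congr 2 <;> ring

lemma noBtw_tr (t : ℤ × ℤ) {S : Set (ℤ × ℤ)} (h : NoBtw S) : NoBtw (tr t S) := by
  rintro u ⟨u', hu', rfl⟩ v ⟨v', hv', rfl⟩ w ⟨w', hw', rfl⟩ hbtw
  have : BtwG u' w' v' := by unfold BtwG at *; rwa [L1_tr, L1_tr, L1_tr] at hbtw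
  rcases h u' hu' v' hv' w' hw' this with rfl | rfl
  · exact Or.inl rfl
  · exact Or.inr rfl

lemma gp_tr (t : ℤ × ℤ) {S : Set (ℤ × ℤ)} (h : IsGPSet Grid S) : IsGPSet Grid (tr t S) :=
  (gp_iff_noBtw _).mpr (noBtw_tr t ((gp_iff_noBtw _).mp h))

lemma adj_tr {t u v : ℤ × ℤ} : Grid.Adj (u + t) (v + t) ↔ Grid.Adj u v := by
  rw [grid_adj_L1, grid_adj_L1, L1_tr]

lemma legal_tr (t : ℤ × ℤ) {S T : Set (ℤ × ℤ)} (h : LegalMove Grid S T) :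
    LegalMove Grid (tr t S) (tr t T) := by
  obtain ⟨h1, u, hu, v, hv, hadj, hT, h2⟩ := h
  refine ⟨gp_tr t h1, u + t, mem_tr.mpr hu, v + t, fun hc => hv (mem_tr.mp hc),
    adj_tr.mpr hadj, ?_, gp_tr t h2⟩
  rw [hT]
  unfold tr
  rw [Set.image_insert_eq, Set.image_diff (tr_inj t), Set.image_singleton]

lemma legal_coe (F F' : Finset (ℤ × ℤ)) (u v : ℤ × ℤ) (hu : u ∈ F) (hv : v ∉ F)
    (hadj : L1 u v = 1) (heq : F' = insert v (F.erase u))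
    (h1 : ∀ a ∈ F, ∀ b ∈ F, ∀ c ∈ F, BtwG a c b → c = a ∨ c = b)
    (h2 : ∀ a ∈ F', ∀ b ∈ F', ∀ c ∈ F', BtwG a c b → c = a ∨ c = b) :
    LegalMove Grid ↑F ↑F' := by
  refine ⟨(gp_iff_noBtw _).mpr (fun a ha b hb c hc => h1 a (by simpa using ha) b (by simpa using hb) c (by simpa using hc)),
    u, by simpa using hu, v, by simpa using hv, grid_adj_L1.mpr hadj, ?_,
    (gp_iff_noBtw _).mpr (fun a ha b hb c hc => h2 a (by simpa using ha) b (by simpa using hb) c (by simpa using hc))⟩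
  rw [heq]
  push_cast [Finset.coe_insert, Finset.coe_erase]
  rfl

/-! ### Base configurations and moves -/

def A0 : Finset (ℤ×ℤ) := {(0,0),(1,2),(2,-1),(3,1)}
def A1 : Finset (ℤ×ℤ) := {(0,0),(1,2),(2,-1),(4,1)}
def A2 : Finset (ℤ×ℤ) := {(0,0),(1,2),(3,-1),(4,1)}
def A3 : Finset (ℤ×ℤ) := {(0,0),(2,2),(3,-1),(4,1)}
def A4 : Finset (ℤ×ℤ) := {(1,0),(2,2),(3,-1),(4,1)}
def B1 : Finset (ℤ×ℤ) := {(0,0),(1,3),(2,-1),(3,1)}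
def B2 : Finset (ℤ×ℤ) := {(0,0),(1,3),(2,-1),(3,2)}
def B3 : Finset (ℤ×ℤ) := {(0,1),(1,3),(2,-1),(3,2)}
def B4 : Finset (ℤ×ℤ) := {(0,1),(1,3),(2,0),(3,2)}

def C0 : Set (ℤ×ℤ) := ↑A0

lemma eA0 : LegalMove Grid ↑A0 ↑A1 :=
  legal_coe A0 A1 (3,1) (4,1) (by decide) (by decide) (by decide) (by decide) (by decide) (by decide)
lemma eA1 : LegalMove Grid ↑A1 ↑A2 :=
  legal_coe A1 A2 (2,-1) (3,-1) (by decide) (by decide) (by decide) (by decide) (by decide) (by decide)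
lemma eA2 : LegalMove Grid ↑A2 ↑A3 :=
  legal_coe A2 A3 (1,2) (2,2) (by decide) (by decide) (by decide) (by decide) (by decide) (by decide)
lemma eA3 : LegalMove Grid ↑A3 ↑A4 :=
  legal_coe A3 A4 (0,0) (1,0) (by decide) (by decide) (by decide) (by decide) (by decide) (by decide)
lemma eB0 : LegalMove Grid ↑A0 ↑B1 :=
  legal_coe A0 B1 (1,2) (1,3) (by decide) (by decide) (by decide) (by decide) (by decide) (by decide)
lemma eB1 : LegalMove Grid ↑B1 ↑B2 :=
  legal_coe B1 B2 (3,1) (3,2) (by decide) (by decide) (by decide) (by decide) (by decide) (by decide)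
lemma eB2 : LegalMove Grid ↑B2 ↑B3 :=
  legal_coe B2 B3 (0,0) (0,1) (by decide) (by decide) (by decide) (by decide) (by decide) (by decide)
lemma eB3 : LegalMove Grid ↑B3 ↑B4 :=
  legal_coe B3 B4 (2,-1) (2,0) (by decide) (by decide) (by decide) (by decide) (by decide) (by decide)

lemma tr_coe (t : ℤ×ℤ) (F : Finset (ℤ×ℤ)) : tr t ↑F = ↑(F.image (· + t)) := by
  unfold tr; rw [Finset.coe_image]

lemma hA4 : (↑A4 : Set (ℤ×ℤ)) = tr ((1:ℤ),(0:ℤ)) C0 := by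
  rw [C0, tr_coe]; congr 1

lemma hB4 : (↑B4 : Set (ℤ×ℤ)) = tr ((0:ℤ),(1:ℤ)) C0 := by
  rw [C0, tr_coe]; congr 1

abbrev Mv := LegalMove Grid

lemma transE (t : ℤ×ℤ) : Relation.TransGen Mv (tr t C0) (tr (t + (1,0)) C0) := by
  have h : tr (t + (1,0)) C0 = tr t (↑A4) := by
    rw [hA4, tr_comp, add_comm]
  rw [h]
  exact .head (legal_tr t eA0) (.head (legal_tr t eA1) (.head (legal_tr t eA2)
    (.single (legal_tr t eA3))))

lemma transN (t : ℤ×ℤ) : Relation.TransGen Mv (tr t C0) (tr (t + (0,1)) C0) := by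
  have h : tr (t + (0,1)) C0 = tr t (↑B4) := by
    rw [hB4, tr_comp, add_comm]
  rw [h]
  exact .head (legal_tr t eB0) (.head (legal_tr t eB1) (.head (legal_tr t eB2)
    (.single (legal_tr t eB3))))

lemma transgen_symm {α : Type*} {r : α → α → Prop} (hs : ∀ a b, r a b → r b a) {a b : α}
    (h : Relation.TransGen r a b) : Relation.TransGen r b a := by
  induction h with
  | single h => exact .single (hs _ _ h)
  | tail _ h2 ih => exact .head (hs _ _ h2) ih

lemma reach : ∀ (n : ℕ) (s t : ℤ×ℤ), L1 s t = n →
    Relation.ReflTransGen Mv (tr s C0) (tr t C0) := by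
  intro n
  induction n with
  | zero =>
    intro s t h
    have : s = t := by
      unfold L1 at h
      exact Prod.ext (by omega) (by omega)
    rw [this]
  | succ n ih =>
    intro s t h
    rcases lt_trichotomy s.1 t.1 with h1 | h1 | h1
    · refine Relation.ReflTransGen.trans (transE s).to_reflTransGen (ih (s + (1,0)) t ?_)
      unfold L1 at *; simp only [Prod.fst_add, Prod.snd_add]; omega
    · rcases lt_trichotomy s.2 t.2 with h2 | h2 | h2
      · refine Relation.ReflTransGen.trans (transN s).to_reflTransGen (ih (s + (0,1)) t ?_)
        unfold L1 at *; simp only [Prod.fst_add, Prod.snd_add]; omega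
      · exfalso; unfold L1 at h; omega
      · have hstep := transgen_symm (fun _ _ => legal_symm) (transN (s - (0,1)))
        rw [sub_add_cancel] at hstep
        refine Relation.ReflTransGen.trans hstep.to_reflTransGen (ih (s - (0,1)) t ?_)
        unfold L1 at *; simp only [Prod.fst_sub, Prod.snd_sub]; omega
    · have hstep := transgen_symm (fun _ _ => legal_symm) (transE (s - (1,0)))
      rw [sub_add_cancel] at hstep
      refine Relation.ReflTransGen.trans hstep.to_reflTransGen (ih (s - (1,0)) t ?_)
      unfold L1 at *; simp only [Prod.fst_sub, Prod.snd_sub]; omega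

lemma reachT (s t : ℤ×ℤ) : Relation.TransGen Mv (tr s C0) (tr t C0) :=
  Relation.TransGen.trans_left (transE s) (reach _ (s + (1,0)) t rfl)

lemma chainOf {α : Type*} {R : α → α → Prop} {a b : α} (h : Relation.TransGen R a b) :
    ∃ (k : ℕ) (c : ℕ → α), 0 < k ∧ c 0 = a ∧ c k = b ∧ ∀ i < k, R (c i) (c (i+1)) := by
  induction h with
  | @single b' hr =>
    refine ⟨1, fun i => if i = 0 then a else b', one_pos, by simp, by simp, ?_⟩
    intro i hi
    have : i = 0 := by omega
    subst this; simpa using hr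
  | @tail b' c'' h1 hr ih =>
    obtain ⟨k, c, hk, h0, hlast, hstep⟩ := ih
    refine ⟨k+1, fun i => if i ≤ k then c i else c'', by omega,
      by simp [h0], by simp only [if_neg (Nat.not_succ_le_self k)], ?_⟩
    intro i hi
    by_cases hik : i < k
    · simp only [if_pos (by omega : i ≤ k), if_pos (by omega : i + 1 ≤ k)]
      exact hstep i hik
    · have hik' : i = k := by omega
      simp only [hik', if_pos le_rfl, if_neg (Nat.not_succ_le_self k), hlast]
      exact hr

lemma glue {α : Type*} (R : α → α → Prop) (g : ℕ → α)
    (h : ∀ n, Relation.TransGen R (g n) (g (n+1))) :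
    ∃ f : ℕ → α, f 0 = g 0 ∧ (∀ i, R (f i) (f (i+1))) ∧ ∀ n, ∃ i, f i = g n := by
  choose k c hk h0 hlast hstep using fun n => chainOf (h n)
  set σ : ℕ → ℕ := fun n => ∑ m ∈ Finset.range n, k m with hσ
  have hσ0 : σ 0 = 0 := by simp [hσ]
  have hσs : ∀ n, σ (n+1) = σ n + k n := fun n => Finset.sum_range_succ k n
  have hσmono : ∀ {m n : ℕ}, m ≤ n → σ m ≤ σ n := by
    intro m n hmn
    exact Finset.sum_le_sum_of_subset (Finset.range_subset_range.mpr hmn)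
  have hσlt : ∀ n, σ n < σ (n+1) := fun n => by have := hk n; rw [hσs]; omega
  have hσge : ∀ n, n ≤ σ n := by
    intro n; induction n with
    | zero => omega
    | succ n ih => have := hσlt n; omega
  set N : ℕ → ℕ := fun i => Nat.findGreatest (fun n => σ n ≤ i) i with hN
  have hNle : ∀ i, σ (N i) ≤ i := by
    intro i
    exact Nat.findGreatest_spec (P := fun n => σ n ≤ i) (m := 0) (Nat.zero_le i) (show σ 0 ≤ i by omega)
  have hNge : ∀ i m, m ≤ i → σ m ≤ i → m ≤ N i := by
    intro i m h1 h2
    exact Nat.le_findGreatest (P := fun n => σ n ≤ i) h1 h2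
  have hNbd : ∀ i, N i ≤ i := fun i => Nat.findGreatest_le i
  have hNlt : ∀ i, i < σ (N i + 1) := by
    intro i
    by_contra hc
    push_neg at hc
    have h1 : N i + 1 ≤ i := le_trans (hσge _) hc
    have h2 := hNge i (N i + 1) h1 hc
    omega
  have hNσ : ∀ n, N (σ n) = n := by
    intro n
    have h1 : n ≤ N (σ n) := hNge _ n (hσge n) le_rfl
    have h2 : σ (N (σ n)) ≤ σ n := hNle _
    by_contra hc
    have h4 : σ (n+1) ≤ σ (N (σ n)) := hσmono (by omega)
    have h5 := hσlt n
    omega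
  refine ⟨fun i => c (N i) (i - σ (N i)), ?_, ?_, ?_⟩
  · have h1 : N 0 = 0 := by have := hNσ 0; rwa [hσ0] at this
    simp only [h1, hσ0, Nat.sub_zero, h0]
  · intro i
    show R (c (N i) (i - σ (N i))) (c (N (i+1)) ((i+1) - σ (N (i+1))))
    have hji : σ (N i) ≤ i := hNle i
    have hs1 : σ (N i + 1) = σ (N i) + k (N i) := hσs (N i)
    have hjlt : i - σ (N i) < k (N i) := by have := hNlt i; omega
    have hgn : N i ≤ σ (N i) := hσge (N i)
    by_cases hcase : i + 1 < σ (N i + 1)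
    · have hEq : N (i+1) = N i := by
        have h1 : N i ≤ N (i+1) := hNge (i+1) (N i) (by omega) (by omega)
        by_contra hc
        have h4 : σ (N i + 1) ≤ σ (N (i+1)) := hσmono (by omega)
        have h5 : σ (N (i+1)) ≤ i + 1 := hNle _
        omega
      rw [hEq]
      have h2 : i + 1 - σ (N i) = (i - σ (N i)) + 1 := by omega
      rw [h2]
      exact hstep (N i) _ hjlt
    · have hieq : i + 1 = σ (N i + 1) := by have := hNlt i; omega
      have hge2 : N i + 1 ≤ σ (N i + 1) := hσge (N i + 1)
      have hEq : N (i+1) = N i + 1 := by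
        have h1 : N i + 1 ≤ N (i+1) := hNge (i+1) (N i + 1) (by omega) (by omega)
        by_contra hc
        have h4 : σ (N i + 2) ≤ σ (N (i+1)) := hσmono (by omega)
        have h5 : σ (N (i+1)) ≤ i + 1 := hNle _
        have h6 : σ (N i + 1) < σ (N i + 2) := hσlt (N i + 1)
        omega
      rw [hEq, hieq, Nat.sub_self, h0]
      have h7 := hstep (N i) (i - σ (N i)) hjlt
      rwa [show i - σ (N i) + 1 = k (N i) by omega, hlast] at h7
  · intro n
    refine ⟨σ n, ?_⟩
    show c (N (σ n)) (σ n - σ (N (σ n))) = g n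
    rw [hNσ n, Nat.sub_self, h0]


lemma noBtw_coe {F : Finset (ℤ×ℤ)}
    (h : ∀ u ∈ F, ∀ v ∈ F, ∀ w ∈ F, BtwG u w v → w = u ∨ w = v) : NoBtw ↑F :=
  fun a ha b hb w hw => h a (by simpa using ha) b (by simpa using hb) w (by simpa using hw)

theorem mobInf_infinite_grid : mobInf (pathZ □ pathZ) = 4 := by
  have hC0gp : IsGPSet Grid C0 := (gp_iff_noBtw _).mpr (noBtw_coe (by decide))
  have h4mem : (4 : ℕ) ∈ {n | ∃ S : Set (ℤ×ℤ), IsMobileGPSetInf (pathZ □ pathZ) S ∧ S.ncard = n} := by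
    refine ⟨C0, ⟨A0.finite_toSet, hC0gp, ?_⟩, ?_⟩
    · set e : ℕ → ℤ×ℤ := fun n => (Denumerable.eqv (ℤ×ℤ)).symm n with he
      set g : ℕ → Set (ℤ×ℤ) := fun n => Nat.casesOn n (tr 0 C0) (fun m => tr (e m) C0) with hg
      have hgstep : ∀ n, Relation.TransGen Mv (g n) (g (n+1)) := by
        intro n
        cases n with
        | zero => exact reachT 0 (e 0)
        | succ m => exact reachT (e m) (e (m+1))
      obtain ⟨f, hf0, hfstep, hfcov⟩ := glue Mv g hgstep
      refine ⟨f, ?_, hfstep, ?_⟩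
      · rw [hf0]; show tr 0 C0 = C0; exact tr_zero C0
      · rw [Set.eq_univ_iff_forall]
        intro p
        obtain ⟨n, hn⟩ := (Denumerable.eqv (ℤ×ℤ)).symm.surjective p
        obtain ⟨i, hi⟩ := hfcov (n+1)
        refine Set.mem_iUnion.mpr ⟨i, ?_⟩
        rw [hi]
        show p ∈ tr (e n) C0
        have h00 : ((0,0) : ℤ×ℤ) ∈ C0 := by
          show _ ∈ (↑A0 : Set (ℤ×ℤ))
          exact_mod_cast (by decide : ((0,0) : ℤ×ℤ) ∈ A0)
        refine ⟨(0,0), h00, ?_⟩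
        show ((0,0) : ℤ×ℤ) + e n = p
        exact (zero_add (e n)).trans hn
    · rw [C0, Set.ncard_coe_finset]; decide
  have hub : ∀ n ∈ {n | ∃ S : Set (ℤ×ℤ), IsMobileGPSetInf (pathZ □ pathZ) S ∧ S.ncard = n},
      n ≤ 4 := by
    rintro n ⟨S, ⟨hfin, hgp, -⟩, rfl⟩
    exact noBtw_ncard_le ((gp_iff_noBtw S).mp hgp) hfin
  unfold mobInf
  exact le_antisymm (csSup_le ⟨4, h4mem⟩ hub) (le_csSup ⟨4, hub⟩ h4mem)
end

section
/- For any connected graph G and any graph H, the mobile general position number of the corona product satisfies max{mob(G), mob(H ∨ K_1)} ≤ mob(G ⊙ H) ≤ max{n(G), gp(H ∨ K_1)}, where n(G) is the order of G. -/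
open SimpleGraph

/-- The general position number of `G`: the maximum cardinality of a general position set. -/
noncomputable def gp {V : Type*} (G : SimpleGraph V) : ℕ :=
  sSup {n | ∃ S : Set V, IsGPSet G S ∧ S.ncard = n}

/-- The join `G ∨ H` of two graphs: the disjoint union of `G` and `H` together with all
edges between `V(G)` and `V(H)`. -/
def joinGraph {α β : Type*} (G : SimpleGraph α) (H : SimpleGraph β) : SimpleGraph (α ⊕ β) :=
  SimpleGraph.fromRel (fun x y =>
    (∃ a b, x = Sum.inl a ∧ y = Sum.inl b ∧ G.Adj a b) ∨
    (∃ a b, x = Sum.inr a ∧ y = Sum.inr b ∧ H.Adj a b) ∨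
    (x.isLeft ∧ y.isRight))

/-- The corona product `G ⊙ H`: one copy of `G` and, for each vertex `i` of `G`, one copy
of `H` (on vertices `{i} × V(H)`) with all edges between `i` and that copy. -/
def corona {α β : Type*} (G : SimpleGraph α) (H : SimpleGraph β) : SimpleGraph (α ⊕ α × β) :=
  SimpleGraph.fromRel (fun x y =>
    (∃ u v, x = Sum.inl u ∧ y = Sum.inl v ∧ G.Adj u v) ∨
    (∃ i a b, x = Sum.inr (i, a) ∧ y = Sum.inr (i, b) ∧ H.Adj a b) ∨
    (∃ i a, x = Sum.inl i ∧ y = Sum.inr (i, a)))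

set_option linter.unusedSectionVars false
section WalkAux
open SimpleGraph Walk
variable {V : Type*} {Γ : SimpleGraph V} {x y w : V}

variable [DecidableEq V] in
lemma dist_add_dist_le_length (p : Γ.Walk x y) (hw : w ∈ p.support) :
    Γ.dist x w + Γ.dist w y ≤ p.length := by
  have := p.take_spec hw
  calc Γ.dist x w + Γ.dist w y ≤ (p.takeUntil w hw).length + (p.dropUntil w hw).length :=
        Nat.add_le_add (Γ.dist_le _) (Γ.dist_le _)
    _ = p.length := by rw [← Walk.length_append, p.take_spec hw]

lemma length_pos_of_ne (p : Γ.Walk x y) (h : x ≠ y) : 1 ≤ p.length := by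
  cases p with
  | nil => exact absurd rfl h
  | cons h q => simp

end WalkAux
section ReachAux
variable {V : Type*} {Γ : SimpleGraph V}

lemma LegalMove.symm {S T : Set V} (h : LegalMove Γ S T) : LegalMove Γ T S := by
  obtain ⟨hS, u, hu, v, hv, hadj, hTeq, hT⟩ := h
  refine ⟨hT, v, by simp [hTeq], u, ?_, hadj.symm, ?_, hS⟩
  · rw [hTeq]
    rintro (h | h)
    · exact hadj.ne h
    · exact h.2 rfl
  · rw [hTeq]
    ext z
    simp only [Set.mem_insert_iff, Set.mem_diff, Set.mem_singleton_iff]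
    constructor
    · intro hz
      by_cases hzu : z = u
      · exact Or.inl hzu
      · exact Or.inr ⟨Or.inr ⟨hz, hzu⟩, fun hzv => hv (hzv ▸ hz)⟩
    · rintro (rfl | ⟨(rfl | ⟨hzS, _⟩), hzv⟩)
      · exact hu
      · exact absurd rfl hzv
      · exact hzS

/-- `Reach Γ S T A`: there is a chain of legal moves from `S` to `T` whose set of
visited vertices is exactly `A`. -/
inductive Reach (Γ : SimpleGraph V) : Set V → Set V → Set V → Prop
  | refl (S : Set V) : Reach Γ S S S
  | tail {S T A U : Set V} : Reach Γ S T A → LegalMove Γ T U → Reach Γ S U (A ∪ U)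

/-- `Reach'` : reach with visited set at least `A`. -/
def Reach' (Γ : SimpleGraph V) (S T A : Set V) : Prop :=
  ∃ A', A ⊆ A' ∧ Reach Γ S T A'

lemma Reach.start_subset {S T A : Set V} (h : Reach Γ S T A) : S ⊆ A := by
  induction h with
  | refl => exact subset_rfl
  | tail _ _ ih => exact ih.trans Set.subset_union_left

lemma Reach.end_subset {S T A : Set V} (h : Reach Γ S T A) : T ⊆ A := by
  induction h with
  | refl => exact subset_rfl
  | tail _ _ _ => exact Set.subset_union_right

lemma Reach.trans_aux {S T U A B : Set V} (h : Reach Γ S T A) (h' : Reach Γ T U B) :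
    ∃ C, Reach Γ S U C ∧ C ⊆ A ∪ B ∧ A ∪ B ⊆ C := by
  induction h' with
  | refl => exact ⟨A, h, Set.subset_union_left, Set.union_subset subset_rfl h.end_subset⟩
  | tail _ hm ih =>
    obtain ⟨C, hC, hC1, hC2⟩ := ih
    refine ⟨C ∪ _, hC.tail hm, ?_, ?_⟩
    · rw [← Set.union_assoc]
      exact Set.union_subset_union_left _ hC1
    · rw [← Set.union_assoc]
      exact Set.union_subset_union_left _ hC2

lemma Reach'.trans {S T U A B : Set V} (h : Reach' Γ S T A) (h' : Reach' Γ T U B) :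
    Reach' Γ S U (A ∪ B) := by
  obtain ⟨A', hA, hr⟩ := h
  obtain ⟨B', hB, hr'⟩ := h'
  obtain ⟨C, hC, _, hC2⟩ := hr.trans_aux hr'
  exact ⟨C, (Set.union_subset_union hA hB).trans hC2, hC⟩

lemma Reach'.refl (S : Set V) : Reach' Γ S S S := ⟨S, subset_rfl, Reach.refl S⟩

lemma Reach'.single {S T : Set V} (h : LegalMove Γ S T) : Reach' Γ S T (S ∪ T) :=
  ⟨S ∪ T, subset_rfl, (Reach.refl S).tail h⟩

lemma Reach'.mono {S T A B : Set V} (h : Reach' Γ S T A) (hBA : B ⊆ A) : Reach' Γ S T B := by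
  obtain ⟨A', hA, hr⟩ := h
  exact ⟨A', hBA.trans hA, hr⟩

lemma Reach'.reverse {S T A : Set V} (h : Reach' Γ S T A) : Reach' Γ T S A := by
  obtain ⟨A', hA, hr⟩ := h
  suffices hs : Reach' Γ T S A' from hs.mono hA
  clear hA
  induction hr with
  | refl => exact Reach'.refl _
  | tail hr hm ih =>
    exact ((Reach'.single hm.symm).trans ih).mono
      (Set.union_subset
        (Set.subset_union_right)
        (Set.subset_union_left.trans Set.subset_union_left))

/-- Convert a `Reach` chain covering everything into a mobile general position set. -/
lemma Reach.isMobileGPSet {S T A : Set V} (hS : IsGPSet Γ S) (h : Reach Γ S T A)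
    (hA : A = Set.univ) : IsMobileGPSet Γ S := by
  refine ⟨hS, ?_⟩
  suffices hs : ∃ (k : ℕ) (f : ℕ → Set V), f 0 = S ∧
      (∀ i < k, LegalMove Γ (f i) (f (i + 1))) ∧ (⋃ i ∈ Set.Iic k, f i) = A ∧ f k = T by
    obtain ⟨k, f, h1, h2, h3, _⟩ := hs
    exact ⟨k, f, h1, h2, h3.trans hA⟩
  clear hA hS
  induction h with
  | refl =>
    exact ⟨0, fun _ => S, rfl, by omega, by simp, rfl⟩
  | tail hr hm ih =>
    rename_i T' A' U'
    obtain ⟨k, f, h1, h2, h3, h4⟩ := ih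
    refine ⟨k + 1, fun i => if i ≤ k then f i else U', by simpa using h1, ?_, ?_, by simp⟩
    · intro i hi
      by_cases hik : i < k
      · simpa [Nat.le_of_lt hik, Nat.succ_le_of_lt hik] using h2 i hik
      · have : i = k := by omega
        subst this
        simpa [h4] using hm
    · ext z
      simp only [Set.mem_iUnion, Set.mem_Iic, Set.mem_union]
      constructor
      · rintro ⟨i, hik, hz⟩
        by_cases hik' : i ≤ k
        · left
          rw [← h3]
          simp only [Set.mem_iUnion, Set.mem_Iic]
          exact ⟨i, hik', by simpa [hik'] using hz⟩
        · right; simpa [hik'] using hz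
      · rintro (hz | hz)
        · rw [← h3] at hz
          simp only [Set.mem_iUnion, Set.mem_Iic] at hz
          obtain ⟨i, hik, hz⟩ := hz
          exact ⟨i, by omega, by simpa [hik] using hz⟩
        · exact ⟨k + 1, le_rfl, by simp; exact hz⟩

lemma Reach'.isMobileGPSet {S T : Set V} (hS : IsGPSet Γ S)
    (h : Reach' Γ S T Set.univ) : IsMobileGPSet Γ S := by
  obtain ⟨A', hA, hr⟩ := h
  exact hr.isMobileGPSet hS (Set.eq_univ_of_univ_subset hA)

end ReachAux
section MobAux
variable {V : Type*} {Γ : SimpleGraph V}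

lemma IsGPSet.subset {S S' : Set V} (h : IsGPSet Γ S) (h' : S' ⊆ S) : IsGPSet Γ S' :=
  fun u hu v hv p hp hl w hw hwS =>
    h u (h' hu) v (h' hv) p hp hl w hw (h' hwS)

lemma seq_gp {f : ℕ → Set V} {k : ℕ} (h0 : IsGPSet Γ (f 0))
    (hmv : ∀ t < k, LegalMove Γ (f t) (f (t + 1))) : ∀ t ≤ k, IsGPSet Γ (f t) := by
  intro t htk
  cases t with
  | zero => exact h0
  | succ s =>
    obtain ⟨-, u, -, v, -, -, -, hT⟩ := hmv s (by omega)
    exact hT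

lemma legal_ncard [Finite V] {S T : Set V} (h : LegalMove Γ S T) : T.ncard = S.ncard := by
  obtain ⟨-, u, hu, v, hv, -, rfl, -⟩ := h
  have hvd : v ∉ S \ {u} := fun hc => hv hc.1
  rw [Set.ncard_insert_of_notMem hvd (Set.toFinite _),
    Set.ncard_diff_singleton_of_mem hu]
  have : 0 < S.ncard := Set.ncard_pos (Set.toFinite _) |>.mpr ⟨u, hu⟩
  omega

lemma seq_ncard [Finite V] {f : ℕ → Set V} {k : ℕ}
    (hmv : ∀ t < k, LegalMove Γ (f t) (f (t + 1))) : ∀ t ≤ k, (f t).ncard = (f 0).ncard := by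
  intro t htk
  induction t with
  | zero => rfl
  | succ s ih =>
    rw [legal_ncard (hmv s (by omega))]
    exact ih (by omega)

lemma legal_image {W : Type*} {Δ : SimpleGraph W} {φ : Δ →g Γ}
    (hinj : Function.Injective φ)
    (hpres : ∀ {U : Set W}, IsGPSet Δ U → IsGPSet Γ (φ '' U)) {S T : Set W}
    (h : LegalMove Δ S T) : LegalMove Γ (φ '' S) (φ '' T) := by
  obtain ⟨hS, u, hu, v, hv, hadj, rfl, hT⟩ := h
  refine ⟨hpres hS, φ u, ⟨u, hu, rfl⟩, φ v, ?_, φ.map_adj hadj, ?_, hpres hT⟩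
  · rintro ⟨v', hv', he⟩
    exact hv (hinj he ▸ hv')
  · rw [Set.image_insert_eq, Set.image_diff hinj, Set.image_singleton]

lemma reach_seq {f : ℕ → Set V} {k : ℕ}
    (hmv : ∀ t < k, LegalMove Γ (f t) (f (t + 1))) :
    ∀ d t, t + d = k → Reach' Γ (f t) (f k) (⋃ s ∈ Set.Icc t k, f s) := by
  intro d
  induction d with
  | zero =>
    intro t ht
    rw [show k = t by omega]
    exact (Reach'.refl (f t)).mono (by
      intro z hz
      simp only [Set.mem_iUnion, Set.mem_Icc] at hz
      obtain ⟨s, ⟨h1, h2⟩, hzs⟩ := hz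
      obtain rfl : s = t := by omega
      exact hzs)
  | succ d ih =>
    intro t ht
    have hmove := hmv t (by omega)
    have hr := (Reach'.single hmove).trans (ih (t + 1) (by omega))
    refine hr.mono ?_
    intro z hz
    simp only [Set.mem_iUnion, Set.mem_Icc] at hz
    obtain ⟨s, ⟨h1, h2⟩, hzs⟩ := hz
    rcases Nat.eq_or_lt_of_le h1 with rfl | hlt
    · exact Or.inl (Or.inl hzs)
    · refine Or.inr ?_
      simp only [Set.mem_iUnion, Set.mem_Icc]
      exact ⟨s, ⟨by omega, h2⟩, hzs⟩

end MobAux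
section CoronaBasic
open SimpleGraph Sum

variable {α β : Type*} (G : SimpleGraph α) (H : SimpleGraph β)

/-- Projection of corona vertices to `G`'s vertices. -/
def cProj : α ⊕ α × β → α := Sum.elim id Prod.fst

local notation "C" => corona G H
local notation "π" => cProj (α := α) (β := β)

variable {G H}

@[simp] lemma cProj_inl (u : α) : π (inl u) = u := rfl
@[simp] lemma cProj_inr (i : α) (a : β) : π (inr (i, a)) = i := rfl

lemma corona_adj_inl_inl {u v : α} : (C).Adj (inl u) (inl v) ↔ G.Adj u v := by
  constructor
  · rintro ⟨hne, (⟨a, b, ha, hb, hab⟩ | ⟨i, a, b, ha, _⟩ | ⟨i, a, ha, hb⟩) |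
      (⟨a, b, ha, hb, hab⟩ | ⟨i, a, b, ha, _⟩ | ⟨i, a, ha, hb⟩)⟩
    · cases ha; cases hb; exact hab
    · exact absurd ha (by simp)
    · exact absurd hb (by simp)
    · cases ha; cases hb; exact hab.symm
    · exact absurd ha (by simp)
    · exact absurd hb (by simp)
  · intro h
    exact ⟨by simpa using h.ne, Or.inl (Or.inl ⟨u, v, rfl, rfl, h⟩)⟩

lemma corona_adj_inl_inr {u i : α} {a : β} : (C).Adj (inl u) (inr (i, a)) ↔ u = i := by
  constructor
  · rintro ⟨hne, (⟨c, d, hc, hd, _⟩ | ⟨j, c, d, hc, _⟩ | ⟨j, c, hc, hd⟩) |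
      (⟨c, d, hc, hd, _⟩ | ⟨j, c, d, _, hd, _⟩ | ⟨j, c, hc, hd⟩)⟩
    · exact absurd hd (by simp)
    · exact absurd hc (by simp)
    · cases hc; cases hd; rfl
    · exact absurd hc (by simp)
    · exact absurd hd (by simp)
    · exact absurd hc (by simp)
  · rintro rfl
    exact ⟨by simp, Or.inl (Or.inr (Or.inr ⟨_, a, rfl, rfl⟩))⟩

lemma corona_adj_inr_inr {i j : α} {a b : β} :
    (C).Adj (inr (i, a)) (inr (j, b)) ↔ i = j ∧ H.Adj a b := by
  constructor
  · rintro ⟨hne, (⟨c, d, hc, _⟩ | ⟨m, c, d, hc, hd, hcd⟩ | ⟨m, c, hc, _⟩) |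
      (⟨c, d, hc, _⟩ | ⟨m, c, d, hc, hd, hcd⟩ | ⟨m, c, hc, _⟩)⟩
    · exact absurd hc (by simp)
    · cases hc; cases hd; exact ⟨rfl, hcd⟩
    · exact absurd hc (by simp)
    · exact absurd hc (by simp)
    · cases hc; cases hd; exact ⟨rfl, hcd.symm⟩
    · exact absurd hc (by simp)
  · rintro ⟨rfl, hab⟩
    refine ⟨?_, Or.inl (Or.inr (Or.inl ⟨i, a, b, rfl, rfl, hab⟩))⟩
    intro hc
    exact hab.ne (by simpa using hc : i = i ∧ a = b).2

lemma corona_adj_cases {x y : α ⊕ α × β} (h : (C).Adj x y) :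
    (∃ u v, x = inl u ∧ y = inl v ∧ G.Adj u v) ∨
    (∃ i a b, x = inr (i, a) ∧ y = inr (i, b) ∧ H.Adj a b) ∨
    (∃ i a, x = inl i ∧ y = inr (i, a)) ∨
    (∃ i a, x = inr (i, a) ∧ y = inl i) := by
  match x, y with
  | inl u, inl v => exact Or.inl ⟨u, v, rfl, rfl, corona_adj_inl_inl.mp h⟩
  | inl u, inr (i, a) =>
    exact Or.inr (Or.inr (Or.inl ⟨u, a, rfl, by rw [corona_adj_inl_inr.mp h]⟩))
  | inr (i, a), inl u =>
    exact Or.inr (Or.inr (Or.inr ⟨u, a, by rw [corona_adj_inl_inr.mp h.symm], rfl⟩))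
  | inr (i, a), inr (j, b) =>
    obtain ⟨rfl, hab⟩ := corona_adj_inr_inr.mp h
    exact Or.inr (Or.inl ⟨i, a, b, rfl, rfl, hab⟩)

lemma corona_adj_proj {x y : α ⊕ α × β} (h : (C).Adj x y) :
    π x = π y ∨ G.Adj (π x) (π y) := by
  rcases corona_adj_cases h with ⟨u, v, rfl, rfl, huv⟩ | ⟨i, a, b, rfl, rfl, _⟩ |
    ⟨i, a, rfl, rfl⟩ | ⟨i, a, rfl, rfl⟩
  · exact Or.inr huv
  · exact Or.inl rfl
  · exact Or.inl rfl
  · exact Or.inl rfl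

end CoronaBasic
section CoronaDist
open SimpleGraph Sum Walk

variable {α β : Type*} {G : SimpleGraph α} {H : SimpleGraph β}

local notation "C" => corona G H
local notation "π" => cProj (α := α) (β := β)

/-- The embedding of `G` into the corona. -/
def liftG (G : SimpleGraph α) (H : SimpleGraph β) : G →g corona G H :=
  ⟨inl, fun h => corona_adj_inl_inl.mpr h⟩

@[simp] lemma liftG_apply (u : α) : liftG G H u = inl u := rfl

lemma dist_proj (hG : G.Connected) : ∀ {x y : α ⊕ α × β} (p : (C).Walk x y),
    G.dist (π x) (π y) ≤ p.length := by
  intro x y p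
  induction p with
  | nil => simp
  | cons h q ih =>
    rename_i x' z y'
    rcases corona_adj_proj h with heq | hadj
    · rw [heq]
      exact le_trans ih (by simp)
    · calc G.dist (π x') (π y') ≤ G.dist (π x') (π z) + G.dist (π z) (π y') :=
            hG.dist_triangle
        _ ≤ 1 + q.length := Nat.add_le_add (SimpleGraph.dist_le hadj.toWalk) ih
        _ = (Walk.cons h q).length := by simp [Nat.add_comm]

lemma inl_mem_support (m : α) : ∀ {x y : α ⊕ α × β} (p : (C).Walk x y),
    π x ≠ m → π y = m → y ≠ inl m → inl m ∈ p.support := by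
  intro x y p
  induction p with
  | nil => intro hx hy _; exact absurd hy hx
  | cons h q ih =>
    rename_i x' z y'
    intro hx hy hy'
    by_cases hz : z = inl m
    · subst hz
      simp
    · have hzm : π z ≠ m := by
        intro hzm
        obtain (w | ⟨j, c⟩) := z
        · exact hz (by rw [show w = m from hzm])
        · have hjm : j = m := hzm
          rcases corona_adj_cases h with ⟨u, v, _, hzz, _⟩ | ⟨i, a, b, hxx, hzz, _⟩ |
            ⟨i, a, hxx, hzz⟩ | ⟨i, a, hxx, hzz⟩
          · exact absurd hzz (by simp)
          · apply hx
            have h1 : i = j := by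
              have := hzz.symm
              simp only [Sum.inr.injEq, Prod.mk.injEq] at this
              exact this.1
            rw [hxx, cProj_inr, h1, hjm]
          · apply hx
            have h1 : i = j := by
              have := hzz.symm
              simp only [Sum.inr.injEq, Prod.mk.injEq] at this
              exact this.1
            rw [hxx, cProj_inl, h1, hjm]
          · exact absurd hzz (by simp)
      rw [Walk.support_cons]
      exact List.mem_cons_of_mem _ (ih hzm hy hy')

lemma len_inl_inr (hG : G.Connected) {v m : α} {b : β}
    (p : (C).Walk (inl v) (inr (m, b))) : G.dist v m + 1 ≤ p.length := by
  haveI : DecidableEq (α ⊕ α × β) := Classical.decEq _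
  by_cases hvm : v = m
  · subst hvm
    rw [SimpleGraph.dist_self]
    simpa using length_pos_of_ne p (by simp)
  · have hmem : inl m ∈ p.support := inl_mem_support m p (by simpa using hvm) rfl (by simp)
    have h1 : G.dist v m ≤ (p.takeUntil _ hmem).length := by
      simpa using dist_proj hG (p.takeUntil _ hmem)
    have h2 : 1 ≤ (p.dropUntil _ hmem).length := length_pos_of_ne _ (by simp)
    calc G.dist v m + 1 ≤ (p.takeUntil _ hmem).length + (p.dropUntil _ hmem).length :=
          Nat.add_le_add h1 h2
      _ = p.length := by rw [← Walk.length_append, p.take_spec hmem]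

lemma len_inr_inl (hG : G.Connected) {v m : α} {b : β}
    (p : (C).Walk (inr (m, b)) (inl v)) : G.dist m v + 1 ≤ p.length := by
  have := len_inl_inr hG p.reverse
  rw [Walk.length_reverse] at this
  rwa [SimpleGraph.dist_comm] at this

lemma len_inr_inr_ne (hG : G.Connected) {m j : α} {a b : β} (hmj : m ≠ j)
    (p : (C).Walk (inr (m, a)) (inr (j, b))) : G.dist m j + 2 ≤ p.length := by
  haveI : DecidableEq (α ⊕ α × β) := Classical.decEq _
  have hmem : inl j ∈ p.support := inl_mem_support j p (by simpa using hmj) rfl (by simp)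
  have h1 : G.dist m j + 1 ≤ (p.takeUntil _ hmem).length := len_inr_inl hG _
  have h2 : 1 ≤ (p.dropUntil _ hmem).length := length_pos_of_ne _ (by simp)
  calc G.dist m j + 2 = (G.dist m j + 1) + 1 := by ring
    _ ≤ (p.takeUntil _ hmem).length + (p.dropUntil _ hmem).length := Nat.add_le_add h1 h2
    _ = p.length := by rw [← Walk.length_append, p.take_spec hmem]

lemma len_inr_inr_same {i : α} {a b : β} (hab : ¬ H.Adj a b) (hne : a ≠ b)
    (p : (C).Walk (inr (i, a)) (inr (i, b))) : 2 ≤ p.length := by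
  have h1 : 1 ≤ p.length := length_pos_of_ne p (by simp [hne])
  have h2 : p.length ≠ 1 := by
    intro hlen
    have := Walk.adj_of_length_eq_one hlen
    exact hab (corona_adj_inr_inr.mp this).2
  omega

/-- A geodesic in `G`, lifted to the corona. -/
lemma exists_lift_walk (hG : G.Connected) (u v : α) :
    ∃ p : (C).Walk (inl u) (inl v), p.length = G.dist u v := by
  obtain ⟨q, hq⟩ := hG.exists_walk_length_eq_dist u v
  exact ⟨q.map (liftG G H), (Walk.length_map _ _).trans hq⟩

lemma cdist_inl_inl (hG : G.Connected) (u v : α) :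
    (C).dist (inl u) (inl v) = G.dist u v := by
  obtain ⟨p, hp⟩ := exists_lift_walk (H := H) hG u v
  refine le_antisymm (hp ▸ SimpleGraph.dist_le p) ?_
  obtain ⟨q, hq⟩ := (Reachable.exists_walk_length_eq_dist ⟨p⟩)
  calc G.dist u v = G.dist (π (inl u : α ⊕ α × β)) (π (inl v : α ⊕ α × β)) := rfl
    _ ≤ q.length := dist_proj hG q
    _ = _ := hq

lemma cdist_inl_inr (hG : G.Connected) (v m : α) (b : β) :
    (C).dist (inl v) (inr (m, b)) = G.dist v m + 1 := by
  obtain ⟨p, hp⟩ := exists_lift_walk (H := H) hG v m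
  have hadj : (C).Adj (inl m) (inr (m, b)) := corona_adj_inl_inr.mpr rfl
  have hw : (p.concat hadj).length = G.dist v m + 1 := by
    rw [Walk.length_concat, hp]
  refine le_antisymm (hw ▸ SimpleGraph.dist_le _) ?_
  obtain ⟨q, hq⟩ := (Reachable.exists_walk_length_eq_dist ⟨p.concat hadj⟩)
  exact hq ▸ len_inl_inr hG q

lemma cdist_inr_inl (hG : G.Connected) (v m : α) (b : β) :
    (C).dist (inr (m, b)) (inl v) = G.dist m v + 1 := by
  rw [SimpleGraph.dist_comm, cdist_inl_inr hG, SimpleGraph.dist_comm]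

lemma cdist_inr_inr_ne (hG : G.Connected) {m j : α} (hmj : m ≠ j) (a b : β) :
    (C).dist (inr (m, a)) (inr (j, b)) = G.dist m j + 2 := by
  obtain ⟨p, hp⟩ := exists_lift_walk (H := H) hG m j
  have hadj1 : (C).Adj (inr (m, a)) (inl m) := (corona_adj_inl_inr.mpr rfl).symm
  have hadj2 : (C).Adj (inl j) (inr (j, b)) := corona_adj_inl_inr.mpr rfl
  have hw : ((Walk.cons hadj1 p).concat hadj2).length = G.dist m j + 2 := by
    rw [Walk.length_concat, Walk.length_cons, hp]
  refine le_antisymm (hw ▸ SimpleGraph.dist_le _) ?_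
  obtain ⟨q, hq⟩ := (Reachable.exists_walk_length_eq_dist ⟨(Walk.cons hadj1 p).concat hadj2⟩)
  exact hq ▸ len_inr_inr_ne hG hmj q

lemma cdist_inr_inr_adj {i : α} {a b : β} (hab : H.Adj a b) :
    (C).dist (inr (i, a)) (inr (i, b)) = 1 := by
  have hadj : (C).Adj (inr (i, a)) (inr (i, b)) := corona_adj_inr_inr.mpr ⟨rfl, hab⟩
  refine le_antisymm (SimpleGraph.dist_le hadj.toWalk) ?_
  have hne' : (inr (i, a) : α ⊕ α × β) ≠ inr (i, b) := by simp [hab.ne]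
  have : (C).dist (inr (i, a)) (inr (i, b)) ≠ 0 := fun h0 =>
    hne' ((Reachable.dist_eq_zero_iff ⟨hadj.toWalk⟩).mp h0)
  omega

lemma cdist_inr_inr_nadj {i : α} {a b : β} (hab : ¬ H.Adj a b) (hne : a ≠ b) :
    (C).dist (inr (i, a)) (inr (i, b)) = 2 := by
  have hadj1 : (C).Adj (inr (i, a)) (inl i) := (corona_adj_inl_inr.mpr rfl).symm
  have hadj2 : (C).Adj (inl i) (inr (i, b)) := corona_adj_inl_inr.mpr rfl
  have hw : (Walk.cons hadj1 hadj2.toWalk).length = 2 := rfl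
  refine le_antisymm (hw ▸ SimpleGraph.dist_le _) ?_
  obtain ⟨q, hq⟩ := (Reachable.exists_walk_length_eq_dist ⟨Walk.cons hadj1 hadj2.toWalk⟩)
  exact hq ▸ len_inr_inr_same hab hne q

end CoronaDist
section Cone
open SimpleGraph Sum Walk

variable {α β : Type*} {G : SimpleGraph α} {H : SimpleGraph β}

local notation "C" => corona G H
local notation "K" => joinGraph H (⊤ : SimpleGraph (Fin 1))
local notation "π" => cProj (α := α) (β := β)

/-- The embedding of the cone over `H` into the corona, at vertex `i`. -/
def ιc {α β : Type*} (i : α) : β ⊕ Fin 1 → α ⊕ α × β :=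
  Sum.elim (fun b => inr (i, b)) (fun _ => inl i)

/-- Partial inverse of `ιc`. -/
def invc {α β : Type*} : α ⊕ α × β → β ⊕ Fin 1 :=
  Sum.elim (fun _ => inr 0) (fun p => inl p.2)

@[simp] lemma ιc_inl (i : α) (b : β) : ιc (β := β) i (inl b) = inr (i, b) := rfl
@[simp] lemma ιc_inr (i : α) (z : Fin 1) : ιc (β := β) i (inr z) = inl i := rfl

lemma ιc_injective (i : α) : Function.Injective (ιc (β := β) i) := by
  rintro (a | z) (b | z') h <;> simp_all
  · omega

@[simp] lemma cProj_ιc (i : α) (u : β ⊕ Fin 1) : π (ιc i u) = i := by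
  cases u <;> rfl

lemma ιc_invc {i : α} {z : α ⊕ α × β} (h : π z = i) : ιc i (invc z) = z := by
  obtain (w | ⟨j, c⟩) := z
  · have : w = i := h
    simp [invc, this]
  · have : j = i := h
    simp [invc, this]

lemma eq_unit_cases {i : α} {z : α ⊕ α × β} (h : π z = i) :
    z = inl i ∨ ∃ c, z = inr (i, c) := by
  obtain (w | ⟨j, c⟩) := z
  · exact Or.inl (by rw [show w = i from h])
  · exact Or.inr ⟨c, by rw [show j = i from h]⟩

lemma kadj_inl_inl {a b : β} : (K).Adj (inl a) (inl b) ↔ H.Adj a b := by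
  constructor
  · rintro ⟨hne, (⟨c, d, hc, hd, hcd⟩ | ⟨c, d, hc, _⟩ | ⟨h1, h2⟩) |
      (⟨c, d, hc, hd, hcd⟩ | ⟨c, d, hc, _⟩ | ⟨h1, h2⟩)⟩
    · cases hc; cases hd; exact hcd
    · exact absurd hc (by simp)
    · exact absurd h2 (by simp)
    · cases hc; cases hd; exact hcd.symm
    · exact absurd hc (by simp)
    · exact absurd h2 (by simp)
  · intro h
    exact ⟨by simpa using h.ne, Or.inl (Or.inl ⟨a, b, rfl, rfl, h⟩)⟩

lemma kadj_inl_inr (a : β) (z : Fin 1) : (K).Adj (inl a) (inr z) :=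
  ⟨by simp, Or.inl (Or.inr (Or.inr ⟨rfl, rfl⟩))⟩

lemma kadj_not_inr_inr (z z' : Fin 1) : ¬ (K).Adj (inr z) (inr z') := by
  intro h
  exact h.ne (by rw [Subsingleton.elim z z'])

lemma kadj_cases {u v : β ⊕ Fin 1} (h : (K).Adj u v) :
    (∃ a b, u = inl a ∧ v = inl b ∧ H.Adj a b) ∨
    (∃ a z, u = inl a ∧ v = inr z) ∨ (∃ a z, u = inr z ∧ v = inl a) := by
  match u, v with
  | inl a, inl b => exact Or.inl ⟨a, b, rfl, rfl, kadj_inl_inl.mp h⟩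
  | inl a, inr z => exact Or.inr (Or.inl ⟨a, z, rfl, rfl⟩)
  | inr z, inl a => exact Or.inr (Or.inr ⟨a, z, rfl, rfl⟩)
  | inr z, inr z' => exact absurd h (kadj_not_inr_inr z z')

/-- `ιc i` as a graph homomorphism. -/
def ιcHom (i : α) : (K) →g corona G H where
  toFun := ιc i
  map_rel' := by
    intro u v h
    rcases kadj_cases h with ⟨a, b, rfl, rfl, hab⟩ | ⟨a, z, rfl, rfl⟩ | ⟨a, z, rfl, rfl⟩
    · exact corona_adj_inr_inr.mpr ⟨rfl, hab⟩
    · exact (corona_adj_inl_inr.mpr rfl).symm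
    · exact corona_adj_inl_inr.mpr rfl

@[simp] lemma ιcHom_apply (i : α) (u : β ⊕ Fin 1) : ιcHom (G := G) (H := H) i u = ιc i u := rfl

lemma kadj_of_cadj {i : α} {u v : β ⊕ Fin 1} (h : (C).Adj (ιc i u) (ιc i v)) :
    (K).Adj u v := by
  match u, v with
  | inl a, inl b =>
    exact kadj_inl_inl.mpr (corona_adj_inr_inr.mp h).2
  | inl a, inr z => exact kadj_inl_inr a z
  | inr z, inl a => exact (kadj_inl_inr a z).symm
  | inr z, inr z' => exact absurd h (by simp)

/-- Reachability in the cone. -/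
lemma kreach (u v : β ⊕ Fin 1) : (K).Reachable u v := by
  have apex : ∀ a : β, (K).Reachable (inl a) (inr (0 : Fin 1)) :=
    fun a => ⟨(kadj_inl_inr a 0).toWalk⟩
  match u, v with
  | inl a, inl b => exact (apex a).trans (apex b).symm
  | inl a, inr z => exact (Subsingleton.elim (0 : Fin 1) z) ▸ apex a
  | inr z, inl a => exact ((Subsingleton.elim (0 : Fin 1) z) ▸ apex a).symm
  | inr z, inr z' => exact (Subsingleton.elim z z') ▸ Reachable.refl _

lemma two_le_dist_of_not_adj {V : Type*} {Γ : SimpleGraph V} {x y : V}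
    (hr : Γ.Reachable x y) (hne : x ≠ y) (hna : ¬ Γ.Adj x y) : 2 ≤ Γ.dist x y := by
  have h0 : Γ.dist x y ≠ 0 := fun h => hne (hr.dist_eq_zero_iff.mp h)
  have h1 : Γ.dist x y ≠ 1 := by
    intro h
    obtain ⟨p, hp⟩ := hr.exists_walk_length_eq_dist
    exact hna (Walk.adj_of_length_eq_one (hp.trans h))
  omega

lemma kdist_apex (a : β) (z : Fin 1) : (K).dist (inl a) (inr z) = 1 := by
  refine le_antisymm (SimpleGraph.dist_le (kadj_inl_inr a z).toWalk) ?_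
  have : (K).dist (inl a) (inr z) ≠ 0 := fun h =>
    (by simp : (inl a : β ⊕ Fin 1) ≠ inr z) ((kreach _ _).dist_eq_zero_iff.mp h)
  omega

lemma kdist_adj {a b : β} (hab : H.Adj a b) : (K).dist (inl a) (inl b) = 1 := by
  refine le_antisymm (SimpleGraph.dist_le (kadj_inl_inl.mpr hab).toWalk) ?_
  have : (K).dist (inl a) (inl b) ≠ 0 := fun h =>
    (by simpa using hab.ne : (inl a : β ⊕ Fin 1) ≠ inl b) ((kreach _ _).dist_eq_zero_iff.mp h)
  omega

lemma kdist_nadj {a b : β} (hne : a ≠ b) (hab : ¬ H.Adj a b) :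
    (K).dist (inl a) (inl b) = 2 := by
  refine le_antisymm ?_ (two_le_dist_of_not_adj (kreach _ _) (by simpa using hne)
    (fun h => hab (kadj_inl_inl.mp h)))
  exact SimpleGraph.dist_le (Walk.cons (kadj_inl_inr a 0) (kadj_inl_inr b 0).symm.toWalk)

/-- Distances agree between the cone and the unit in the corona. -/
lemma cdist_ιc (hG : G.Connected) (i : α) (u v : β ⊕ Fin 1) :
    (C).dist (ιc i u) (ιc i v) = (K).dist u v := by
  match u, v with
  | inl a, inl b =>
    by_cases hab : a = b
    · subst hab; simp [SimpleGraph.dist_self]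
    · by_cases hadj : H.Adj a b
      · rw [ιc_inl, ιc_inl, cdist_inr_inr_adj hadj, kdist_adj hadj]
      · rw [ιc_inl, ιc_inl, cdist_inr_inr_nadj hadj hab, kdist_nadj hab hadj]
  | inl a, inr z =>
    rw [ιc_inl, ιc_inr, cdist_inr_inl hG, SimpleGraph.dist_self, kdist_apex]
  | inr z, inl a =>
    rw [ιc_inl, ιc_inr, SimpleGraph.dist_comm, cdist_inr_inl hG, SimpleGraph.dist_self,
      SimpleGraph.dist_comm, kdist_apex]
  | inr z, inr z' =>
    rw [Subsingleton.elim z z', SimpleGraph.dist_self, SimpleGraph.dist_self]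

end Cone
section Convex
open SimpleGraph Sum Walk

variable {α β : Type*} {G : SimpleGraph α} {H : SimpleGraph β}

local notation "C" => corona G H
local notation "K" => joinGraph H (⊤ : SimpleGraph (Fin 1))
local notation "π" => cProj (α := α) (β := β)

lemma cdist_inr_inr_le_two (i : α) (a b : β) :
    (C).dist (inr (i, a)) (inr (i, b)) ≤ 2 := by
  have hadj1 : (C).Adj (inr (i, a)) (inl i) := (corona_adj_inl_inr.mpr rfl).symm
  have hadj2 : (C).Adj (inl i) (inr (i, b)) := corona_adj_inl_inr.mpr rfl
  exact SimpleGraph.dist_le (Walk.cons hadj1 hadj2.toWalk)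

/-- Geodesics between vertices of a unit stay inside the unit. -/
lemma support_in_unit (hG : G.Connected) {i : α} {x y : α ⊕ α × β}
    (hx : π x = i) (hy : π y = i) (p : (C).Walk x y) (hlen : p.length = (C).dist x y)
    {z : α ⊕ α × β} (hz : z ∈ p.support) : π z = i := by
  haveI : DecidableEq (α ⊕ α × β) := Classical.decEq _
  by_contra hzi
  have hsplit := dist_add_dist_le_length p hz
  rw [hlen] at hsplit
  have hd : ∀ m : α, m ≠ i → 1 ≤ G.dist i m ∧ 1 ≤ G.dist m i :=
    fun m hm => ⟨hG.pos_dist_of_ne (Ne.symm hm), hG.pos_dist_of_ne hm⟩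
  rcases eq_unit_cases hx with rfl | ⟨a, rfl⟩ <;>
    rcases eq_unit_cases hy with rfl | ⟨b, rfl⟩ <;>
    obtain (w | ⟨m, c⟩) := z
  · have hm : w ≠ i := by simpa using hzi
    obtain ⟨h1, h2⟩ := hd w hm
    simp only [cdist_inl_inl hG, SimpleGraph.dist_self] at hsplit
    omega
  · have hm : m ≠ i := by simpa using hzi
    obtain ⟨h1, h2⟩ := hd m hm
    simp only [cdist_inl_inl hG, cdist_inl_inr hG, cdist_inr_inl hG,
      SimpleGraph.dist_self] at hsplit
    omega
  · have hm : w ≠ i := by simpa using hzi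
    obtain ⟨h1, h2⟩ := hd w hm
    simp only [cdist_inl_inl hG, cdist_inl_inr hG, SimpleGraph.dist_self] at hsplit
    omega
  · have hm : m ≠ i := by simpa using hzi
    obtain ⟨h1, h2⟩ := hd m hm
    simp only [cdist_inl_inr hG, cdist_inr_inr_ne hG hm, SimpleGraph.dist_self] at hsplit
    omega
  · have hm : w ≠ i := by simpa using hzi
    obtain ⟨h1, h2⟩ := hd w hm
    simp only [cdist_inl_inl hG, cdist_inr_inl hG, SimpleGraph.dist_self] at hsplit
    omega
  · have hm : m ≠ i := by simpa using hzi
    obtain ⟨h1, h2⟩ := hd m hm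
    simp only [cdist_inr_inl hG, cdist_inr_inr_ne hG hm.symm, SimpleGraph.dist_self] at hsplit
    omega
  · have hm : w ≠ i := by simpa using hzi
    obtain ⟨h1, h2⟩ := hd w hm
    have htot := cdist_inr_inr_le_two (G := G) (H := H) i a b
    simp only [cdist_inr_inl hG, cdist_inl_inr hG, SimpleGraph.dist_self] at hsplit
    omega
  · have hm : m ≠ i := by simpa using hzi
    obtain ⟨h1, h2⟩ := hd m hm
    have htot := cdist_inr_inr_le_two (G := G) (H := H) i a b
    simp only [cdist_inr_inr_ne hG hm.symm, cdist_inr_inr_ne hG hm,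
      SimpleGraph.dist_self] at hsplit
    omega

/-- Geodesics between `G`-vertices stay among `G`-vertices. -/
lemma support_all_inl (hG : G.Connected) {u v : α}
    (p : (C).Walk (inl u) (inl v)) (hlen : p.length = (C).dist (inl u) (inl v))
    {z : α ⊕ α × β} (hz : z ∈ p.support) : ∃ w, z = inl w := by
  haveI : DecidableEq (α ⊕ α × β) := Classical.decEq _
  obtain (w | ⟨m, c⟩) := z
  · exact ⟨w, rfl⟩
  · exfalso
    have hsplit := dist_add_dist_le_length p hz
    rw [hlen, cdist_inl_inl hG, cdist_inl_inr hG, cdist_inr_inl hG] at hsplit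
    have htri : G.dist u v ≤ G.dist u m + G.dist m v := hG.dist_triangle
    omega

/-- Pull a corona walk inside a unit back to the cone. -/
lemma pullback_unit {i : α} : ∀ {x y : α ⊕ α × β} (p : (C).Walk x y)
    (_ : ∀ z ∈ p.support, π z = i) {u v : β ⊕ Fin 1} (_ : ιc i u = x) (_ : ιc i v = y),
    ∃ q : (K).Walk u v, q.length = p.length ∧ q.support.map (ιc i) = p.support := by
  intro x y p
  induction p with
  | nil =>
    intro hsup u v hu hv
    obtain rfl : u = v := ιc_injective i (by rw [hu, hv])
    exact ⟨Walk.nil, rfl, by simp [hu]⟩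
  | cons h r ih =>
    rename_i x' z y'
    intro hsup u v hu hv
    have hzu : π z = i := hsup z (by simp)
    have hsup' : ∀ w ∈ r.support, π w = i := fun w hw => hsup w (by simp [hw])
    obtain ⟨q, hq1, hq2⟩ := ih hsup' (u := invc z) (v := v) (ιc_invc hzu) hv
    have hadj : (K).Adj u (invc z) := kadj_of_cadj (by rw [ιc_invc hzu, hu]; exact h)
    refine ⟨Walk.cons hadj q, by simpa using hq1, ?_⟩
    rw [Walk.support_cons, Walk.support_cons, List.map_cons, hq2, hu]

/-- Pull a corona walk among `G`-vertices back to `G`. -/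
lemma pullback_G : ∀ {x y : α ⊕ α × β} (p : (C).Walk x y)
    (_ : ∀ z ∈ p.support, ∃ w, z = inl w) {u v : α} (_ : inl u = x) (_ : inl v = y),
    ∃ q : G.Walk u v, q.length = p.length ∧ q.support.map inl = p.support := by
  intro x y p
  induction p with
  | nil =>
    intro hsup u v hu hv
    obtain rfl : u = v := by
      have := hu.trans hv.symm
      simpa using this
    exact ⟨Walk.nil, rfl, by simp [hu]⟩
  | cons h r ih =>
    rename_i x' z y'
    intro hsup u v hu hv
    obtain ⟨w, rfl⟩ := hsup z (by simp)
    have hsup' : ∀ w' ∈ r.support, ∃ w'', w' = inl w'' := fun w' hw' => hsup w' (by simp [hw'])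
    obtain ⟨q, hq1, hq2⟩ := ih hsup' (u := w) (v := v) rfl hv
    have hadj : G.Adj u w := corona_adj_inl_inl.mp (hu ▸ h)
    exact ⟨Walk.cons hadj q, by simpa using hq1,
      by rw [Walk.support_cons, Walk.support_cons, List.map_cons, hq2, hu]⟩

end Convex
section GPTransfer
open SimpleGraph Sum Walk

variable {α β : Type*} {G : SimpleGraph α} {H : SimpleGraph β}

local notation "C" => corona G H
local notation "K" => joinGraph H (⊤ : SimpleGraph (Fin 1))
local notation "π" => cProj (α := α) (β := β)

lemma gp_metric (hG : G.Connected) {F : Set α} (hF : IsGPSet G F) {u v z : α}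
    (hu : u ∈ F) (hv : v ∈ F) (hz : z ∈ F)
    (h : G.dist u z + G.dist z v ≤ G.dist u v) : z = u ∨ z = v := by
  haveI := Classical.decEq α
  obtain ⟨p1, hp1⟩ := hG.exists_walk_length_eq_dist u z
  obtain ⟨p2, hp2⟩ := hG.exists_walk_length_eq_dist z v
  have hlen : (p1.append p2).length = G.dist u v :=
    le_antisymm (by rw [Walk.length_append, hp1, hp2]; exact h) (SimpleGraph.dist_le _)
  have hpath := (p1.append p2).isPath_of_length_eq_dist hlen
  have hzmem : z ∈ (p1.append p2).support :=
    (Walk.mem_support_append_iff p1 p2).mpr (Or.inl p1.end_mem_support)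
  exact hF u hu v hv _ hpath hlen z hzmem hz

lemma GPup_G (hG : G.Connected) {F : Set α} (hF : IsGPSet G F) :
    IsGPSet (C) (inl '' F) := by
  haveI := Classical.decEq α
  rintro x ⟨u, hu, rfl⟩ y ⟨v, hv, rfl⟩ p hp hlen w hw hwS
  obtain ⟨m, rfl⟩ := support_all_inl hG p hlen hw
  obtain ⟨m', hm', hm'eq⟩ := hwS
  obtain rfl : m = m' := by simpa using hm'eq.symm
  obtain ⟨q, hq1, hq2⟩ := pullback_G p (fun z hz => support_all_inl hG p hlen hz) rfl rfl
  have hqlen : q.length = G.dist u v := by rw [hq1, hlen, cdist_inl_inl hG]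
  have hqpath : q.IsPath := q.isPath_of_length_eq_dist hqlen
  have hmem : (inl m : α ⊕ α × β) ∈ q.support.map inl := hq2 ▸ hw
  have hmem' : m ∈ q.support := by simpa using hmem
  rcases hF u hu v hv q hqpath hqlen m hmem' hm' with h | h
  · left; rw [h]
  · right; rw [h]

lemma cdist_inr_inr_pos {i : α} {a b : β} (hne : a ≠ b) :
    1 ≤ (C).dist (inr (i, a)) (inr (i, b)) := by
  have hadj1 : (C).Adj (inr (i, a)) (inl i) := (corona_adj_inl_inr.mpr rfl).symm
  have hadj2 : (C).Adj (inl i) (inr (i, b)) := corona_adj_inl_inr.mpr rfl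
  have hr : (C).Reachable (inr (i, a)) (inr (i, b)) := ⟨Walk.cons hadj1 hadj2.toWalk⟩
  have h0 : (C).dist (inr (i, a)) (inr (i, b)) ≠ 0 := fun h =>
    (by simp [hne] : (inr (i, a) : α ⊕ α × β) ≠ inr (i, b)) (hr.dist_eq_zero_iff.mp h)
  omega

lemma GP_typeB (hG : G.Connected) {F : Set α} (hF : IsGPSet G F) {i : α} (hi : i ∈ F) (a : β) :
    IsGPSet (C) (insert (inr (i, a)) (inl '' (F \ {i}))) := by
  haveI := Classical.decEq (α ⊕ α × β)
  have hFsub : F \ {i} ⊆ F := Set.diff_subset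
  intro x hx y hy p hp hlen w hw hwS
  rcases hwS with rfl | ⟨m, hm, rfl⟩
  · -- w = inr (i, a)
    rcases hx with rfl | ⟨u, hu, rfl⟩
    · exact Or.inl rfl
    · rcases hy with rfl | ⟨v, hv, rfl⟩
      · exact Or.inr rfl
      · exfalso
        obtain ⟨m, hmeq⟩ := support_all_inl hG p hlen hw
        exact absurd hmeq (by simp)
  · -- w = inl m, m ∈ F \ {i}
    have hsplit := dist_add_dist_le_length p hw
    rw [hlen] at hsplit
    rcases hx with rfl | ⟨u, hu, rfl⟩
    · rcases hy with rfl | ⟨v, hv, rfl⟩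
      · -- x = y = inr (i,a) : length-0 walk
        rw [SimpleGraph.dist_self] at hlen
        cases p with
        | nil => simp at hw
        | cons h q => simp at hlen
      · -- x = inr (i, a), y = inl v
        rw [cdist_inr_inl hG, cdist_inr_inl hG, cdist_inl_inl hG] at hsplit
        rcases gp_metric hG hF hi (hFsub hv) (hFsub hm)
          (by omega : G.dist i m + G.dist m v ≤ G.dist i v) with h | h
        · exact absurd h (by simpa using hm.2)
        · exact Or.inr (by rw [h])
    · rcases hy with rfl | ⟨v, hv, rfl⟩
      · -- x = inl u, y = inr (i, a)
        rw [cdist_inl_inr hG, cdist_inl_inl hG, cdist_inl_inr hG] at hsplit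
        rcases gp_metric hG hF (hFsub hu) hi (hFsub hm)
          (by omega : G.dist u m + G.dist m i ≤ G.dist u i) with h | h
        · exact Or.inl (by rw [h])
        · exact absurd h (by simpa using hm.2)
      · -- both inl
        rw [cdist_inl_inl hG, cdist_inl_inl hG, cdist_inl_inl hG] at hsplit
        rcases gp_metric hG hF (hFsub hu) (hFsub hv) (hFsub hm) hsplit with h | h
        · exact Or.inl (by rw [h])
        · exact Or.inr (by rw [h])

lemma GPdown_unit (hG : G.Connected) {S : Set (α ⊕ α × β)} (hS : IsGPSet (C) S) (i : α) :
    IsGPSet (K) {w | ιc i w ∈ S} := by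
  intro u hu v hv q hq hqlen w hw hwS
  have hplen : (q.map (ιcHom (G := G) (H := H) i)).length = (C).dist (ιc i u) (ιc i v) := by
    rw [Walk.length_map, hqlen, cdist_ιc hG]
  have hppath : (q.map (ιcHom (G := G) (H := H) i)).IsPath :=
    q.map_isPath_of_injective (ιc_injective i) hq
  have hwmem : ιc i w ∈ (q.map (ιcHom (G := G) (H := H) i)).support := by
    rw [Walk.support_map]
    exact List.mem_map_of_mem hw
  rcases hS _ hu _ hv _ hppath hplen _ hwmem hwS with h | h
  · left; exact ιc_injective i h
  · right; exact ιc_injective i h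

lemma GPup_unit (hG : G.Connected) {T : Set (β ⊕ Fin 1)} (hT : IsGPSet (K) T) (i : α) :
    IsGPSet (C) (ιc i '' T) := by
  rintro x ⟨u, hu, rfl⟩ y ⟨v, hv, rfl⟩ p hp hlen w hw hwS
  have hsup : ∀ z ∈ p.support, π z = i := fun z hz =>
    support_in_unit hG (cProj_ιc i u) (cProj_ιc i v) p hlen hz
  obtain ⟨q, hq1, hq2⟩ := pullback_unit p hsup rfl rfl
  have hqlen : q.length = (K).dist u v := by rw [hq1, hlen, cdist_ιc hG]
  have hqpath : q.IsPath := q.isPath_of_length_eq_dist hqlen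
  have hw' : w ∈ q.support.map (ιc i) := hq2 ▸ hw
  obtain ⟨ws, hws, rfl⟩ := List.mem_map.mp hw'
  obtain ⟨wt, hwtT, hwteq⟩ := hwS
  obtain rfl : ws = wt := (ιc_injective i hwteq).symm
  rcases hT u hu v hv q hqpath hqlen ws hws hwtT with h | h
  · left; rw [h]
  · right; rw [h]

lemma GP_typeD (hG : G.Connected) {T₀ : Set β}
    (hT : IsGPSet (K) (inl '' T₀)) {i : α} {x : α ⊕ α × β} (hx : π x ≠ i) :
    IsGPSet (C) (insert x ((fun b => (inr (i, b) : α ⊕ α × β)) '' T₀)) := by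
  haveI := Classical.decEq (α ⊕ α × β)
  intro u' hu' v' hv' p hp hlen w hw hwS
  rcases hu' with hu1 | ⟨a, ha, rfl⟩
  · obtain rfl := hu1.symm
    rcases hv' with hv1 | ⟨b, hb, rfl⟩
    · obtain rfl := hv1.symm
      -- u' = v' = x
      rw [SimpleGraph.dist_self] at hlen
      cases p with
      | nil =>
        simp only [Walk.support_nil, List.mem_singleton] at hw
        exact Or.inl hw
      | cons h q => simp at hlen
    · -- u' = x, v' = inr (i, b)
      rcases hwS with rfl | ⟨c, hc, rfl⟩
      · exact Or.inl rfl
      · by_cases hcb : c = b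
        · exact Or.inr (by rw [hcb])
        · exfalso
          have hsplit := dist_add_dist_le_length p hw
          rw [hlen] at hsplit
          have hd2 : 1 ≤ (C).dist (inr (i, c)) (inr (i, b)) := cdist_inr_inr_pos hcb
          rcases eq_unit_cases (rfl : π x = π x) with hxx | ⟨d, hxx⟩
          · rw [hxx] at hsplit
            simp only [cdist_inl_inr hG] at hsplit
            omega
          · have hne : π x ≠ i := hx
            rw [hxx] at hsplit
            simp only [cdist_inr_inr_ne hG hne] at hsplit
            omega
  · rcases hv' with hv1 | ⟨b, hb, rfl⟩
    · obtain rfl := hv1.symm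
      -- u' = inr (i, a), v' = x
      rcases hwS with rfl | ⟨c, hc, rfl⟩
      · exact Or.inr rfl
      · by_cases hca : c = a
        · exact Or.inl (by rw [hca])
        · exfalso
          have hsplit := dist_add_dist_le_length p hw
          rw [hlen] at hsplit
          have hd1 : 1 ≤ (C).dist (inr (i, a)) (inr (i, c)) := cdist_inr_inr_pos (Ne.symm hca)
          rcases eq_unit_cases (rfl : π x = π x) with hxx | ⟨d, hxx⟩
          · rw [hxx] at hsplit
            simp only [cdist_inr_inl hG] at hsplit
            omega
          · have hne : π x ≠ i := hx
            have hne' : i ≠ π x := Ne.symm hne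
            rw [hxx] at hsplit
            simp only [cdist_inr_inr_ne hG hne'] at hsplit
            omega
    · -- both in the copy: unit argument
      have hsup : ∀ z ∈ p.support, π z = i := fun z hz =>
        support_in_unit hG (by simp) (by simp) p hlen hz
      obtain ⟨q, hq1, hq2⟩ := pullback_unit p hsup (u := inl a) (v := inl b) rfl rfl
      have hqlen : q.length = (K).dist (inl a) (inl b) := by
        rw [hq1, hlen, ← cdist_ιc hG i (inl a) (inl b)]; rfl
      have hqpath : q.IsPath := q.isPath_of_length_eq_dist hqlen
      have hwu : π w = i := hsup w hw
      rcases hwS with rfl | ⟨c, hc, rfl⟩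
      · exact absurd hwu hx
      · have hw' : (inr (i, c) : α ⊕ α × β) ∈ q.support.map (ιc i) := hq2 ▸ hw
        obtain ⟨ws, hws, hwseq⟩ := List.mem_map.mp hw'
        obtain rfl : (inl c : β ⊕ Fin 1) = ws := ιc_injective i (by rw [hwseq]; rfl)
        rcases hT (inl a) ⟨a, ha, rfl⟩ (inl b) ⟨b, hb, rfl⟩ q hqpath hqlen
          (inl c) hws ⟨c, hc, rfl⟩ with h | h
        · left
          obtain rfl : c = a := by simpa using h
          rfl
        · right
          obtain rfl : c = b := by simpa using h
          rfl

lemma apex_blocked (hG : G.Connected) {S : Set (α ⊕ α × β)} (hS : IsGPSet (C) S)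
    {i : α} (hapex : inl i ∈ S) {a : β} (ha : inr (i, a) ∈ S)
    {x : α ⊕ α × β} (hx : x ∈ S) (hxu : π x ≠ i) : False := by
  haveI := Classical.decEq (α ⊕ α × β)
  have hadj : (C).Adj (inl i) (inr (i, a)) := corona_adj_inl_inr.mpr rfl
  obtain ⟨w₀, hw₀⟩ : ∃ w₀ : (C).Walk x (inr (i, a)), w₀.length = (C).dist x (inr (i, a)) := by
    obtain (z | ⟨j, b⟩) := x
    · obtain ⟨p, hp⟩ := exists_lift_walk (H := H) hG z i
      exact ⟨p.concat hadj, by rw [Walk.length_concat, hp, cdist_inl_inr hG]⟩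
    · obtain ⟨p, hp⟩ := exists_lift_walk (H := H) hG j i
      have hadj0 : (C).Adj (inr (j, b)) (inl j) := (corona_adj_inl_inr.mpr rfl).symm
      refine ⟨Walk.cons hadj0 (p.concat hadj), ?_⟩
      have hji : j ≠ i := hxu
      rw [Walk.length_cons, Walk.length_concat, hp, cdist_inr_inr_ne hG hji]
  have hq : w₀.bypass.length = (C).dist x (inr (i, a)) :=
    le_antisymm (le_trans w₀.length_bypass_le (le_of_eq hw₀)) (SimpleGraph.dist_le _)
  have hmem : (inl i : α ⊕ α × β) ∈ w₀.bypass.support :=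
    inl_mem_support i w₀.bypass hxu rfl (by simp)
  rcases hS x hx (inr (i, a)) ha w₀.bypass w₀.bypass_isPath hq (inl i) hmem hapex with h | h
  · rw [← h] at hxu
    exact hxu rfl
  · simp at h

end GPTransfer
section LowerG
open SimpleGraph Sum Walk

variable {α β : Type*} [Finite α] [Finite β] {G : SimpleGraph α} {H : SimpleGraph β}

local notation "C" => corona G H
local notation "K" => joinGraph H (⊤ : SimpleGraph (Fin 1))
local notation "π" => cProj (α := α) (β := β)

lemma bounce (hG : G.Connected) {F : Set α} (hF : IsGPSet G F) {i : α} (hi : i ∈ F) (a : β) :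
    Reach' (C) (inl '' F) (inl '' F) (insert (inr (i, a)) (inl '' F)) := by
  have hAB : (insert (inr (i, a)) (inl '' (F \ {i})) : Set (α ⊕ α × β)) =
      insert (inr (i, a)) ((inl '' F) \ {inl i}) := by
    rw [Set.image_diff Sum.inl_injective, Set.image_singleton]
  have m1 : LegalMove (C) (inl '' F) (insert (inr (i, a)) (inl '' (F \ {i}))) := by
    refine ⟨GPup_G hG hF, inl i, ⟨i, hi, rfl⟩, inr (i, a), ?_,
      corona_adj_inl_inr.mpr rfl, hAB, GP_typeB hG hF hi a⟩
    rintro ⟨u, hu, he⟩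
    simp at he
  refine ((Reach'.single m1).trans (Reach'.single m1.symm)).mono ?_
  intro z hz
  rcases hz with rfl | hz
  · exact Or.inl (Or.inr (Set.mem_insert _ _))
  · exact Or.inl (Or.inl hz)

lemma mobG_image_mobile (hG : G.Connected) {S : Set α} (hmob : IsMobileGPSet G S) :
    IsMobileGPSet (C) (inl '' S) := by
  classical
  obtain ⟨hGP, k, f, h0, hmv, hcov⟩ := hmob
  have hgp : ∀ t ≤ k, IsGPSet G (f t) := seq_gp (h0 ▸ hGP) hmv
  set fC : ℕ → Set (α ⊕ α × β) := fun t => inl '' f t with hfC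
  have hmvC : ∀ t < k, LegalMove (C) (fC t) (fC (t + 1)) := fun t ht =>
    legal_image (φ := liftG G H) Sum.inl_injective (fun hU => GPup_G hG hU) (hmv t ht)
  have hRseg : ∀ t ≤ k, Reach' (C) (fC t) (fC k) (⋃ s ∈ Set.Icc t k, fC s) :=
    fun t ht => reach_seq hmvC (k - t) t (by omega)
  have hloop : ∀ (i : α) (a : β), (∃ t ≤ k, i ∈ f t) →
      Reach' (C) (fC k) (fC k) {(inr (i, a) : α ⊕ α × β)} := by
    rintro i a ⟨t, htk, hit⟩
    have hb : Reach' (C) (fC t) (fC t) (insert (inr (i, a)) (fC t)) :=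
      bounce hG (hgp t htk) hit a
    refine ((hRseg t htk).reverse.trans (hb.trans (hRseg t htk))).mono ?_
    intro z hz
    rw [Set.mem_singleton_iff] at hz
    subst hz
    exact Or.inr (Or.inl (Set.mem_insert _ _))
  haveI := Fintype.ofFinite α
  haveI := Fintype.ofFinite β
  have hloops : ∀ s : Finset (α × β), Reach' (C) (fC k) (fC k)
      {z | ∃ p ∈ s, z = inr p} := by
    intro s
    induction s using Finset.induction_on with
    | empty =>
      refine (Reach'.refl _).mono ?_
      rintro z ⟨q, hq, rfl⟩
      exact absurd hq (by simp)
    | @insert p s hps ih =>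
      have hex : ∃ t ≤ k, p.1 ∈ f t := by
        have hp : p.1 ∈ (⋃ t ∈ Set.Iic k, f t) := hcov ▸ Set.mem_univ _
        simpa [Set.mem_iUnion] using hp
      refine ((hloop p.1 p.2 hex).trans ih).mono ?_
      rintro z ⟨q, hq, rfl⟩
      rcases Finset.mem_insert.mp hq with rfl | hq'
      · exact Or.inl rfl
      · exact Or.inr ⟨q, hq', rfl⟩
  have htotal := (hRseg 0 (Nat.zero_le k)).trans (hloops Finset.univ)
  have hstart : (inl '' S : Set (α ⊕ α × β)) = fC 0 := by rw [hfC]; simp [h0]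
  rw [hstart]
  refine Reach'.isMobileGPSet (T := fC k) (GPup_G hG (hgp 0 (Nat.zero_le k))) ?_
  refine htotal.mono ?_
  intro z _
  obtain (u | p) := z
  · have hu : u ∈ (⋃ t ∈ Set.Iic k, f t) := hcov ▸ Set.mem_univ _
    simp only [Set.mem_iUnion, Set.mem_Iic] at hu
    obtain ⟨t, htk, hu⟩ := hu
    refine Or.inl ?_
    simp only [Set.mem_iUnion, Set.mem_Icc]
    exact ⟨t, ⟨Nat.zero_le _, htk⟩, ⟨u, hu, rfl⟩⟩
  · exact Or.inr ⟨p, Finset.mem_univ _, rfl⟩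

end LowerG
section LowerK
open SimpleGraph Sum Walk

variable {α β : Type*} [Finite α] [Finite β] {G : SimpleGraph α} {H : SimpleGraph β}

local notation "C" => corona G H
local notation "K" => joinGraph H (⊤ : SimpleGraph (Fin 1))
local notation "π" => cProj (α := α) (β := β)

lemma exists_neighbor (hG : G.Connected) {i j : α} (hij : j ≠ i) : ∃ j₀, G.Adj i j₀ := by
  obtain ⟨p⟩ := hG.preconnected i j
  cases p with
  | nil => exact absurd rfl hij
  | cons h q => exact ⟨_, h⟩

lemma exists_covering_walk (hG : G.Connected) (s : α) [Finite α] :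
    ∃ (y : α) (p : G.Walk s y), ∀ m : α, m ∈ p.support := by
  haveI := Fintype.ofFinite α
  classical
  have key : ∀ fs : Finset α, ∃ (y : α) (p : G.Walk s y), ∀ m ∈ fs, m ∈ p.support := by
    intro fs
    induction fs using Finset.induction_on with
    | empty => exact ⟨s, Walk.nil, by simp⟩
    | @insert x fs hx ih =>
      obtain ⟨y, p, hp⟩ := ih
      obtain ⟨q⟩ := hG.preconnected y x
      refine ⟨x, p.append q, ?_⟩
      intro m hm
      rcases Finset.mem_insert.mp hm with rfl | hm'
      · exact Walk.subset_support_append_right _ _ q.end_mem_support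
      · exact Walk.subset_support_append_left _ _ (hp m hm')
  obtain ⟨y, p, hp⟩ := key Finset.univ
  exact ⟨y, p, fun m => hp m (Finset.mem_univ m)⟩

lemma mobK_image_mobile (hG : G.Connected) {T : Set (β ⊕ Fin 1)}
    (hmob : IsMobileGPSet (K) T) (i : α) : IsMobileGPSet (C) (ιc i '' T) := by
  classical
  haveI := Fintype.ofFinite α
  haveI := Fintype.ofFinite β
  obtain ⟨hGP, l, g, h0, hmv, hcov⟩ := hmob
  have hgp : ∀ t ≤ l, IsGPSet (K) (g t) := seq_gp (h0 ▸ hGP) hmv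
  set fC : ℕ → Set (α ⊕ α × β) := fun t => ιc i '' g t with hfC
  have hmvC : ∀ t < l, LegalMove (C) (fC t) (fC (t + 1)) := fun t ht =>
    legal_image (φ := ιcHom (G := G) (H := H) i) (ιc_injective i)
      (fun hU => GPup_unit hG hU i) (hmv t ht)
  have hRseg : ∀ t ≤ l, Reach' (C) (fC t) (fC l) (⋃ s ∈ Set.Icc t l, fC s) :=
    fun t ht => reach_seq hmvC (l - t) t (by omega)
  have hR0 := hRseg 0 (Nat.zero_le l)
  have hunit : ∀ z : α ⊕ α × β, π z = i → z ∈ (⋃ s ∈ Set.Icc 0 l, fC s) := by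
    intro z hz
    have hm : invc z ∈ (⋃ t ∈ Set.Iic l, g t) := hcov ▸ Set.mem_univ _
    simp only [Set.mem_iUnion, Set.mem_Iic] at hm
    obtain ⟨t, htl, hm⟩ := hm
    simp only [Set.mem_iUnion, Set.mem_Icc]
    exact ⟨t, ⟨Nat.zero_le _, htl⟩, ⟨invc z, hm, ιc_invc hz⟩⟩
  have hstartGP : IsGPSet (C) (ιc i '' T) := GPup_unit hG hGP i
  have hstart : (ιc i '' T : Set (α ⊕ α × β)) = fC 0 := by rw [hfC]; simp [h0]
  by_cases hall : ∀ z : α ⊕ α × β, π z = i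
  · rw [hstart]
    refine Reach'.isMobileGPSet (T := fC l) (hstart ▸ hstartGP) (hR0.mono ?_)
    exact fun z _ => hunit z (hall z)
  · push_neg at hall
    obtain ⟨z₀, hz₀⟩ := hall
    obtain ⟨j₀, hadj₀⟩ := exists_neighbor hG (i := i) (j := π z₀) hz₀
    have hmapex : (inr 0 : β ⊕ Fin 1) ∈ (⋃ t ∈ Set.Iic l, g t) := hcov ▸ Set.mem_univ _
    simp only [Set.mem_iUnion, Set.mem_Iic] at hmapex
    obtain ⟨ts, htsl, hapex⟩ := hmapex
    set T₀ : Set β := {b | (inl b : β ⊕ Fin 1) ∈ g ts} with hT₀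
    set E : Set (α ⊕ α × β) := (fun b => (inr (i, b) : α ⊕ α × β)) '' T₀ with hE
    have hTsub : (inl '' T₀ : Set (β ⊕ Fin 1)) ⊆ g ts := by
      rintro z ⟨b, hb, rfl⟩
      exact hb
    have hT0gp : IsGPSet (K) (inl '' T₀) := (hgp ts htsl).subset hTsub
    have hTagp : IsGPSet (K) (insert (inr 0) (inl '' T₀)) :=
      (hgp ts htsl).subset (Set.insert_subset hapex hTsub)
    have hft : fC ts = insert (inl i) E := by
      ext z
      constructor
      · rintro ⟨u, hu, rfl⟩
        obtain (b | zz) := u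
        · exact Or.inr ⟨b, hu, rfl⟩
        · left
          have : zz = 0 := Subsingleton.elim _ _
          simp [ιc]
      · rintro (rfl | ⟨b, hb, rfl⟩)
        · exact ⟨inr 0, hapex, rfl⟩
        · exact ⟨inl b, hb, rfl⟩
    set ok : (α ⊕ α × β) → Prop := fun x => π x ≠ i ∨ x = inl i with hok
    have hokinl : ∀ m, ok (inl m) := by
      intro m
      by_cases hmi : m = i
      · exact Or.inr (by rw [hmi])
      · exact Or.inl hmi
    have hnotE : ∀ x, ok x → x ∉ E := by
      rintro x hx ⟨b, hb, rfl⟩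
      rcases hx with h | h
      · exact h rfl
      · simp at h
    have hEgp : ∀ x, ok x → IsGPSet (C) (insert x E) := by
      intro x hx
      rcases hx with h | rfl
      · exact GP_typeD hG hT0gp h
      · have himg : (insert (inl i) E : Set (α ⊕ α × β)) =
            ιc i '' (insert (inr 0) (inl '' T₀)) := by
          rw [Set.image_insert_eq]
          congr 1
          ext z
          constructor
          · rintro ⟨b, hb, rfl⟩
            exact ⟨inl b, ⟨b, hb, rfl⟩, rfl⟩
          · rintro ⟨u, ⟨b, hb, rfl⟩, rfl⟩
            exact ⟨b, hb, rfl⟩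
        rw [himg]
        exact GPup_unit hG hTagp i
    have hlegal : ∀ x x', ok x → ok x' → (C).Adj x x' →
        LegalMove (C) (insert x E) (insert x' E) := by
      intro x x' hx hx' hadj
      refine ⟨hEgp x hx, x, Set.mem_insert _ _, x', ?_, hadj, ?_, hEgp x' hx'⟩
      · rintro (rfl | hmem)
        · exact hadj.ne rfl
        · exact hnotE x' hx' hmem
      · rw [Set.insert_diff_self_of_notMem (hnotE x hx)]
    have hdipAll : ∀ m, Reach' (C) (insert (inl m) E) (insert (inl m) E)
        ((insert (inl m) E) ∪ {z | m ≠ i ∧ ∃ b, z = inr (m, b)}) := by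
      intro m
      by_cases hmi : m = i
      · refine (Reach'.refl _).mono ?_
        rintro z (hz | ⟨hne, _⟩)
        · exact hz
        · exact absurd hmi hne
      · have key : ∀ s : Finset β, Reach' (C) (insert (inl m) E) (insert (inl m) E)
            ((insert (inl m) E) ∪ {z | ∃ b ∈ s, z = inr (m, b)}) := by
          intro s
          induction s using Finset.induction_on with
          | empty =>
            refine (Reach'.refl _).mono ?_
            rintro z (hz | ⟨b, hb, rfl⟩)
            · exact hz
            · exact absurd hb (by simp)
          | @insert b s hbs ih =>
            have mv : LegalMove (C) (insert (inl m) E) (insert (inr (m, b)) E) :=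
              hlegal _ _ (hokinl m) (Or.inl (by simpa using hmi))
                (corona_adj_inl_inr.mpr rfl)
            refine (((Reach'.single mv).trans (Reach'.single mv.symm)).trans ih).mono ?_
            rintro z (hz | ⟨b', hb', rfl⟩)
            · exact Or.inr (Or.inl hz)
            · rcases Finset.mem_insert.mp hb' with rfl | hb''
              · exact Or.inl (Or.inl (Or.inr (Set.mem_insert _ _)))
              · exact Or.inr (Or.inr ⟨b', hb'', rfl⟩)
        refine (key Finset.univ).mono ?_
        rintro z (hz | ⟨hne, b, rfl⟩)
        · exact Or.inl hz
        · exact Or.inr ⟨b, Finset.mem_univ b, rfl⟩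
    have htrav : ∀ {s y : α} (p : G.Walk s y),
        Reach' (C) (insert (inl s) E) (insert (inl y) E)
        ({z | ∃ m ∈ p.support, z = inl m ∨ (m ≠ i ∧ ∃ b, z = inr (m, b))}) := by
      intro s y p
      induction p with
      | nil =>
        rename_i u
        refine (hdipAll u).mono ?_
        rintro z ⟨m, hm, h | ⟨hne, b, rfl⟩⟩
        · obtain rfl : m = u := by simpa using hm
          exact Or.inl (h ▸ Set.mem_insert _ _)
        · obtain rfl : m = u := by simpa using hm
          exact Or.inr ⟨hne, b, rfl⟩
      | cons h q ih =>
        rename_i s m y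
        have step : LegalMove (C) (insert (inl s) E) (insert (inl m) E) :=
          hlegal _ _ (hokinl s) (hokinl m) (corona_adj_inl_inl.mpr h)
        refine ((hdipAll s).trans ((Reach'.single step).trans ih)).mono ?_
        rintro z ⟨m', hm', hz⟩
        rw [Walk.support_cons, List.mem_cons] at hm'
        rcases hm' with rfl | hm''
        · rcases hz with rfl | ⟨hne, b, rfl⟩
          · exact Or.inl (Or.inl (Set.mem_insert _ _))
          · exact Or.inl (Or.inr ⟨hne, b, rfl⟩)
        · exact Or.inr (Or.inr ⟨m', hm'', hz⟩)
    obtain ⟨y, p, hp⟩ := exists_covering_walk hG j₀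
    have hmoveout : LegalMove (C) (fC ts) (insert (inl j₀) E) := by
      rw [hft]
      exact hlegal _ _ (hokinl i) (hokinl j₀) (corona_adj_inl_inl.mpr hadj₀)
    have htotal := (hR0.trans ((hRseg ts htsl).reverse)).trans
      ((Reach'.single hmoveout).trans (htrav p))
    rw [hstart]
    refine Reach'.isMobileGPSet (T := insert (inl y) E) (hstart ▸ hstartGP) (htotal.mono ?_)
    intro z _
    by_cases hz : π z = i
    · exact Or.inl (Or.inl (hunit z hz))
    · refine Or.inr (Or.inr ?_)
      obtain (m | ⟨m, c⟩) := z
      · exact ⟨m, hp m, Or.inl rfl⟩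
      · exact ⟨m, hp m, Or.inr ⟨hz, c, rfl⟩⟩
end LowerK
section Upper
open SimpleGraph Sum Walk

variable {α β : Type*} [Finite α] [Finite β] {G : SimpleGraph α} {H : SimpleGraph β}

local notation "C" => corona G H
local notation "K" => joinGraph H (⊤ : SimpleGraph (Fin 1))
local notation "π" => cProj (α := α) (β := β)

lemma gp_ge_of_gpset {V : Type*} [Finite V] {Γ : SimpleGraph V} {S : Set V}
    (h : IsGPSet Γ S) : S.ncard ≤ gp Γ := by
  apply le_csSup
  · refine ⟨Nat.card V, ?_⟩
    rintro n ⟨S', _, rfl⟩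
    exact Set.ncard_univ V ▸ Set.ncard_le_ncard (Set.subset_univ S') (Set.toFinite _)
  · exact ⟨S, h, rfl⟩

lemma unit_count (hG : G.Connected) {S : Set (α ⊕ α × β)} (hS : IsGPSet (C) S) (i : α) :
    (S ∩ {z | π z = i}).ncard ≤ gp (K) := by
  have heq : S ∩ {z | π z = i} = ιc i '' {w | ιc i w ∈ S} := by
    ext z
    constructor
    · rintro ⟨hzS, hzi⟩
      exact ⟨invc z, by rw [Set.mem_setOf_eq, ιc_invc hzi]; exact hzS, ιc_invc hzi⟩
    · rintro ⟨w, hw, rfl⟩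
      exact ⟨hw, cProj_ιc i w⟩
  rw [heq, Set.ncard_image_of_injective _ (ιc_injective i)]
  exact gp_ge_of_gpset (GPdown_unit hG hS i)

lemma outside_robot (hG : G.Connected) {S : Set (α ⊕ α × β)} (hS : IsGPSet (C) S)
    (hcard : gp (K) < S.ncard) (i : α) : ∃ x ∈ S, π x ≠ i := by
  by_contra h
  push_neg at h
  have heq : S ∩ {z | π z = i} = S := Set.inter_eq_self_of_subset_left h
  have hle := unit_count hG hS i
  rw [heq] at hle
  omega

lemma no_apex (hG : G.Connected) {S : Set (α ⊕ α × β)} (hS : IsGPSet (C) S)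
    (hcard : gp (K) < S.ncard) {i : α} {a : β}
    (h1 : inl i ∈ S) (h2 : inr (i, a) ∈ S) : False := by
  obtain ⟨x, hx, hxi⟩ := outside_robot hG hS hcard i
  exact apex_blocked hG hS h1 h2 hx hxi

lemma two_in_copy_preserved (hG : G.Connected) {S T : Set (α ⊕ α × β)}
    (h : LegalMove (C) S T) (hcard : gp (K) < S.ncard) {i : α}
    (h2 : ∃ a b, a ≠ b ∧ inr (i, a) ∈ S ∧ inr (i, b) ∈ S) :
    ∃ a b, a ≠ b ∧ inr (i, a) ∈ T ∧ inr (i, b) ∈ T := by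
  have hTc : T.ncard = S.ncard := legal_ncard h
  obtain ⟨a, b, hab, ha, hb⟩ := h2
  obtain ⟨hS, u, hu, v, hv, hadj, rfl, hT⟩ := h
  by_cases hua : u = inr (i, a)
  · subst hua
    rcases corona_adj_cases hadj with ⟨u', v', he, _, _⟩ | ⟨i', a', b', he, he', _⟩ |
      ⟨i', a', he, _⟩ | ⟨i', a', he, he'⟩
    · exact absurd he (by simp)
    · -- v = inr (i, b') in the same copy
      have hii : i = i' ∧ a = a' := by
        have := he
        simp only [Sum.inr.injEq, Prod.mk.injEq] at this
        exact this
      obtain ⟨rfl, rfl⟩ := hii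
      refine ⟨b', b, ?_, he' ▸ Set.mem_insert _ _, Or.inr ⟨hb, ?_⟩⟩
      · rintro rfl
        exact hv (he' ▸ hb)
      · intro hc
        rw [Set.mem_singleton_iff] at hc
        have hcc : b = a := by simpa using hc
        exact hab hcc.symm
    · exact absurd he (by simp)
    · -- v = inl i' = inl i : apex occupied, contradiction
      have hii : i = i' ∧ a = a' := by
        have := he
        simp only [Sum.inr.injEq, Prod.mk.injEq] at this
        exact this
      obtain ⟨rfl, rfl⟩ := hii
      exfalso
      refine no_apex hG hT (by rw [hTc]; exact hcard) (he' ▸ Set.mem_insert _ _)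
        (a := b) (Or.inr ⟨hb, ?_⟩)
      intro hc
      rw [Set.mem_singleton_iff] at hc
      have hcc : i = i ∧ b = a := by simpa using hc
      exact hab hcc.2.symm
  · by_cases hub : u = inr (i, b)
    · subst hub
      rcases corona_adj_cases hadj with ⟨u', v', he, _, _⟩ | ⟨i', a', b', he, he', _⟩ |
        ⟨i', a', he, _⟩ | ⟨i', a', he, he'⟩
      · exact absurd he (by simp)
      · have hii : i = i' ∧ b = a' := by
          have := he
          simp only [Sum.inr.injEq, Prod.mk.injEq] at this
          exact this
        obtain ⟨rfl, rfl⟩ := hii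
        refine ⟨b', a, ?_, he' ▸ Set.mem_insert _ _, Or.inr ⟨ha, ?_⟩⟩
        · rintro rfl
          exact hv (he' ▸ ha)
        · intro hc
          rw [Set.mem_singleton_iff] at hc
          have hcc : a = b := by simpa using hc
          exact hab hcc
      · exact absurd he (by simp)
      · have hii : i = i' ∧ b = a' := by
          have := he
          simp only [Sum.inr.injEq, Prod.mk.injEq] at this
          exact this
        obtain ⟨rfl, rfl⟩ := hii
        exfalso
        refine no_apex hG hT (by rw [hTc]; exact hcard) (he' ▸ Set.mem_insert _ _)
          (a := a) (Or.inr ⟨ha, ?_⟩)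
        intro hc
        rw [Set.mem_singleton_iff] at hc
        have hcc : i = i ∧ a = b := by simpa using hc
        exact hab hcc.2
    · exact ⟨a, b, hab, Or.inr ⟨ha, fun hc => hua (by rw [Set.mem_singleton_iff] at hc; exact hc.symm)⟩,
        Or.inr ⟨hb, fun hc => hub (by rw [Set.mem_singleton_iff] at hc; exact hc.symm)⟩⟩

lemma upper_main (hG : G.Connected) {S : Set (α ⊕ α × β)} (hmob : IsMobileGPSet (C) S) :
    S.ncard ≤ max (Nat.card α) (gp (K)) := by
  by_contra hcon
  push_neg at hcon
  have hn : Nat.card α < S.ncard := lt_of_le_of_lt (le_max_left _ _) hcon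
  have hM : gp (K) < S.ncard := lt_of_le_of_lt (le_max_right _ _) hcon
  obtain ⟨hGP, k, f, h0, hmv, hcov⟩ := hmob
  have hgp := seq_gp (h0 ▸ hGP) hmv
  have hnc : ∀ t ≤ k, (f t).ncard = S.ncard := fun t ht => by
    rw [seq_ncard hmv t ht, h0]
  have hninj : ¬ Set.InjOn π S := by
    intro hinj
    have h1 : S.ncard = (π '' S).ncard := (Set.ncard_image_of_injOn hinj).symm
    have h2 : (π '' S).ncard ≤ Nat.card α :=
      Set.ncard_univ α ▸ Set.ncard_le_ncard (Set.subset_univ _) (Set.toFinite _)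
    omega
  rw [Set.InjOn] at hninj
  push_neg at hninj
  obtain ⟨x, hx, y, hy, hpi, hne⟩ := hninj
  have h2copy : ∃ a b, a ≠ b ∧ inr (π x, a) ∈ S ∧ inr (π x, b) ∈ S := by
    rcases eq_unit_cases (rfl : π x = π x) with hx1 | ⟨a, hx1⟩ <;>
      rcases eq_unit_cases (hpi.symm : π y = π x) with hy1 | ⟨b, hy1⟩
    · exact absurd (hx1.trans hy1.symm) hne
    · exact absurd (no_apex hG hGP hM (hx1 ▸ hx) (hy1 ▸ hy)) not_false
    · exact absurd (no_apex hG hGP hM (hy1 ▸ hy) (hx1 ▸ hx)) not_false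
    · refine ⟨a, b, ?_, hx1 ▸ hx, hy1 ▸ hy⟩
      rintro rfl
      exact hne (hx1.trans hy1.symm)
  have hinv : ∀ t, t ≤ k → ∃ a b, a ≠ b ∧ inr (π x, a) ∈ f t ∧ inr (π x, b) ∈ f t := by
    intro t
    induction t with
    | zero => intro _; rw [h0]; exact h2copy
    | succ s ih =>
      intro hsk
      exact two_in_copy_preserved hG (hmv s (by omega))
        (by rw [hnc s (by omega)]; exact hM) (ih (by omega))
  have hicov : (inl (π x) : α ⊕ α × β) ∈ (⋃ t ∈ Set.Iic k, f t) := hcov ▸ Set.mem_univ _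
  simp only [Set.mem_iUnion, Set.mem_Iic] at hicov
  obtain ⟨t, htk, hit⟩ := hicov
  obtain ⟨a, b, hab, ha, hb⟩ := hinv t htk
  exact no_apex hG (hgp t htk) (by rw [hnc t htk]; exact hM) hit ha

end Upper
theorem mob_corona_bounds {α β : Type*} [Finite α] [Finite β]
    (G : SimpleGraph α) (H : SimpleGraph β) (hG : G.Connected) :
    max (mob G) (mob (joinGraph H (⊤ : SimpleGraph (Fin 1)))) ≤ mob (corona G H) ∧
    mob (corona G H) ≤ max (Nat.card α) (gp (joinGraph H (⊤ : SimpleGraph (Fin 1)))) := by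
  have hbdd : BddAbove {n | ∃ S : Set (α ⊕ α × β),
      IsMobileGPSet (corona G H) S ∧ S.ncard = n} := by
    refine ⟨Nat.card (α ⊕ α × β), ?_⟩
    rintro n ⟨S, _, rfl⟩
    exact Set.ncard_univ _ ▸ Set.ncard_le_ncard (Set.subset_univ S) (Set.toFinite _)
  constructor
  · apply max_le
    · rcases Set.eq_empty_or_nonempty
        {n | ∃ S : Set α, IsMobileGPSet G S ∧ S.ncard = n} with he | hne
      · simp only [mob]
        rw [he, csSup_empty]
        exact Nat.zero_le _
      · refine csSup_le_csSup hbdd hne ?_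
        rintro n ⟨S, hS, rfl⟩
        exact ⟨Sum.inl '' S, mobG_image_mobile hG hS,
          Set.ncard_image_of_injective _ Sum.inl_injective⟩
    · rcases Set.eq_empty_or_nonempty
        {n | ∃ S : Set (β ⊕ Fin 1), IsMobileGPSet (joinGraph H ⊤) S ∧ S.ncard = n} with he | hne
      · simp only [mob]
        rw [he, csSup_empty]
        exact Nat.zero_le _
      · haveI : Nonempty α := hG.nonempty
        refine csSup_le_csSup hbdd hne ?_
        rintro n ⟨S, hS, rfl⟩
        exact ⟨ιc (Classical.arbitrary α) '' S, mobK_image_mobile hG hS _,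
          Set.ncard_image_of_injective _ (ιc_injective _)⟩
  · apply csSup_le'
    rintro n ⟨S, hS, rfl⟩
    exact upper_main hG hS
end

section
/- For all integers r, s ≥ 1, the mobile general position number of the corona product of complete graphs satisfies mob(K_r ⊙ K_s) = max{r, s + 1}. -/
open SimpleGraph

set_option linter.unreachableTactic false
set_option linter.unusedTactic false


section walks
variable {W : Type*} {G : SimpleGraph W}

lemma walk_len0 {u v : W} (p : G.Walk u v) (h : p.length = 0) : u = v := by
  cases p with
  | nil => rfl
  | cons h' q => simp [Walk.length_cons] at h

lemma walk_len1 {u v : W} (p : G.Walk u v) (h : p.length = 1) :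
    G.Adj u v ∧ p.support = [u, v] := by
  cases p with
  | nil => simp at h
  | cons h' q =>
    cases q with
    | nil => exact ⟨h', rfl⟩
    | cons h'' q' => simp [Walk.length_cons] at h

lemma walk_len2 {u v : W} (p : G.Walk u v) (h : p.length = 2) :
    ∃ x, G.Adj u x ∧ G.Adj x v ∧ p.support = [u, x, v] := by
  cases p with
  | nil => simp at h
  | cons h' q =>
    cases q with
    | nil => simp at h
    | cons h'' q' =>
      cases q' with
      | nil => exact ⟨_, h', h'', rfl⟩
      | cons h3 q3 => simp [Walk.length_cons] at h

lemma walk_len3 {u v : W} (p : G.Walk u v) (h : p.length = 3) :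
    ∃ x y, G.Adj u x ∧ G.Adj x y ∧ G.Adj y v ∧ p.support = [u, x, y, v] := by
  cases p with
  | nil => simp at h
  | cons h' q =>
    cases q with
    | nil => simp at h
    | cons h'' q' =>
      cases q' with
      | nil => simp at h
      | cons h3 q3 =>
        cases q3 with
        | nil => exact ⟨_, _, h', h'', h3, rfl⟩
        | cons h4 q4 => simp [Walk.length_cons] at h
end walks

section adj
variable {r s : ℕ}

local notation "G" => corona (⊤ : SimpleGraph (Fin r)) (⊤ : SimpleGraph (Fin s))

lemma adj_ll {i j : Fin r} : (G).Adj (Sum.inl i) (Sum.inl j) ↔ i ≠ j := by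
  constructor
  · rintro ⟨hne, h | h⟩ <;> rcases h with (⟨u,v,h1,h2,h3⟩|⟨i',a,b,h1,h2,h3⟩|⟨i',a,h1,h2⟩) <;>
      simp_all
  · intro h
    exact ⟨by simp [h], Or.inl (Or.inl ⟨i, j, rfl, rfl, by simpa using h⟩)⟩

lemma adj_lr {i j : Fin r} {a : Fin s} : (G).Adj (Sum.inl i) (Sum.inr (j, a)) ↔ i = j := by
  constructor
  · rintro ⟨hne, h | h⟩ <;> rcases h with (⟨u,v,h1,h2,h3⟩|⟨i',a',b,h1,h2,h3⟩|⟨i',a',h1,h2⟩) <;>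
      simp_all
  · rintro rfl
    exact ⟨by simp, Or.inl (Or.inr (Or.inr ⟨i, a, rfl, rfl⟩))⟩

lemma adj_rl {i j : Fin r} {a : Fin s} : (G).Adj (Sum.inr (i, a)) (Sum.inl j) ↔ i = j := by
  rw [SimpleGraph.adj_comm, adj_lr, eq_comm]

lemma adj_rr {i j : Fin r} {a b : Fin s} :
    (G).Adj (Sum.inr (i, a)) (Sum.inr (j, b)) ↔ i = j ∧ a ≠ b := by
  constructor
  · rintro ⟨hne, h | h⟩ <;> rcases h with (⟨u,v,h1,h2,h3⟩|⟨i',a',b',h1,h2,h3⟩|⟨i',a',h1,h2⟩) <;>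
      simp_all <;> aesop
  · rintro ⟨rfl, hab⟩
    exact ⟨by simp [hab], Or.inl (Or.inr (Or.inl ⟨i, a, b, rfl, rfl, by simpa using hab⟩))⟩
end adj


section char
variable {r s : ℕ}
local notation "G" => corona (⊤ : SimpleGraph (Fin r)) (⊤ : SimpleGraph (Fin s))
local notation "V" => (Fin r ⊕ Fin r × Fin s)

lemma walk_support_len0 {W : Type*} {G' : SimpleGraph W} {u v : W} (p : G'.Walk u v)
    (h : p.length = 0) : p.support = [u] := by
  cases p with
  | nil => rfl
  | cons h' q => simp [Walk.length_cons] at h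

lemma dist_lr {i j : Fin r} {b : Fin s} (hij : i ≠ j) :
    (G).dist (Sum.inl i) (Sum.inr (j, b)) = 2 := by
  have h1 : (G).Adj (Sum.inl i) (Sum.inl j) := adj_ll.mpr hij
  have h2 : (G).Adj (Sum.inl j) (Sum.inr (j, b)) := adj_lr.mpr rfl
  let p : (G).Walk (Sum.inl i) (Sum.inr (j, b)) := Walk.cons h1 (Walk.cons h2 Walk.nil)
  have hle : (G).dist (Sum.inl i) (Sum.inr (j, b)) ≤ 2 := SimpleGraph.dist_le p
  have h0 : (G).dist (Sum.inl i) (Sum.inr (j, b)) ≠ 0 := by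
    intro h
    have := (Reachable.dist_eq_zero_iff ⟨p⟩).mp h
    simp at this
  have hne1 : (G).dist (Sum.inl i) (Sum.inr (j, b)) ≠ 1 := by
    intro h
    exact hij (adj_lr.mp (SimpleGraph.dist_eq_one_iff_adj.mp h))
  omega

lemma dist_rr {i j : Fin r} {a b : Fin s} (hij : i ≠ j) :
    (G).dist (Sum.inr (i, a)) (Sum.inr (j, b)) = 3 := by
  have h1 : (G).Adj (Sum.inr (i, a)) (Sum.inl i) := adj_rl.mpr rfl
  have h2 : (G).Adj (Sum.inl i) (Sum.inl j) := adj_ll.mpr hij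
  have h3 : (G).Adj (Sum.inl j) (Sum.inr (j, b)) := adj_lr.mpr rfl
  let p : (G).Walk (Sum.inr (i, a)) (Sum.inr (j, b)) :=
    Walk.cons h1 (Walk.cons h2 (Walk.cons h3 Walk.nil))
  have hle : (G).dist (Sum.inr (i, a)) (Sum.inr (j, b)) ≤ 3 := SimpleGraph.dist_le p
  have h0 : (G).dist (Sum.inr (i, a)) (Sum.inr (j, b)) ≠ 0 := by
    intro h
    have := (Reachable.dist_eq_zero_iff ⟨p⟩).mp h
    simp at this
    exact hij this.1
  have hne1 : (G).dist (Sum.inr (i, a)) (Sum.inr (j, b)) ≠ 1 := by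
    intro h
    exact hij (adj_rr.mp (SimpleGraph.dist_eq_one_iff_adj.mp h)).1
  have hne2 : (G).dist (Sum.inr (i, a)) (Sum.inr (j, b)) ≠ 2 := by
    intro h2'
    obtain ⟨q, hq⟩ := Reachable.exists_walk_length_eq_dist (⟨p⟩ :
      (G).Reachable (Sum.inr (i, a)) (Sum.inr (j, b)))
    rw [h2'] at hq
    obtain ⟨x, hx1, hx2, -⟩ := walk_len2 q hq
    match x with
    | Sum.inl m => exact hij ((adj_rl.mp hx1).trans (adj_lr.mp hx2))
    | Sum.inr (m, d) => exact hij (((adj_rr.mp hx1).1).trans (adj_rr.mp hx2).1)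
  omega

lemma gp_iff (S : Set V) :
    IsGPSet (G) S ↔ ∀ (j : Fin r) (b : Fin s), Sum.inl j ∈ S → Sum.inr (j, b) ∈ S →
      ∀ x ∈ S, x = Sum.inl j ∨ ∃ c, x = Sum.inr (j, c) := by
  constructor
  · intro hGP j b hj hb x hx
    match x with
    | Sum.inl i =>
      by_cases hij : i = j
      · exact Or.inl (by rw [hij])
      · exfalso
        have h1 : (G).Adj (Sum.inl i) (Sum.inl j) := adj_ll.mpr hij
        have h2 : (G).Adj (Sum.inl j) (Sum.inr (j, b)) := adj_lr.mpr rfl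
        let p : (G).Walk (Sum.inl i) (Sum.inr (j, b)) := Walk.cons h1 (Walk.cons h2 Walk.nil)
        have hpath : p.IsPath := by
          simp [p, Walk.isPath_def, hij]
        have hlen : p.length = (G).dist (Sum.inl i) (Sum.inr (j, b)) := by
          rw [dist_lr hij]; rfl
        have := hGP _ hx _ hb p hpath hlen (Sum.inl j) (by simp [p]) hj
        simp at this
        exact hij this.symm
    | Sum.inr (i, c) =>
      by_cases hij : i = j
      · exact Or.inr ⟨c, by rw [hij]⟩
      · exfalso
        have h1 : (G).Adj (Sum.inr (i, c)) (Sum.inl i) := adj_rl.mpr rfl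
        have h2 : (G).Adj (Sum.inl i) (Sum.inl j) := adj_ll.mpr hij
        have h3 : (G).Adj (Sum.inl j) (Sum.inr (j, b)) := adj_lr.mpr rfl
        let p : (G).Walk (Sum.inr (i, c)) (Sum.inr (j, b)) :=
          Walk.cons h1 (Walk.cons h2 (Walk.cons h3 Walk.nil))
        have hpath : p.IsPath := by
          simp [p, Walk.isPath_def, hij, Ne.symm hij]
        have hlen : p.length = (G).dist (Sum.inr (i, c)) (Sum.inr (j, b)) := by
          rw [dist_rr hij]; rfl
        have := hGP _ hx _ hb p hpath hlen (Sum.inl j) (by simp [p]) hj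
        simp at this
  · intro hchar
    intro u hu v hv p hpath hlen w hw hwS
    match u, v with
    | Sum.inl i, Sum.inl i' =>
      by_cases hii : i = i'
      · subst hii
        have : p.length = 0 := by rw [hlen, SimpleGraph.dist_self]
        have := walk_support_len0 p this
        rw [this] at hw; simp at hw; exact Or.inl hw
      · have hadj : (corona (⊤ : SimpleGraph (Fin r)) (⊤ : SimpleGraph (Fin s))).Adj (Sum.inl i) (Sum.inl i') := adj_ll.mpr hii
        have : p.length = 1 := by rw [hlen, SimpleGraph.dist_eq_one_iff_adj.mpr hadj]
        obtain ⟨-, hsup⟩ := walk_len1 p this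
        rw [hsup] at hw; simp at hw
        exact hw.imp id id
    | Sum.inl i, Sum.inr (i', a) =>
      by_cases hii : i = i'
      · subst hii
        have hadj : (corona (⊤ : SimpleGraph (Fin r)) (⊤ : SimpleGraph (Fin s))).Adj (Sum.inl i) (Sum.inr (i, a)) := adj_lr.mpr rfl
        have : p.length = 1 := by rw [hlen, SimpleGraph.dist_eq_one_iff_adj.mpr hadj]
        obtain ⟨-, hsup⟩ := walk_len1 p this
        rw [hsup] at hw; simp at hw
        exact hw.imp id id
      · have : p.length = 2 := by rw [hlen, dist_lr hii]
        obtain ⟨x, hx1, hx2, hsup⟩ := walk_len2 p this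
        have hxmid : x = Sum.inl i' := by
          match x with
          | Sum.inl m =>
            have := adj_lr.mp hx2; rw [this]
          | Sum.inr (m, d) =>
            have hm : i = m := adj_lr.mp hx1
            have hm2 : m = i' := (adj_rr.mp hx2).1
            exact absurd (hm.trans hm2) hii
        subst hxmid
        rw [hsup] at hw; simp at hw
        rcases hw with h | h | h
        · exact Or.inl h
        · exfalso
          subst h
          rcases hchar i' a hwS hv _ hu with h' | ⟨c, h'⟩
          · exact hii (by injection h')
          · exact absurd h' (by simp)
        · exact Or.inr h
    | Sum.inr (i, a), Sum.inl i' =>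
      by_cases hii : i = i'
      · subst hii
        have hadj : (corona (⊤ : SimpleGraph (Fin r)) (⊤ : SimpleGraph (Fin s))).Adj (Sum.inr (i, a)) (Sum.inl i) := adj_rl.mpr rfl
        have : p.length = 1 := by rw [hlen, SimpleGraph.dist_eq_one_iff_adj.mpr hadj]
        obtain ⟨-, hsup⟩ := walk_len1 p this
        rw [hsup] at hw; simp at hw
        exact hw.imp id id
      · have hdist : (corona (⊤ : SimpleGraph (Fin r)) (⊤ : SimpleGraph (Fin s))).dist (Sum.inr (i,a)) (Sum.inl i') = 2 := by
          rw [SimpleGraph.dist_comm]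
          exact dist_lr (Ne.symm hii)
        have : p.length = 2 := by rw [hlen, hdist]
        obtain ⟨x, hx1, hx2, hsup⟩ := walk_len2 p this
        have hxmid : x = Sum.inl i := by
          match x with
          | Sum.inl m =>
            have := adj_rl.mp hx1; rw [this]
          | Sum.inr (m, d) =>
            have hm : i = m := (adj_rr.mp hx1).1
            have hm2 : m = i' := adj_rl.mp hx2
            exact absurd (hm.trans hm2) hii
        subst hxmid
        rw [hsup] at hw; simp at hw
        rcases hw with h | h | h
        · exact Or.inl h
        · exfalso
          subst h
          rcases hchar i a hwS hu _ hv with h' | ⟨c, h'⟩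
          · exact hii (Sum.inl.inj h').symm
          · exact absurd h' (by simp)
        · exact Or.inr h
    | Sum.inr (i, a), Sum.inr (i', b) =>
      by_cases hii : i = i'
      · subst hii
        by_cases hab : a = b
        · subst hab
          have : p.length = 0 := by rw [hlen, SimpleGraph.dist_self]
          have := walk_support_len0 p this
          rw [this] at hw; simp at hw; exact Or.inl hw
        · have hadj : (corona (⊤ : SimpleGraph (Fin r)) (⊤ : SimpleGraph (Fin s))).Adj (Sum.inr (i, a)) (Sum.inr (i, b)) := adj_rr.mpr ⟨rfl, hab⟩
          have : p.length = 1 := by rw [hlen, SimpleGraph.dist_eq_one_iff_adj.mpr hadj]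
          obtain ⟨-, hsup⟩ := walk_len1 p this
          rw [hsup] at hw; simp at hw
          exact hw.imp id id
      · have : p.length = 3 := by rw [hlen, dist_rr hii]
        obtain ⟨x, y, hx1, hxy, hy1, hsup⟩ := walk_len3 p this
        have hxmid : x = Sum.inl i := by
          match x, y with
          | Sum.inl m, _ => rw [adj_rl.mp hx1]
          | Sum.inr (m, d), Sum.inl m' =>
            have : m = m' := adj_rl.mp hxy
            have hm : i = m := (adj_rr.mp hx1).1
            have hm2 : m' = i' := adj_lr.mp hy1
            exact absurd ((hm.trans this).trans hm2) hii
          | Sum.inr (m, d), Sum.inr (m', d') =>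
            have hm : i = m := (adj_rr.mp hx1).1
            have : m = m' := (adj_rr.mp hxy).1
            have hm2 : m' = i' := (adj_rr.mp hy1).1
            exact absurd ((hm.trans this).trans hm2) hii
        subst hxmid
        have hymid : y = Sum.inl i' := by
          match y with
          | Sum.inl m' => rw [adj_lr.mp hy1]
          | Sum.inr (m', d') =>
            have : i = m' := adj_lr.mp hxy
            have hm2 : m' = i' := (adj_rr.mp hy1).1
            exact absurd (this.trans hm2) hii
        subst hymid
        rw [hsup] at hw; simp at hw
        rcases hw with h | h | h | h
        · exact Or.inl h
        · exfalso
          subst h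
          rcases hchar i a hwS hu _ hv with h' | ⟨c, h'⟩
          · simp at h'
          · simp at h'; exact hii h'.1.symm
        · exfalso
          subst h
          rcases hchar i' b hwS hv _ hu with h' | ⟨c, h'⟩
          · simp at h'
          · simp at h'; exact hii h'.1
        · exact Or.inr h
end char


section main
variable {r s : ℕ}
local notation "G" => corona (⊤ : SimpleGraph (Fin r)) (⊤ : SimpleGraph (Fin s))
local notation "V" => (Fin r ⊕ Fin r × Fin s)

lemma card_clique (j : Fin r) :
    (insert (Sum.inl j) {x : V | ∃ b, x = Sum.inr (j, b)}).ncard = s + 1 := by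
  have h1 : {x : V | ∃ b, x = Sum.inr (j, b)} = (fun b : Fin s => (Sum.inr (j, b) : V)) '' Set.univ := by
    ext x; simp [eq_comm]
  have h2 : {x : V | ∃ b, x = Sum.inr (j, b)}.ncard = s := by
    rw [h1, Set.ncard_image_of_injective _ (fun a b h => by simpa using h)]
    simp [Set.ncard_univ]
  rw [Set.ncard_insert_of_notMem (by simp) (Set.toFinite _), h2]

lemma mob_le (hr : 1 ≤ r) (hs : 1 ≤ s) : mob (G) ≤ max r (s + 1) := by
  apply csSup_le'
  rintro n ⟨S, ⟨hGP, k, f, hf0, hmove, hcover⟩, rfl⟩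
  by_contra hcon
  push_neg at hcon
  have hbig1 : r < S.ncard := lt_of_le_of_lt (le_max_left _ _) hcon
  have hbig2 : s + 1 < S.ncard := lt_of_le_of_lt (le_max_right _ _) hcon
  have hGPt : ∀ t ≤ k, IsGPSet (G) (f t) := by
    intro t ht
    cases t with
    | zero => rw [hf0]; exact hGP
    | succ t' =>
      obtain ⟨-, u, hu, v, hv, -, -, hgp⟩ := hmove t' (by omega)
      exact hgp
  have hcard : ∀ t ≤ k, (f t).ncard = S.ncard := by
    intro t ht
    induction t with
    | zero => rw [hf0]
    | succ t' ih =>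
      obtain ⟨-, u, hu, v, hv, -, heq, -⟩ := hmove t' (by omega)
      rw [heq, Set.ncard_insert_of_notMem (by simp [hv]) (Set.toFinite _),
        Set.ncard_diff_singleton_add_one hu (Set.toFinite _)]
      exact ih (by omega)
  have hA : ∀ t ≤ k, ∀ (j : Fin r) (b : Fin s),
      Sum.inl j ∈ f t → Sum.inr (j, b) ∈ f t → False := by
    intro t ht j b hj hb
    have hchar := (gp_iff (f t)).mp (hGPt t ht) j b hj hb
    have hsub : f t ⊆ insert (Sum.inl j) {x : V | ∃ c, x = Sum.inr (j, c)} := by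
      intro x hx
      rcases hchar x hx with h | ⟨c, h⟩
      · simp [h]
      · right; exact ⟨c, h⟩
    have := Set.ncard_le_ncard hsub (Set.toFinite _)
    rw [card_clique, hcard t ht] at this
    omega
  -- "two robots in copy j" predicate
  set P : Fin r → ℕ → Prop := fun j t => ∃ b c : Fin s, b ≠ c ∧
    Sum.inr (j, b) ∈ f t ∧ Sum.inr (j, c) ∈ f t with hP
  have hPfwd : ∀ j, ∀ t < k, P j t → P j (t + 1) := by
    intro j t ht ⟨b, c, hbc, hb, hc⟩
    obtain ⟨-, u, hu, v, hv, hadj, heq, -⟩ := hmove t ht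
    have key : ∀ b c : Fin s, b ≠ c → Sum.inr (j, b) ∈ f t → Sum.inr (j, c) ∈ f t →
        u = Sum.inr (j, b) → P j (t + 1) := by
      rintro b c hbc hb hc rfl
      match v with
      | Sum.inl m =>
        have hm : j = m := adj_rl.mp hadj
        subst hm
        exfalso
        refine hA (t+1) (by omega) j c ?_ ?_
        · rw [heq]; exact Set.mem_insert _ _
        · rw [heq]; right; exact ⟨hc, by simp [Ne.symm, hbc]⟩
      | Sum.inr (m, d) =>
        have hm : j = m := (adj_rr.mp hadj).1
        subst hm
        have hdc : d ≠ c := by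
          rintro rfl; exact hv hc
        exact ⟨d, c, hdc, by rw [heq]; exact Set.mem_insert _ _,
          by rw [heq]; right; exact ⟨hc, by simp [hbc.symm]⟩⟩
    by_cases hub : u = Sum.inr (j, b)
    · exact key b c hbc hb hc hub
    by_cases huc : u = Sum.inr (j, c)
    · exact key c b hbc.symm hc hb huc
    · exact ⟨b, c, hbc, by rw [heq]; right; exact ⟨hb, by simp [Ne.symm hub]⟩,
        by rw [heq]; right; exact ⟨hc, by simp [Ne.symm huc]⟩⟩
  have hcov : ∀ x : V, ∃ t ≤ k, x ∈ f t := by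
    intro x
    have : x ∈ (⋃ i ∈ Set.Iic k, f i) := by rw [hcover]; trivial
    simpa using this
  have hnP0 : ∀ j, ¬ P j 0 := by
    intro j hPj
    have hPall : ∀ t ≤ k, P j t := by
      intro t ht
      induction t with
      | zero => exact hPj
      | succ t' ih => exact hPfwd j t' (by omega) (ih (by omega))
    obtain ⟨t, ht, hjt⟩ := hcov (Sum.inl j)
    obtain ⟨b, c, hbc, hb, hc⟩ := hPall t ht
    exact hA t ht j b hjt hb
  -- injective index map on S
  have hinj : Set.InjOn (fun x : V => Sum.elim id Prod.fst x) S := by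
    intro x hx y hy hxy
    have h0k : (0:ℕ) ≤ k := by omega
    rw [← hf0] at hx hy
    match x, y with
    | Sum.inl i, Sum.inl i' => simp at hxy; rw [hxy]
    | Sum.inl i, Sum.inr (i', b) =>
      simp at hxy; subst hxy
      exact absurd (hA 0 h0k i b hx hy) (by simp)
    | Sum.inr (i, b), Sum.inl i' =>
      simp at hxy; subst hxy
      exact absurd (hA 0 h0k i b hy hx) (by simp)
    | Sum.inr (i, b), Sum.inr (i', c) =>
      simp at hxy; subst hxy
      by_cases hbc : b = c
      · rw [hbc]
      · exact absurd ⟨b, c, hbc, hx, hy⟩ (hnP0 i)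
  have hle : S.ncard ≤ r := by
    have := Set.ncard_le_ncard_of_injOn (fun x : V => Sum.elim id Prod.fst x)
      (fun a _ => Set.mem_univ _) hinj (Set.finite_univ)
    rwa [Set.ncard_univ, Nat.card_eq_fintype_card, Fintype.card_fin] at this
  omega
end main

section lower
variable {r s : ℕ}
local notation "G" => corona (⊤ : SimpleGraph (Fin r)) (⊤ : SimpleGraph (Fin s))
local notation "V" => (Fin r ⊕ Fin r × Fin s)

lemma mob_mem_r (hr : 1 ≤ r) (hs : 1 ≤ s) :
    ∃ S : Set V, IsMobileGPSet (G) S ∧ S.ncard = r := by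
  have hr' : 0 < r := hr
  have hs' : 0 < s := hs
  set N := r * s with hN
  set S1 : Set V := Set.range Sum.inl with hS1
  have hGP1 : IsGPSet (G) S1 := by
    rw [gp_iff]
    intro j b hj hb
    exfalso
    obtain ⟨i, hi⟩ := hb
    simp at hi
  set jm : ℕ → Fin r := fun m => ⟨m / s % r, Nat.mod_lt _ hr'⟩ with hjm
  set am : ℕ → Fin s := fun m => ⟨m % s, Nat.mod_lt _ hs'⟩ with ham
  set T : ℕ → Set V := fun m => insert (Sum.inr (jm m, am m)) (S1 \ {Sum.inl (jm m)}) with hT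
  have hmemr : ∀ m (j : Fin r) (b : Fin s), Sum.inr (j, b) ∈ T m ↔ j = jm m ∧ b = am m := by
    intro m j b
    simp [hT, hS1, Prod.ext_iff]
  have hmeml : ∀ m (j : Fin r), Sum.inl j ∈ T m ↔ j ≠ jm m := by
    intro m j
    simp [hT, hS1]
  have hGPT : ∀ m, IsGPSet (G) (T m) := by
    intro m
    rw [gp_iff]
    intro j b hj hb
    rw [hmeml] at hj
    rw [hmemr] at hb
    exact absurd hb.1 hj
  set f : ℕ → Set V := fun i => if i % 2 = 1 ∧ i < 2 * N then T (i / 2) else S1 with hf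
  refine ⟨S1, ⟨hGP1, 2 * N, f, ?_, ?_, ?_⟩, ?_⟩
  · simp [hf]
  · intro i hi
    rcases Nat.even_or_odd i with he | ho
    · obtain ⟨m, hm⟩ := he
      have hfi : f i = S1 := by
        have hcond : ¬(i % 2 = 1 ∧ i < 2 * N) := by omega
        simp [hf, hcond]
      have hfi1 : f (i + 1) = T (i / 2) := by
        have h2 : (i + 1) / 2 = i / 2 := by omega
        rw [hf]
        have : (i+1) % 2 = 1 ∧ i + 1 < 2 * N := by omega
        simp only [if_pos this, h2]
      rw [hfi, hfi1]
      exact ⟨hGP1, Sum.inl (jm (i/2)), Set.mem_range_self _, Sum.inr (jm (i/2), am (i/2)),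
        by simp [hS1], adj_lr.mpr rfl, rfl, hGPT _⟩
    · obtain ⟨m, hm⟩ := ho
      have hfi : f i = T (i / 2) := by
        rw [hf]
        have : i % 2 = 1 ∧ i < 2 * N := by omega
        simp only [if_pos this]
      have hfi1 : f (i + 1) = S1 := by
        have hcond : ¬((i + 1) % 2 = 1 ∧ i + 1 < 2 * N) := by omega
        simp [hf, hcond]
      rw [hfi, hfi1]
      refine ⟨hGPT _, Sum.inr (jm (i/2), am (i/2)), Set.mem_insert _ _,
        Sum.inl (jm (i/2)), ?_, adj_rl.mpr rfl, ?_, hGP1⟩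
      · rw [hT]
        simp
      · simp only [hT]
        rw [Set.insert_diff_self_of_notMem (by simp [hS1]), Set.insert_diff_singleton,
          Set.insert_eq_self.mpr (by rw [hS1]; exact Set.mem_range_self _)]
  · rw [Set.eq_univ_iff_forall]
    intro x
    simp only [Set.mem_iUnion, Set.mem_Iic]
    match x with
    | Sum.inl j =>
      exact ⟨0, by omega, by simp [hf, hS1]⟩
    | Sum.inr (j, b) =>
      have hjs : j.val * s + s ≤ N := by
        have h1 : j.val + 1 ≤ r := j.isLt
        calc j.val * s + s = (j.val + 1) * s := by ring
        _ ≤ r * s := Nat.mul_le_mul_right s h1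
      set m := b.val + j.val * s with hm
      have hb := b.isLt
      have hmN : m < N := by omega
      refine ⟨2 * m + 1, by omega, ?_⟩
      have hfi : f (2 * m + 1) = T m := by
        have h2 : (2 * m + 1) / 2 = m := by omega
        rw [hf]
        have : (2*m+1) % 2 = 1 ∧ 2*m+1 < 2 * N := by omega
        simp only [if_pos this, h2]
      rw [hfi, hmemr]
      constructor
      · apply Fin.ext
        show j.val = m / s % r
        rw [hm, Nat.add_mul_div_right _ _ hs', Nat.div_eq_of_lt b.isLt, Nat.zero_add,
          Nat.mod_eq_of_lt j.isLt]
      · apply Fin.ext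
        show b.val = m % s
        rw [hm, Nat.add_mul_mod_self_right, Nat.mod_eq_of_lt b.isLt]
  · rw [hS1, ← Set.image_univ, Set.ncard_image_of_injective _ Sum.inl_injective,
      Set.ncard_univ, Nat.card_eq_fintype_card, Fintype.card_fin]
end lower

section lower2
variable {r s : ℕ}
local notation "G" => corona (⊤ : SimpleGraph (Fin r)) (⊤ : SimpleGraph (Fin s))
local notation "V" => (Fin r ⊕ Fin r × Fin s)

lemma mob_mem_s1 (hr : 1 ≤ r) (hs : 1 ≤ s) :
    ∃ S : Set V, IsMobileGPSet (G) S ∧ S.ncard = s + 1 := by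
  have hr' : 0 < r := hr
  have hs' : 0 < s := hs
  set K := (r - 1) * s with hK
  set z : Fin r := ⟨0, hr'⟩ with hz
  set C0 : Set V := {x : V | ∃ b, x = Sum.inr (z, b)} with hC0
  set S2 : Set V := insert (Sum.inl z) C0 with hS2
  set jm : ℕ → Fin r := fun m => ⟨(m / s + 1) % r, Nat.mod_lt _ hr'⟩ with hjm
  set am : ℕ → Fin s := fun m => ⟨m % s, Nat.mod_lt _ hs'⟩ with ham
  have hjmz : ∀ m, m < K → jm m ≠ z := by
    intro m hm hcon
    have hdiv : m / s < r - 1 := (Nat.div_lt_iff_lt_mul hs').mpr (by omega)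
    have h1 : (m / s + 1) % r = m / s + 1 := Nat.mod_eq_of_lt (by omega)
    have h2 : (jm m).val = z.val := congrArg Fin.val hcon
    have h3 : (m / s + 1) % r = 0 := h2
    rw [h1] at h3
    exact Nat.succ_ne_zero _ h3
  -- GP facts
  have hGP2 : IsGPSet (G) S2 := by
    rw [gp_iff]
    intro j b hj hb x hx
    have hjz : j = z := by
      rcases hb with h | ⟨c, h⟩
      · exact absurd h (by simp)
      · injection h with h'; exact (Prod.ext_iff.mp h').1
    subst hjz
    rcases hx with h | ⟨c, h⟩
    · exact Or.inl (by rw [h])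
    · exact Or.inr ⟨c, h⟩
  have hGPl : ∀ m, m < K → IsGPSet (G) (insert (Sum.inl (jm m)) C0) := by
    intro m hm
    rw [gp_iff]
    intro j b hj hb
    exfalso
    have hbz : j = z := by
      rcases hb with h | ⟨c, h⟩
      · exact absurd h (by simp)
      · injection h with h'; exact (Prod.ext_iff.mp h').1
    have hjz : j = jm m := by
      rcases hj with h | ⟨c, h⟩
      · exact Sum.inl.inj h
      · exact absurd h (by simp)
    exact hjmz m hm (hjz ▸ hbz ▸ rfl)
  have hGPr : ∀ m, IsGPSet (G) (insert (Sum.inr (jm m, am m)) C0) := by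
    intro m
    rw [gp_iff]
    intro j b hj hb
    exfalso
    rcases hj with h | ⟨c, h⟩ <;> simp at h
  set f : ℕ → Set V := fun i =>
    if i < 4 * K then
      (if i % 4 = 0 then S2 else
        if i % 4 = 2 then insert (Sum.inr (jm (i/4), am (i/4))) C0
        else insert (Sum.inl (jm (i/4))) C0)
    else S2 with hf
  have hlz : (Sum.inl z : V) ∉ C0 := by simp [hC0]
  have hljm : ∀ m, (Sum.inl (jm m) : V) ∉ C0 := by intro m; simp [hC0]
  have hrjm : ∀ m, m < K → (Sum.inr (jm m, am m) : V) ∉ C0 := by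
    intro m hm
    simp only [hC0, Set.mem_setOf_eq, not_exists]
    intro b h
    injection h with h'
    exact hjmz m hm (Prod.ext_iff.mp h').1
  have hf0 : f 0 = S2 := by simp [hf]
  refine ⟨S2, ⟨hGP2, 4 * K, f, hf0, ?_, ?_⟩, ?_⟩
  · intro i hi
    have hm4 : i / 4 < K := by omega
    set m := i / 4 with hmdef
    rcases (show i % 4 = 0 ∨ i % 4 = 1 ∨ i % 4 = 2 ∨ i % 4 = 3 by omega) with h | h | h | h
    · have hfi : f i = S2 := by simp [hf, h]
      have hfi1 : f (i + 1) = insert (Sum.inl (jm m)) C0 := by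
        have h1 : (i + 1) % 4 = 1 := by omega
        have h2 : (i + 1) / 4 = m := by omega
        have h3 : i + 1 < 4 * K := by omega
        simp [hf, h1, h2, h3]
      rw [hfi, hfi1]
      refine ⟨hGP2, Sum.inl z, Set.mem_insert _ _, Sum.inl (jm m), ?_, adj_ll.mpr (Ne.symm (hjmz m hm4)), ?_, hGPl m hm4⟩
      · rw [hS2]
        simp only [Set.mem_insert_iff]
        push_neg
        exact ⟨by simp [hjmz m hm4], hljm m⟩
      · rw [hS2, Set.insert_diff_self_of_notMem hlz]
    · have hfi : f i = insert (Sum.inl (jm m)) C0 := by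
        simp [hf, h, show i < 4 * K by omega, hmdef]
      have hfi1 : f (i + 1) = insert (Sum.inr (jm m, am m)) C0 := by
        have h1 : (i + 1) % 4 = 2 := by omega
        have h2 : (i + 1) / 4 = m := by omega
        have h3 : i + 1 < 4 * K := by omega
        simp [hf, h1, h2, h3]
      rw [hfi, hfi1]
      refine ⟨hGPl m hm4, Sum.inl (jm m), Set.mem_insert _ _, Sum.inr (jm m, am m), ?_,
        adj_lr.mpr rfl, ?_, hGPr m⟩
      · simp only [Set.mem_insert_iff]
        push_neg
        exact ⟨by simp, hrjm m hm4⟩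
      · rw [Set.insert_diff_self_of_notMem (hljm m)]
    · have hfi : f i = insert (Sum.inr (jm m, am m)) C0 := by
        simp [hf, h, show i < 4 * K by omega, hmdef]
      have hfi1 : f (i + 1) = insert (Sum.inl (jm m)) C0 := by
        have h1 : (i + 1) % 4 = 3 := by omega
        have h2 : (i + 1) / 4 = m := by omega
        have h3 : i + 1 < 4 * K := by omega
        simp [hf, h1, h2, h3]
      rw [hfi, hfi1]
      refine ⟨hGPr m, Sum.inr (jm m, am m), Set.mem_insert _ _, Sum.inl (jm m), ?_,
        adj_rl.mpr rfl, ?_, hGPl m hm4⟩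
      · simp only [Set.mem_insert_iff]
        push_neg
        exact ⟨by simp, hljm m⟩
      · rw [Set.insert_diff_self_of_notMem (hrjm m hm4)]
    · have hfi : f i = insert (Sum.inl (jm m)) C0 := by
        simp [hf, h, show i < 4 * K by omega, hmdef]
      have hfi1 : f (i + 1) = S2 := by
        have h1 : (i + 1) % 4 = 0 := by omega
        by_cases h3 : i + 1 < 4 * K
        · simp [hf, h1, h3]
        · simp [hf, h3]
      rw [hfi, hfi1]
      refine ⟨hGPl m hm4, Sum.inl (jm m), Set.mem_insert _ _, Sum.inl z, ?_,
        adj_ll.mpr (hjmz m hm4), ?_, hGP2⟩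
      · simp only [Set.mem_insert_iff]
        push_neg
        exact ⟨by simp [(hjmz m hm4).symm], hlz⟩
      · rw [Set.insert_diff_self_of_notMem (hljm m), hS2]
  · rw [Set.eq_univ_iff_forall]
    intro x
    simp only [Set.mem_iUnion, Set.mem_Iic]
    have hcover0 : ∀ y : V, y ∈ S2 → ∃ t, ∃ _ : t ≤ 4 * K, y ∈ f t :=
      fun y hy => ⟨0, by omega, hf0 ▸ hy⟩
    match x with
    | Sum.inl j =>
      by_cases hjz : j = z
      · subst hjz; exact hcover0 _ (Set.mem_insert _ _)
      · have hj1 : 1 ≤ j.val := by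
          rcases Nat.eq_zero_or_pos j.val with h | h
          · exact absurd (Fin.ext (by simp [hz, h])) hjz
          · exact h
        set m := (j.val - 1) * s with hm
        have hmK : m + s ≤ K := by
          rw [hm, hK]
          calc (j.val - 1) * s + s = (j.val - 1 + 1) * s := by ring
          _ ≤ (r - 1) * s := Nat.mul_le_mul_right s (by have := j.isLt; omega)
        have hjmm : jm m = j := by
          apply Fin.ext
          show (m / s + 1) % r = j.val
          rw [hm, Nat.mul_div_cancel _ hs']
          have : j.val - 1 + 1 = j.val := by omega
          rw [this, Nat.mod_eq_of_lt j.isLt]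
        refine ⟨4 * m + 1, by omega, ?_⟩
        have hfi : f (4 * m + 1) = insert (Sum.inl (jm m)) C0 := by
          have h1 : (4 * m + 1) % 4 = 1 := by omega
          have h2 : (4 * m + 1) / 4 = m := by omega
          have h3 : 4 * m + 1 < 4 * K := by omega
          simp [hf, h1, h2, h3]
        rw [hfi, hjmm]
        exact Set.mem_insert _ _
    | Sum.inr (j, b) =>
      by_cases hjz : j = z
      · subst hjz; exact hcover0 _ (Set.mem_insert_iff.mpr (Or.inr ⟨b, rfl⟩))
      · have hj1 : 1 ≤ j.val := by
          rcases Nat.eq_zero_or_pos j.val with h | h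
          · exact absurd (Fin.ext (by simp [hz, h])) hjz
          · exact h
        set m := b.val + (j.val - 1) * s with hm
        have hb := b.isLt
        have hmK : m < K := by
          rw [hm, hK]
          have : (j.val - 1) * s + s ≤ (r - 1) * s := by
            calc (j.val - 1) * s + s = (j.val - 1 + 1) * s := by ring
            _ ≤ (r - 1) * s := Nat.mul_le_mul_right s (by have := j.isLt; omega)
          omega
        have hjmm : jm m = j := by
          apply Fin.ext
          show (m / s + 1) % r = j.val
          rw [hm, Nat.add_mul_div_right _ _ hs', Nat.div_eq_of_lt hb, Nat.zero_add]
          have : j.val - 1 + 1 = j.val := by omega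
          rw [this, Nat.mod_eq_of_lt j.isLt]
        have hamm : am m = b := by
          apply Fin.ext
          show m % s = b.val
          rw [hm, Nat.add_mul_mod_self_right, Nat.mod_eq_of_lt hb]
        refine ⟨4 * m + 2, by omega, ?_⟩
        have hfi : f (4 * m + 2) = insert (Sum.inr (jm m, am m)) C0 := by
          have h1 : (4 * m + 2) % 4 = 2 := by omega
          have h2 : (4 * m + 2) / 4 = m := by omega
          have h3 : 4 * m + 2 < 4 * K := by omega
          simp [hf, h1, h2, h3]
        rw [hfi, hjmm, hamm]
        exact Set.mem_insert _ _
  · rw [hS2, hC0]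
    exact card_clique z
end lower2

theorem mob_corona_complete (r s : ℕ) (hr : 1 ≤ r) (hs : 1 ≤ s) :
    mob (corona (⊤ : SimpleGraph (Fin r)) (⊤ : SimpleGraph (Fin s))) = max r (s + 1) := by
  have hbdd : BddAbove {n | ∃ S : Set (Fin r ⊕ Fin r × Fin s),
      IsMobileGPSet (corona (⊤ : SimpleGraph (Fin r)) (⊤ : SimpleGraph (Fin s))) S ∧
      S.ncard = n} := by
    refine ⟨Nat.card (Fin r ⊕ Fin r × Fin s), ?_⟩
    rintro n ⟨S, -, rfl⟩
    calc S.ncard ≤ (Set.univ : Set (Fin r ⊕ Fin r × Fin s)).ncard :=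
          Set.ncard_le_ncard (Set.subset_univ S) Set.finite_univ
    _ = Nat.card (Fin r ⊕ Fin r × Fin s) := Set.ncard_univ _
  apply le_antisymm (mob_le hr hs)
  apply max_le
  · obtain ⟨S, hS, hc⟩ := mob_mem_r hr hs
    exact le_csSup hbdd ⟨S, hS, hc⟩
  · obtain ⟨S, hS, hc⟩ := mob_mem_s1 hr hs
    exact le_csSup hbdd ⟨S, hS, hc⟩
end
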